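/- arXiv:1910.12645 — 4 statements merged into one kernel-verified Lean document; each statement's English description precedes it below -/
import Mathlib

section
/- Let (X, μ, T) be a rank-one measure-preserving transformation and let k > 1. Suppose there exists N ∈ ℕ such that k divides h_N and k divides s_{n,i} for all n ≥ N and all 0 < i ≤ r_n. Then (X, μ, T) factors onto ℤ/kℤ. -/
open MeasureTheory ENNReal

noncomputable section

/-- `T` factors onto the cyclic system `ℤ/kℤ` (:= `{0,…,k-1}` with uniform measure and
the `+1 mod k` map): there is a measurable map `φ` with values (a.e.) in `{0,…,k-1}`,
whose fibers all have measure `1/k`, and which intertwines `T` with `+1 mod k` a.e. -/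
def FactorsOntoCyclic {X : Type*} [MeasurableSpace X] (μ : Measure X) (T : X → X)
    (k : ℕ) : Prop :=
  ∃ φ : X → ℕ, Measurable φ ∧ (∀ᵐ x ∂μ, φ x < k) ∧
    (∀ j < k, μ (φ ⁻¹' {j}) = 1 / (k : ℝ≥0∞)) ∧
    (∀ᵐ x ∂μ, φ (T x) = (φ x + 1) % k)

/-- `φ` is a factor map from `(X, μ, T)` onto the odometer determined by the sequence
`(k n)` (with `k n > 1` and `k n ∣ k (n+1)`): `φ x` is a.e. a compatible sequence of
residues, the cylinder sets `{x | φ x n = j}` have the Haar measure `1 / k n`, and `φ`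
intertwines `T` with the `+1` map of the odometer a.e.  Since the compatible sequences
with the correct cylinder measures carry a unique probability measure (the Haar
measure of the inverse limit group), this says exactly that `φ` is a measure-preserving
factor map onto the odometer. -/
def IsOdometerFactorMap {X : Type*} [MeasurableSpace X] (μ : Measure X) (T : X → X)
    (k : ℕ → ℕ) (φ : X → ℕ → ℕ) : Prop :=
  Measurable φ ∧
    (∀ᵐ x ∂μ, (∀ n, φ x n < k n) ∧ ∀ m n, m ≤ n → φ x n % k m = φ x m) ∧
    (∀ n, ∀ j < k n, μ {x | φ x n = j} = 1 / (k n : ℝ≥0∞)) ∧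
    (∀ᵐ x ∂μ, ∀ n, φ (T x) n = (φ x n + 1) % k n)

/-- `T` factors onto the odometer determined by `(k n)`. -/
def FactorsOntoOdometer {X : Type*} [MeasurableSpace X] (μ : Measure X) (T : X → X)
    (k : ℕ → ℕ) : Prop :=
  ∃ φ : X → ℕ → ℕ, IsOdometerFactorMap μ T k φ

/-- `T` is isomorphic to the odometer determined by `(k n)`: there is a factor map onto
the odometer which is invertible on a set of full measure. -/
def IsomorphicToOdometer {X : Type*} [MeasurableSpace X] (μ : Measure X) (T : X → X)
    (k : ℕ → ℕ) : Prop :=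
  ∃ φ : X → ℕ → ℕ, IsOdometerFactorMap μ T k φ ∧
    ∃ ψ : (ℕ → ℕ) → X, Measurable ψ ∧ ∀ᵐ x ∂μ, ψ (φ x) = x

/-- A rank-one measure-preserving transformation of `(X, μ)`, presented by its cutting
and stacking data: the transformation `T` (invertible a.e., measure-preserving), the
cutting parameter `r`, the spacer parameter `s` (with `s n i` meaningful for
`1 ≤ i ≤ r n`), the tower heights `h`, the tower bases `B n`, the pieces `Bp n i` of
the base (`1 ≤ i ≤ r n`), and the spacer levels `C n i j` (`1 ≤ j ≤ s n i`). -/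
structure RankOne (X : Type*) [MeasurableSpace X] (μ : Measure X) where
  T : X → X
  Tinv : X → X
  mpT : MeasurePreserving T μ μ
  mpTinv : MeasurePreserving Tinv μ μ
  inv_left : ∀ᵐ x ∂μ, Tinv (T x) = x
  inv_right : ∀ᵐ x ∂μ, T (Tinv x) = x
  r : ℕ → ℕ
  s : ℕ → ℕ → ℕ
  h : ℕ → ℕ
  B : ℕ → Set X
  Bp : ℕ → ℕ → Set X
  C : ℕ → ℕ → ℕ → Set X
  r_gt_one : ∀ n, 1 < r n
  h_zero : h 0 = 1
  h_succ : ∀ n, h (n + 1) = r n * h n + ∑ i ∈ Finset.Icc 1 (r n), s n i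
  finiteness : Summable fun n => ((h (n + 1) - r n * h n : ℕ) : ℝ) / (h (n + 1) : ℝ)
  B_meas : ∀ n, MeasurableSet (B n)
  Bp_meas : ∀ n i, MeasurableSet (Bp n i)
  C_meas : ∀ n i j, MeasurableSet (C n i j)
  Bp_union : ∀ n, (⋃ i ∈ Finset.Icc 1 (r n), Bp n i) = B n
  Bp_disjoint : ∀ n, ∀ i ∈ Finset.Icc 1 (r n), ∀ j ∈ Finset.Icc 1 (r n), i ≠ j →
    Disjoint (Bp n i) (Bp n j)
  Bp_measure : ∀ n, ∀ i ∈ Finset.Icc 1 (r n), μ (Bp n i) = μ (B n) / (r n : ℝ≥0∞)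
  levels_disjoint : ∀ n, ∀ i j, i < j → j < h n → Disjoint (T^[i] '' B n) (T^[j] '' B n)
  top_to_spacer : ∀ n, ∀ i ∈ Finset.Icc 1 (r n), s n i ≠ 0 → T^[h n] '' Bp n i = C n i 1
  top_to_next : ∀ n i, 1 ≤ i → i < r n → s n i = 0 → T^[h n] '' Bp n i = Bp n (i + 1)
  spacer_step : ∀ n, ∀ i ∈ Finset.Icc 1 (r n), ∀ j, 1 ≤ j → j < s n i →
    T '' C n i j = C n i (j + 1)
  spacer_to_next : ∀ n i, 1 ≤ i → i < r n → s n i ≠ 0 → T '' C n i (s n i) = Bp n (i + 1)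
  base_succ : ∀ n, B (n + 1) = Bp n 1
  levels_dense : ∀ A : Set X, MeasurableSet A → ∀ ε : ℝ≥0∞, 0 < ε →
    ∃ n, ∃ J : Finset ℕ, (∀ i ∈ J, i < h n) ∧
      μ (symmDiff A (⋃ i ∈ J, T^[i] '' B n)) < ε

open scoped Classical in
/-- `R.I m n` is the set of indices `i < h n` such that the level `T^[i] '' (B n)` of the
stage-`n` tower is contained in the stage-`m` base `B m`. -/
def RankOne.I {X : Type*} [MeasurableSpace X] {μ : Measure X} (R : RankOne X μ)
    (m n : ℕ) : Finset ℕ :=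
  (Finset.range (R.h n)).filter fun i => R.T^[i] '' R.B n ⊆ R.B m

end


namespace RKAux

open MeasureTheory Set Function

variable {X : Type*} [MeasurableSpace X] {μ : MeasureTheory.Measure X}

section Words
variable (R : RankOne X μ)

/-- Words in `T`, `Tinv`. -/
def word (l : List Bool) : X → X :=
  l.foldr (fun b g => (if b then R.T else R.Tinv) ∘ g) id

lemma word_nil : word R [] = id := rfl

lemma word_cons (b : Bool) (l : List Bool) :
    word R (b :: l) = (if b then R.T else R.Tinv) ∘ word R l := rfl

lemma word_append (l₁ l₂ : List Bool) :
    word R (l₁ ++ l₂) = word R l₁ ∘ word R l₂ := by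
  induction l₁ with
  | nil => rfl
  | cons b l ih => simp only [List.cons_append, word_cons, ih, Function.comp_assoc]

lemma word_measurable (l : List Bool) : Measurable (word R l) := by
  induction l with
  | nil => exact measurable_id
  | cons b l ih =>
    rw [word_cons]
    have hb : Measurable (if b then R.T else R.Tinv) := by
      cases b <;> simp [R.mpT.measurable, R.mpTinv.measurable]
    exact hb.comp ih

lemma word_mp (l : List Bool) : MeasurePreserving (word R l) μ μ := by
  induction l with
  | nil => exact MeasurePreserving.id μ
  | cons b l ih =>
    rw [word_cons]
    have hb : MeasurePreserving (if b then R.T else R.Tinv) μ μ := by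
      cases b <;> simp [R.mpT, R.mpTinv]
    exact hb.comp ih

/-- The set where `T` and `Tinv` are mutually inverse. -/
def G0 : Set X := {x | R.Tinv (R.T x) = x ∧ R.T (R.Tinv x) = x}

lemma measurableSet_G0 [StandardBorelSpace X] : MeasurableSet (G0 R) := by
  obtain ⟨f, hf⟩ := MeasureTheory.exists_measurableEmbedding_real X
  have key : ∀ (g₁ g₂ : X → X), Measurable g₁ → Measurable g₂ →
      MeasurableSet {x | g₁ x = g₂ x} := by
    intro g₁ g₂ h₁ h₂
    have : {x | g₁ x = g₂ x} = {x | f (g₁ x) = f (g₂ x)} := by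
      ext x; exact ⟨fun h => by rw [Set.mem_setOf_eq] at h ⊢; rw [h],
        fun h => hf.injective h⟩
    rw [this]
    exact measurableSet_eq_fun (hf.measurable.comp h₁) (hf.measurable.comp h₂)
  have : G0 R = {x | R.Tinv (R.T x) = x} ∩ {x | R.T (R.Tinv x) = x} := rfl
  rw [this]
  exact (key _ _ (R.mpTinv.measurable.comp R.mpT.measurable) measurable_id).inter
    (key _ _ (R.mpT.measurable.comp R.mpTinv.measurable) measurable_id)

lemma G0_compl_null [IsProbabilityMeasure μ] : μ (G0 R)ᶜ = 0 := by
  have h := R.inv_left.and R.inv_right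
  rw [MeasureTheory.ae_iff] at h
  convert h using 2
  rfl

/-- The conull set on which `T` is bijective with inverse `Tinv`. -/
def Gg : Set X := ⋂ l : List Bool, word R l ⁻¹' G0 R

lemma measurableSet_Gg [StandardBorelSpace X] : MeasurableSet (Gg R) :=
  MeasurableSet.iInter fun l => (measurableSet_G0 R).preimage (word_measurable R l)

lemma Gg_compl_null [StandardBorelSpace X] [IsProbabilityMeasure μ] : μ (Gg R)ᶜ = 0 := by
  rw [Gg, Set.compl_iInter]
  refine measure_iUnion_null fun l => ?_
  rw [← Set.preimage_compl]
  rw [(word_mp R l).measure_preimage ((measurableSet_G0 R).compl.nullMeasurableSet)]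
  exact G0_compl_null R

lemma Gg_subset_G0 {x : X} (hx : x ∈ Gg R) : x ∈ G0 R := by
  have := Set.mem_iInter.1 hx []
  simpa [word_nil] using this

lemma Gg_T {x : X} (hx : x ∈ Gg R) : R.T x ∈ Gg R := by
  rw [Gg, Set.mem_iInter] at hx ⊢
  intro l
  have := hx (l ++ [true])
  rw [word_append] at this
  simpa [word_cons, word_nil] using this

lemma Gg_Tinv {x : X} (hx : x ∈ Gg R) : R.Tinv x ∈ Gg R := by
  rw [Gg, Set.mem_iInter] at hx ⊢
  intro l
  have := hx (l ++ [false])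
  rw [word_append] at this
  simpa [word_cons, word_nil] using this

lemma Gg_iter_T {x : X} (hx : x ∈ Gg R) (n : ℕ) : R.T^[n] x ∈ Gg R := by
  induction n with
  | zero => simpa using hx
  | succ n ih => rw [Function.iterate_succ_apply']; exact Gg_T R ih

lemma Gg_iter_Tinv {x : X} (hx : x ∈ Gg R) (n : ℕ) : R.Tinv^[n] x ∈ Gg R := by
  induction n with
  | zero => simpa using hx
  | succ n ih => rw [Function.iterate_succ_apply']; exact Gg_Tinv R ih

lemma Tinv_T {x : X} (hx : x ∈ Gg R) : R.Tinv (R.T x) = x := (Gg_subset_G0 R hx).1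

lemma T_Tinv {x : X} (hx : x ∈ Gg R) : R.T (R.Tinv x) = x := (Gg_subset_G0 R hx).2

lemma Tinv_iter_T (n : ℕ) : ∀ {x : X}, x ∈ Gg R → R.Tinv^[n] (R.T^[n] x) = x := by
  induction n with
  | zero => intro x _; rfl
  | succ n ih =>
    intro x hx
    rw [Function.iterate_succ_apply', Function.iterate_succ_apply]
    rw [ih (Gg_T R hx)]
    exact Tinv_T R hx

lemma T_iter_Tinv (n : ℕ) : ∀ {x : X}, x ∈ Gg R → R.T^[n] (R.Tinv^[n] x) = x := by
  induction n with
  | zero => intro x _; rfl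
  | succ n ih =>
    intro x hx
    rw [Function.iterate_succ_apply', Function.iterate_succ_apply]
    rw [ih (Gg_Tinv R hx)]
    exact T_Tinv R hx

lemma image_iter_inter_Gg (i : ℕ) (A : Set X) :
    R.T^[i] '' (A ∩ Gg R) = R.Tinv^[i] ⁻¹' (A ∩ Gg R) ∩ Gg R := by
  ext y
  constructor
  · rintro ⟨b, ⟨hbA, hbG⟩, rfl⟩
    refine ⟨?_, Gg_iter_T R hbG i⟩
    rw [Set.mem_preimage, Tinv_iter_T R i hbG]
    exact ⟨hbA, hbG⟩
  · rintro ⟨hy, hyG⟩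
    rw [Set.mem_preimage] at hy
    exact ⟨R.Tinv^[i] y, hy, T_iter_Tinv R i hyG⟩

lemma measure_inter_Gg [StandardBorelSpace X] [IsProbabilityMeasure μ] (S : Set X) :
    μ (S ∩ Gg R) = μ S := by
  refine le_antisymm (measure_mono Set.inter_subset_left) ?_
  calc μ S ≤ μ (S ∩ Gg R) + μ (S \ Gg R) := by
        rw [measure_inter_add_diff S (measurableSet_Gg R)]
    _ ≤ μ (S ∩ Gg R) + 0 := by
        gcongr
        exact le_of_eq (measure_mono_null (fun x hx => hx.2) (Gg_compl_null R))
    _ = μ (S ∩ Gg R) := add_zero _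

end Words

end RKAux

namespace RKAux

open MeasureTheory Set Function

variable {X : Type*} [MeasurableSpace X] {μ : MeasureTheory.Measure X}

section Structure
variable (R : RankOne X μ)

/-- Offset of the `j`-th copy of stage `n+1` tower inside the stage `n` tower chain. -/
def off (n j : ℕ) : ℕ := ∑ m ∈ Finset.range (j - 1), (R.h n + R.s n (m + 1))

lemma off_one (n : ℕ) : off R n 1 = 0 := by simp [off]

lemma off_succ (n j : ℕ) (hj : 1 ≤ j) :
    off R n (j + 1) = off R n j + (R.h n + R.s n j) := by
  obtain ⟨j, rfl⟩ := Nat.exists_eq_add_of_le hj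
  simp only [off, Nat.add_sub_cancel_left, Nat.succ_sub_one]
  rw [add_comm 1 j, Finset.sum_range_succ]

lemma off_mono (n : ℕ) {j j' : ℕ} (h : j ≤ j') : off R n j ≤ off R n j' :=
  Finset.sum_le_sum_of_subset (Finset.range_subset_range.2 (by omega))

lemma r_pos (n : ℕ) : 1 ≤ R.r n := le_of_lt (R.r_gt_one n)

lemma off_top (n : ℕ) : off R n (R.r n + 1) = R.h (n + 1) := by
  rw [R.h_succ n, off, Nat.add_sub_cancel, Finset.sum_add_distrib, Finset.sum_const,
    Finset.card_range, smul_eq_mul]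
  congr 1
  rw [← Finset.Ico_add_one_right_eq_Icc, Finset.sum_Ico_eq_sum_range]
  simp [add_comm 1]

lemma h_pos (n : ℕ) : 0 < R.h n := by
  induction n with
  | zero => simp [R.h_zero]
  | succ n ih =>
    rw [R.h_succ n]
    have := r_pos R n
    positivity

lemma h_lt_succ (n : ℕ) : R.h n < R.h (n + 1) := by
  rw [R.h_succ n]
  have h2 : 2 ≤ R.r n := R.r_gt_one n
  have := h_pos R n
  nlinarith [Nat.zero_le (∑ i ∈ Finset.Icc 1 (R.r n), R.s n i)]

lemma h_strictMono : StrictMono R.h := strictMono_nat_of_lt_succ (h_lt_succ R)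

lemma off_add_h_le (n : ℕ) {j : ℕ} (hj : j ≤ R.r n) :
    off R n j + R.h n ≤ R.h (n + 1) := by
  calc off R n j + R.h n ≤ off R n (R.r n) + R.h n := by
        have := off_mono R n hj; omega
    _ ≤ off R n (R.r n) + (R.h n + R.s n (R.r n)) := by omega
    _ = off R n (R.r n + 1) := (off_succ R n _ (r_pos R n)).symm
    _ = R.h (n + 1) := off_top R n

lemma image_iterate_image (a b : ℕ) (A : Set X) :
    R.T^[a] '' (R.T^[b] '' A) = R.T^[a + b] '' A := by
  rw [← Set.image_comp, ← Function.iterate_add]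

lemma image_T_image (b : ℕ) (A : Set X) :
    R.T '' (R.T^[b] '' A) = R.T^[1 + b] '' A := by
  rw [Function.iterate_add, Set.image_comp, Function.iterate_one]

lemma spacer_chain (n j : ℕ) (h1 : 1 ≤ j) (h2 : j ≤ R.r n) (hs0 : R.s n j ≠ 0) :
    ∀ l, 1 ≤ l → l ≤ R.s n j → R.T^[R.h n + (l - 1)] '' R.Bp n j = R.C n j l := by
  intro l
  induction l with
  | zero => omega
  | succ l ih =>
    intro _ hls
    rcases Nat.eq_zero_or_pos l with hl0 | hl0
    · subst hl0
      simpa using R.top_to_spacer n j (Finset.mem_Icc.2 ⟨h1, h2⟩) hs0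
    · have hC : R.T^[R.h n + (l - 1)] '' R.Bp n j = R.C n j l := ih hl0 (by omega)
      have hstep : R.T '' R.C n j l = R.C n j (l + 1) :=
        R.spacer_step n j (Finset.mem_Icc.2 ⟨h1, h2⟩) l hl0 (by omega)
      rw [show R.h n + (l + 1 - 1) = 1 + (R.h n + (l - 1)) from by omega,
        ← image_T_image, hC, hstep]

lemma Bp_step (n j : ℕ) (h1 : 1 ≤ j) (h2 : j < R.r n) :
    R.T^[R.h n + R.s n j] '' R.Bp n j = R.Bp n (j + 1) := by
  by_cases hs0 : R.s n j = 0
  · rw [hs0, add_zero]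
    exact R.top_to_next n j h1 h2 hs0
  · have hC : R.T^[R.h n + (R.s n j - 1)] '' R.Bp n j = R.C n j (R.s n j) :=
      spacer_chain R n j h1 (le_of_lt h2) hs0 (R.s n j) (by omega) le_rfl
    have hlast : R.T '' R.C n j (R.s n j) = R.Bp n (j + 1) :=
      R.spacer_to_next n j h1 h2 hs0
    rw [show R.h n + R.s n j = 1 + (R.h n + (R.s n j - 1)) from by omega,
      ← image_T_image, hC, hlast]

lemma Bp_eq_image (n : ℕ) : ∀ j, 1 ≤ j → j ≤ R.r n →
    R.T^[off R n j] '' R.B (n + 1) = R.Bp n j := by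
  intro j
  induction j with
  | zero => omega
  | succ j ih =>
    intro _ hj
    rcases Nat.eq_zero_or_pos j with hj0 | hj0
    · subst hj0
      rw [off_one]
      simpa using R.base_succ n
    · have hBp : R.T^[off R n j] '' R.B (n + 1) = R.Bp n j := ih hj0 (by omega)
      rw [off_succ R n j hj0, add_comm (off R n j), ← image_iterate_image, hBp]
      exact Bp_step R n j hj0 (by omega)

/-- level `i` of tower `n` -/
def lev (n i : ℕ) : Set X := R.T^[i] '' R.B n

/-- good part of level `i` of tower `n` -/
def lam (n i : ℕ) : Set X := R.T^[i] '' (R.B n ∩ Gg R)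

lemma lam_eq (n i : ℕ) : lam R n i = R.Tinv^[i] ⁻¹' (R.B n ∩ Gg R) ∩ Gg R :=
  image_iter_inter_Gg R i (R.B n)

lemma lam_measurable [StandardBorelSpace X] (n i : ℕ) : MeasurableSet (lam R n i) := by
  rw [lam_eq]
  exact (((R.B_meas n).inter (measurableSet_Gg R)).preimage
    ((R.mpTinv.iterate i).measurable)).inter (measurableSet_Gg R)

lemma lam_measure [StandardBorelSpace X] [IsProbabilityMeasure μ] (n i : ℕ) :
    μ (lam R n i) = μ (R.B n) := by
  rw [lam_eq, measure_inter_Gg,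
    (R.mpTinv.iterate i).measure_preimage
      ((R.B_meas n).inter (measurableSet_Gg R)).nullMeasurableSet,
    measure_inter_Gg]

lemma lam_subset_lev (n i : ℕ) : lam R n i ⊆ lev R n i :=
  Set.image_mono Set.inter_subset_left

lemma lam_subset_Gg (n i : ℕ) : lam R n i ⊆ Gg R := by
  rintro y ⟨b, ⟨_, hbG⟩, rfl⟩
  exact Gg_iter_T R hbG i

lemma lev_disj (n : ℕ) {i j : ℕ} (hij : i ≠ j) (hi : i < R.h n) (hj : j < R.h n) :
    Disjoint (lev R n i) (lev R n j) := by
  rcases Nat.lt_or_ge i j with h | h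
  · exact R.levels_disjoint n i j h hj
  · exact (R.levels_disjoint n j i (by omega) hi).symm

lemma lev_refine (n a : ℕ) :
    lev R n a = ⋃ j ∈ Finset.Icc 1 (R.r n), lev R (n + 1) (a + off R n j) := by
  unfold lev
  conv_lhs => rw [← R.Bp_union n]
  rw [Set.image_iUnion₂]
  refine Set.iUnion₂_congr fun j hj => ?_
  rw [Finset.mem_Icc] at hj
  rw [← Bp_eq_image R n j hj.1 hj.2, image_iterate_image]

lemma exists_column (n : ℕ) : ∀ J, 1 ≤ J → J ≤ R.r n → ∀ e, e < off R n (J + 1) →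
    ∃ j, 1 ≤ j ∧ j ≤ J ∧ off R n j ≤ e ∧ e < off R n (j + 1) := by
  intro J
  induction J with
  | zero => omega
  | succ J ih =>
    intro _ hJ e he
    rcases Nat.eq_zero_or_pos J with hJ0 | hJ0
    · subst hJ0
      exact ⟨1, le_rfl, le_rfl, by rw [off_one]; omega, he⟩
    · by_cases h : e < off R n (J + 1)
      · obtain ⟨j, hj1, hj2, hj3, hj4⟩ := ih hJ0 (by omega) e h
        exact ⟨j, hj1, by omega, hj3, hj4⟩
      · exact ⟨J + 1, by omega, le_rfl, by omega, he⟩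

lemma copy_or_spacer (n e : ℕ) (he : e < R.h (n + 1)) :
    (∃ j l, 1 ≤ j ∧ j ≤ R.r n ∧ l < R.h n ∧ e = l + off R n j) ∨
    (∀ a, a < R.h n → ∀ j, 1 ≤ j → j ≤ R.r n → e ≠ a + off R n j) := by
  have he' : e < off R n (R.r n + 1) := by rw [off_top]; exact he
  obtain ⟨j, hj1, hj2, hj3, hj4⟩ := exists_column R n (R.r n) (r_pos R n) le_rfl e he'
  by_cases hcopy : e - off R n j < R.h n
  · left
    exact ⟨j, e - off R n j, hj1, hj2, hcopy, by omega⟩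
  · right
    intro a ha j' hj'1 hj'2 heq
    rcases le_or_gt j' j with h | h
    · have := off_mono R n h
      omega
    · have h1 : j + 1 ≤ j' := h
      have := off_mono R n h1
      have := off_succ R n j hj1
      omega

end Structure

end RKAux

namespace RKAux

open MeasureTheory Set Function

variable {X : Type*} [MeasurableSpace X] {μ : MeasureTheory.Measure X}

/-- In a standard Borel space, a nonatomic measure splits every positive-measure set. -/
lemma exists_split [StandardBorelSpace X] [IsFiniteMeasure μ] [NullSingletonClass μ]
    {H : Set X} (hH : MeasurableSet H) (h0 : μ H ≠ 0) :
    ∃ H', MeasurableSet H' ∧ H' ⊆ H ∧ μ H' ≠ 0 ∧ μ (H \ H') ≠ 0 := by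
  by_contra hcon
  push_neg at hcon
  obtain ⟨f, hf⟩ := MeasureTheory.exists_measurableEmbedding_real X
  set S : ℚ → Set X := fun q => H ∩ f ⁻¹' (Set.Iic (q : ℝ)) with hS
  have hSmeas : ∀ q, MeasurableSet (S q) := fun q =>
    hH.inter (hf.measurable measurableSet_Iic)
  have hdich : ∀ q : ℚ, μ (S q) = 0 ∨ μ (H \ S q) = 0 := by
    intro q
    by_cases h1 : μ (S q) = 0
    · exact Or.inl h1
    · exact Or.inr (hcon (S q) (hSmeas q) Set.inter_subset_left h1)
  classical
  set A : Set X := ⋂ (q : ℚ), ⋂ (_ : μ (H \ S q) = 0), S q with hA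
  set B : Set X := ⋃ (q : ℚ), ⋃ (_ : μ (S q) = 0), S q with hB
  have hBnull : μ B = 0 :=
    measure_iUnion_null fun q => measure_iUnion_null fun hq => hq
  have hHAnull : μ (H \ A) = 0 := by
    have hsub : H \ A ⊆ ⋃ (q : ℚ), ⋃ (_ : μ (H \ S q) = 0), (H \ S q) := by
      intro x hx
      obtain ⟨hxH, hxA⟩ := hx
      simp only [hA, Set.mem_iInter, not_forall] at hxA
      obtain ⟨q, hq, hxq⟩ := hxA
      exact Set.mem_iUnion.2 ⟨q, Set.mem_iUnion.2 ⟨hq, hxH, hxq⟩⟩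
    exact measure_mono_null hsub
      (measure_iUnion_null fun q => measure_iUnion_null fun hq => hq)
  set K : Set X := (H ∩ A) \ B with hK
  have hKnonnull : μ K ≠ 0 := by
    intro h0K
    apply h0
    have hcover : H ⊆ K ∪ (H \ A) ∪ B := by
      intro x hx
      by_cases hxB : x ∈ B
      · exact Or.inr hxB
      by_cases hxA : x ∈ A
      · exact Or.inl (Or.inl ⟨⟨hx, hxA⟩, hxB⟩)
      · exact Or.inl (Or.inr ⟨hx, hxA⟩)
    refine le_antisymm ?_ (zero_le)
    calc μ H ≤ μ (K ∪ (H \ A) ∪ B) := measure_mono hcover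
      _ ≤ μ (K ∪ (H \ A)) + μ B := measure_union_le _ _
      _ ≤ μ K + μ (H \ A) + μ B := by gcongr; exact measure_union_le _ _
      _ = 0 := by rw [h0K, hHAnull, hBnull]; simp
  have hKsub : K.Subsingleton := by
    have key : ∀ a b : X, a ∈ K → b ∈ K → f a < f b → False := by
      intro a b ha hb hab
      obtain ⟨q, hq1, hq2⟩ := exists_rat_btwn hab
      rcases hdich q with h | h
      · exact ha.2 (Set.mem_iUnion.2 ⟨q, Set.mem_iUnion.2 ⟨h, ha.1.1, le_of_lt hq1⟩⟩)
      · have hbS : b ∈ S q := Set.mem_iInter₂.1 hb.1.2 q h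
        exact absurd (hbS.2 : f b ≤ (q : ℝ)) (not_le.2 hq2)
    intro x hx y hy
    by_contra hxy
    rcases lt_trichotomy (f x) (f y) with h | h | h
    · exact key x y hx hy h
    · exact hxy (hf.injective h)
    · exact key y x hy hx h
  exact hKnonnull (hKsub.measure_zero μ)

section Kill
variable (R : RankOne X μ)

/-- Any set meeting at most one level of every tower is null. -/
lemma kill [StandardBorelSpace X] [IsProbabilityMeasure μ] [NullSingletonClass μ] (Cs : Set X)
    (hyp : ∀ t : ℕ, (∃ ℓ, ℓ < R.h t ∧ Cs ⊆ lev R t ℓ) ∨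
      (∀ i, i < R.h t → Cs ∩ lev R t i = ∅)) :
    μ Cs = 0 := by
  by_contra h0
  set H : Set X := toMeasurable μ Cs with hHdef
  have hHmeas : MeasurableSet H := measurableSet_toMeasurable μ Cs
  have hHne : μ H ≠ 0 := by rwa [hHdef, measure_toMeasurable]
  obtain ⟨H', hH'meas, hH'sub, hH'0, hHH'0⟩ := exists_split hHmeas hHne
  have hCsne : μ Cs ≠ ∞ := measure_ne_top μ Cs
  have hull₁ : μ (Cs ∩ H') = μ H' := by
    rw [← Measure.measure_toMeasurable_inter hH'meas hCsne, ← hHdef, Set.inter_eq_self_of_subset_right hH'sub]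
  have hull₂ : μ (Cs \ H') = μ (H \ H') := by
    rw [Set.diff_eq, Set.diff_eq, ← Measure.measure_toMeasurable_inter hH'meas.compl hCsne, ← hHdef]
  set ε : ℝ≥0∞ := min (μ H') (μ (H \ H')) with hε
  have hεpos : 0 < ε := by
    rw [hε, lt_min_iff]
    exact ⟨pos_iff_ne_zero.2 hH'0, pos_iff_ne_zero.2 hHH'0⟩
  obtain ⟨t, J, hJ, happrox⟩ := R.levels_dense H' hH'meas ε hεpos
  set U : Set X := ⋃ i ∈ J, R.T^[i] '' R.B t with hU
  have hU' : U = ⋃ i ∈ J, lev R t i := rfl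
  have hdiff₁ : μ (H' \ U) < ε :=
    lt_of_le_of_lt (measure_mono (by rw [Set.symmDiff_def]; exact Set.subset_union_left)) happrox
  have hdiff₂ : μ (U \ H') < ε :=
    lt_of_le_of_lt (measure_mono (by rw [Set.symmDiff_def]; exact Set.subset_union_right)) happrox
  -- Cs ∩ U is nonempty
  have hCsU : (Cs ∩ U).Nonempty := by
    rw [Set.nonempty_iff_ne_empty]
    intro hempty
    have : μ (Cs ∩ H') ≤ μ (H' \ U) := by
      refine measure_mono fun x hx => ⟨hx.2, fun hxU => ?_⟩
      exact Set.eq_empty_iff_forall_notMem.1 hempty x ⟨hx.1, hxU⟩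
    rw [hull₁] at this
    have hlt : μ H' < ε := lt_of_le_of_lt this hdiff₁
    exact absurd hlt (not_lt.2 (min_le_left _ _))
  obtain ⟨x, hxCs, hxU⟩ := hCsU
  rw [hU', Set.mem_iUnion₂] at hxU
  obtain ⟨i₀, hi₀J, hxi₀⟩ := hxU
  rcases hyp t with ⟨ℓ, hℓ, hsubℓ⟩ | hnone
  · have hi₀ℓ : i₀ = ℓ := by
      by_contra hne
      exact Set.disjoint_left.1 (lev_disj R t hne (hJ i₀ hi₀J) hℓ) hxi₀ (hsubℓ hxCs)
    have hlevU : lev R t ℓ ⊆ U := by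
      rw [hU']
      exact Set.subset_iUnion₂_of_subset i₀ hi₀J (by rw [hi₀ℓ])
    have : μ (H \ H') ≤ μ (U \ H') := by
      rw [← hull₂]
      exact measure_mono fun y hy => ⟨hlevU (hsubℓ hy.1), hy.2⟩
    have hlt : μ (H \ H') < ε := lt_of_le_of_lt this hdiff₂
    exact absurd hlt (not_lt.2 (min_le_right _ _))
  · exact Set.eq_empty_iff_forall_notMem.1 (hnone i₀ (hJ i₀ hi₀J)) x ⟨hxCs, hxi₀⟩

end Kill

end RKAux

namespace RKAux

open MeasureTheory Set Function

variable {X : Type*} [MeasurableSpace X] {μ : MeasureTheory.Measure X}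

section Tower
variable (R : RankOne X μ)

/-- good part of the `n`-th tower -/
def W (n : ℕ) : Set X := ⋃ i ∈ Finset.range (R.h n), lam R n i

/-- union of good towers -/
def Winf : Set X := ⋃ n : ℕ, W R n

lemma W_measurable [StandardBorelSpace X] (n : ℕ) : MeasurableSet (W R n) :=
  MeasurableSet.biUnion (Finset.range (R.h n)).countable_toSet
    fun i _ => lam_measurable R n i

lemma Winf_measurable [StandardBorelSpace X] : MeasurableSet (Winf R) :=
  MeasurableSet.iUnion fun n => W_measurable R n

lemma lam_subset_W {n i : ℕ} (hi : i < R.h n) : lam R n i ⊆ W R n :=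
  Set.subset_biUnion_of_mem (Finset.mem_range.2 hi)

lemma lam_subset_Winf {n i : ℕ} (hi : i < R.h n) : lam R n i ⊆ Winf R :=
  (lam_subset_W R hi).trans (Set.subset_iUnion _ n)

lemma lam_pairwise_disjoint (n : ℕ) :
    (↑(Finset.range (R.h n)) : Set ℕ).PairwiseDisjoint (lam R n) := by
  intro i hi j hj hij
  simp only [Finset.coe_range, Set.mem_Iio] at hi hj
  exact (lev_disj R n hij hi hj).mono (lam_subset_lev R n i) (lam_subset_lev R n j)

lemma measure_W [StandardBorelSpace X] [IsProbabilityMeasure μ] (n : ℕ) :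
    μ (W R n) = (R.h n : ℝ≥0∞) * μ (R.B n) := by
  rw [W, measure_biUnion_finset (lam_pairwise_disjoint R n)
    (fun i _ => lam_measurable R n i)]
  simp only [lam_measure]
  rw [Finset.sum_const, Finset.card_range, nsmul_eq_mul]

lemma measure_B_succ [StandardBorelSpace X] [IsProbabilityMeasure μ] (n : ℕ) :
    μ (R.B (n + 1)) = μ (R.B n) / (R.r n : ℝ≥0∞) := by
  rw [R.base_succ n]
  exact R.Bp_measure n 1 (Finset.mem_Icc.2 ⟨le_rfl, r_pos R n⟩)

/-- the collision null set absorbing the non-good part of a column piece -/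
def pieceNull (m j e : ℕ) : Set X :=
  (Gg R)ᶜ ∪ R.T^[R.h m + R.s m j - e] ⁻¹'
    ((R.Bp m (j + 1) ∩ Gg R) \ lam R (m + 1) (off R m (j + 1)))

lemma lam_off_subset (m j : ℕ) (h1 : 1 ≤ j + 1) (h2 : j + 1 ≤ R.r m) :
    lam R (m + 1) (off R m (j + 1)) ⊆ R.Bp m (j + 1) ∩ Gg R := by
  intro x hx
  refine ⟨?_, lam_subset_Gg R _ _ hx⟩
  have := lam_subset_lev R (m + 1) (off R m (j + 1)) hx
  rw [lev, Bp_eq_image R m (j + 1) h1 h2] at this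
  exact this

lemma Bad_null [StandardBorelSpace X] [IsProbabilityMeasure μ] (m j : ℕ)
    (h1 : 1 ≤ j) (h2 : j < R.r m) :
    μ ((R.Bp m (j + 1) ∩ Gg R) \ lam R (m + 1) (off R m (j + 1))) = 0 := by
  have hsub := lam_off_subset R m j (by omega) (by omega)
  have hmeas := lam_measurable R (m + 1) (off R m (j + 1))
  rw [measure_diff hsub hmeas.nullMeasurableSet (measure_ne_top μ _)]
  rw [measure_inter_Gg, lam_measure, measure_B_succ,
    R.Bp_measure m (j + 1) (Finset.mem_Icc.2 ⟨by omega, by omega⟩)]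
  exact tsub_self _

lemma pieceNull_null [StandardBorelSpace X] [IsProbabilityMeasure μ] (m j e : ℕ)
    (h1 : 1 ≤ j) (h2 : j < R.r m) : μ (pieceNull R m j e) = 0 := by
  refine measure_union_null (Gg_compl_null R) ?_
  have hmeas : MeasurableSet ((R.Bp m (j + 1) ∩ Gg R) \ lam R (m + 1) (off R m (j + 1))) :=
    ((R.Bp_meas m (j + 1)).inter (measurableSet_Gg R)).diff (lam_measurable R _ _)
  rw [(R.mpT.iterate _).measure_preimage hmeas.nullMeasurableSet]
  exact Bad_null R m j h1 h2

lemma piece_good (m j e : ℕ) (h1 : 1 ≤ j) (h2 : j < R.r m) (he : e < R.h m) :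
    R.T^[e] '' R.Bp m j ⊆ lam R (m + 1) (e + off R m j) ∪ pieceNull R m j e := by
  rintro y ⟨b, hb, rfl⟩
  set q := R.h m + R.s m j - e with hq
  by_cases hyG : R.T^[e] b ∈ Gg R
  swap
  · exact Or.inr (Or.inl hyG)
  by_cases hyBad : R.T^[e] b ∈ R.T^[q] ⁻¹'
      ((R.Bp m (j + 1) ∩ Gg R) \ lam R (m + 1) (off R m (j + 1)))
  · exact Or.inr (Or.inr hyBad)
  left
  have hqe : q + e = R.h m + R.s m j := by omega
  have hw : R.T^[q] (R.T^[e] b) ∈ R.Bp m (j + 1) := by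
    rw [← Function.iterate_add_apply, hqe, ← Bp_step R m j h1 h2]
    exact Set.mem_image_of_mem _ hb
  have hwG : R.T^[q] (R.T^[e] b) ∈ Gg R := Gg_iter_T R hyG q
  have hwlam : R.T^[q] (R.T^[e] b) ∈ lam R (m + 1) (off R m (j + 1)) := by
    by_contra hcon
    exact hyBad ⟨⟨hw, hwG⟩, hcon⟩
  obtain ⟨b', hb', hb'eq⟩ := hwlam
  have hoff : off R m (j + 1) = off R m j + (R.h m + R.s m j) := off_succ R m j h1
  have hsplit : R.T^[off R m (j + 1)] b' = R.T^[q] (R.T^[off R m j + e] b') := by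
    rw [← Function.iterate_add_apply]
    congr 1
    omega
  have hz : R.T^[off R m j + e] b' ∈ Gg R := Gg_iter_T R hb'.2 _
  have he1 : R.T^[q] (R.T^[e] b) = R.T^[q] (R.T^[off R m j + e] b') := by
    rw [← hb'eq, hsplit]
  have hyz : R.T^[e] b = R.T^[off R m j + e] b' := by
    calc R.T^[e] b = R.Tinv^[q] (R.T^[q] (R.T^[e] b)) := (Tinv_iter_T R q hyG).symm
      _ = R.Tinv^[q] (R.T^[q] (R.T^[off R m j + e] b')) := by rw [he1]
      _ = R.T^[off R m j + e] b' := Tinv_iter_T R q hz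
  refine ⟨b', hb', ?_⟩
  rw [add_comm e (off R m j), ← hyz]

/-- union of the collision null sets over the columns of a level -/
def bigNull (m e : ℕ) : Set X := ⋃ j ∈ Finset.Ico 1 (R.r m), pieceNull R m j e

lemma bigNull_null [StandardBorelSpace X] [IsProbabilityMeasure μ] (m e : ℕ) :
    μ (bigNull R m e) = 0 := by
  refine le_antisymm ?_ (zero_le)
  calc μ (bigNull R m e) ≤ ∑ j ∈ Finset.Ico 1 (R.r m), μ (pieceNull R m j e) :=
        measure_biUnion_finset_le _ _
    _ = 0 := Finset.sum_eq_zero fun j hj => by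
        rw [Finset.mem_Ico] at hj
        exact pieceNull_null R m j e hj.1 hj.2

lemma Bp_subset_B (m j : ℕ) (h1 : 1 ≤ j) (h2 : j ≤ R.r m) : R.Bp m j ⊆ R.B m := by
  rw [← R.Bp_union m]
  exact Set.subset_biUnion_of_mem (Finset.mem_Icc.2 ⟨h1, h2⟩)

lemma level_split (m e : ℕ) (he : e < R.h m) :
    lev R m e ⊆ (Winf R ∪ lev R (m + 1) (e + off R m (R.r m))) ∪ bigNull R m e := by
  intro x hx
  rw [lev] at hx
  conv at hx => rw [← R.Bp_union m]
  rw [Set.image_iUnion₂, Set.mem_iUnion₂] at hx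
  obtain ⟨j, hj, hxj⟩ := hx
  rw [Finset.mem_Icc] at hj
  rcases eq_or_lt_of_le hj.2 with hjr | hjr
  · left; right
    have heq : R.T^[e] '' R.Bp m (R.r m) = lev R (m + 1) (e + off R m (R.r m)) := by
      rw [lev, ← image_iterate_image R e (off R m (R.r m)) (R.B (m + 1)),
        Bp_eq_image R m (R.r m) (r_pos R m) le_rfl]
    rw [← heq, ← hjr]
    exact hxj
  · rcases piece_good R m j e hj.1 hjr he hxj with h | h
    · left; left
      refine lam_subset_Winf R ?_ h
      calc e + off R m j < R.h m + off R m j := by omega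
        _ ≤ R.h (m + 1) := by have := off_add_h_le R m hj.2; omega
    · right
      exact Set.mem_biUnion (Finset.mem_Ico.2 ⟨hj.1, hjr⟩) h

lemma step_anc (t e : ℕ) (he : e < R.h (t + 1)) :
    (∃ a, a < R.h t ∧ lev R (t + 1) e ⊆ lev R t a) ∨
    (∀ a, a < R.h t → lev R (t + 1) e ∩ lev R t a = ∅) := by
  rcases copy_or_spacer R t e he with ⟨j, l, hj1, hj2, hl, rfl⟩ | hspacer
  · left
    refine ⟨l, hl, ?_⟩
    have heq : lev R (t + 1) (l + off R t j) = R.T^[l] '' R.Bp t j := by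
      rw [lev, ← image_iterate_image R l (off R t j) (R.B (t + 1)),
        Bp_eq_image R t j hj1 hj2]
    rw [heq, lev]
    exact Set.image_mono (Bp_subset_B R t j hj1 hj2)
  · right
    intro a ha
    rw [lev_refine R t a]
    refine Set.eq_empty_iff_forall_notMem.2 fun x hx => ?_
    obtain ⟨hx1, hx2⟩ := hx
    obtain ⟨j, hj, hxj⟩ := Set.mem_iUnion₂.1 hx2
    rw [Finset.mem_Icc] at hj
    have hbound : a + off R t j < R.h (t + 1) := by
      have := off_add_h_le R t hj.2; omega
    exact Set.disjoint_left.1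
      (lev_disj R (t + 1) (hspacer a ha j hj.1 hj.2) he hbound) hx1 hxj

lemma anc : ∀ d t e, e < R.h (t + d) →
    (∃ a, a < R.h t ∧ lev R (t + d) e ⊆ lev R t a) ∨
    (∀ a, a < R.h t → lev R (t + d) e ∩ lev R t a = ∅) := by
  intro d
  induction d with
  | zero => intro t e he; exact Or.inl ⟨e, he, subset_rfl⟩
  | succ d ih =>
    intro t e he
    have harith : t + (d + 1) = (t + 1) + d := by omega
    rw [harith] at he ⊢
    rcases ih (t + 1) e he with ⟨a', ha', hsub⟩ | hdisj
    · rcases step_anc R t a' ha' with ⟨a, ha, hsub'⟩ | hdisj'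
      · exact Or.inl ⟨a, ha, hsub.trans hsub'⟩
      · right
        intro a ha
        apply Set.eq_empty_of_subset_empty
        rw [← hdisj' a ha]
        exact Set.inter_subset_inter_left _ hsub
    · right
      intro a ha
      rw [lev_refine R t a]
      refine Set.eq_empty_iff_forall_notMem.2 fun x hx => ?_
      obtain ⟨hx1, hx2⟩ := hx
      obtain ⟨j, hj, hxj⟩ := Set.mem_iUnion₂.1 hx2
      rw [Finset.mem_Icc] at hj
      have hbound : a + off R t j < R.h (t + 1) := by
        have := off_add_h_le R t hj.2; omega
      have hempty := hdisj (a + off R t j) hbound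
      rw [Set.eq_empty_iff_forall_notMem] at hempty
      exact hempty x ⟨hx1, hxj⟩

lemma lev_diff_Winf_null [StandardBorelSpace X] [IsProbabilityMeasure μ] [NullSingletonClass μ]
    (n i : ℕ) (hi : i < R.h n) : μ (lev R n i \ Winf R) = 0 := by
  set e : ℕ → ℕ := fun P => Nat.rec i (fun P eP => eP + off R (n + P) (R.r (n + P))) P with he
  have hestep : ∀ P, e (P + 1) = e P + off R (n + P) (R.r (n + P)) := fun P => rfl
  have hebound : ∀ P, e P < R.h (n + P) := by
    intro P
    induction P with
    | zero => exact hi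
    | succ P ih =>
      have hle := off_add_h_le R (n + P) (le_refl (R.r (n + P)))
      have : e (P + 1) = e P + off R (n + P) (R.r (n + P)) := hestep P
      have harith : n + (P + 1) = (n + P) + 1 := by omega
      rw [harith]
      omega
  have hpoint : lev R n i \ Winf R ⊆
      (⋂ P : ℕ, lev R (n + P) (e P)) ∪ ⋃ P : ℕ, bigNull R (n + P) (e P) := by
    intro x hx
    by_cases hxnull : x ∈ ⋃ P : ℕ, bigNull R (n + P) (e P)
    · exact Or.inr hxnull
    · left
      rw [Set.mem_iInter]
      intro P
      induction P with
      | zero => exact hx.1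
      | succ P ih =>
        rcases level_split R (n + P) (e P) (hebound P) ih with (h | h) | h
        · exact absurd h hx.2
        · rw [show n + (P + 1) = (n + P) + 1 from by omega, hestep P]
          exact h
        · exact absurd (Set.mem_iUnion.2 ⟨P, h⟩) hxnull
  have h1 : μ (⋂ P : ℕ, lev R (n + P) (e P)) = 0 := by
    apply kill R
    intro t
    rcases le_or_gt n t with hnt | hnt
    · left
      refine ⟨e (t - n), ?_, ?_⟩
      · have := hebound (t - n)
        rwa [show n + (t - n) = t from by omega] at this
      · intro x hx
        have := Set.mem_iInter.1 hx (t - n)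
        rwa [show n + (t - n) = t from by omega] at this
    · have hanc := anc R (n - t) t i (by rwa [show t + (n - t) = n from by omega])
      rw [show t + (n - t) = n from by omega] at hanc
      rcases hanc with ⟨a, ha, hsub⟩ | hdisj
      · left
        exact ⟨a, ha, fun x hx => hsub (show x ∈ lev R n i from Set.mem_iInter.1 hx 0)⟩
      · right
        intro iℓ hiℓ
        apply Set.eq_empty_of_subset_empty
        rw [← hdisj iℓ hiℓ]
        intro x hx
        exact ⟨show x ∈ lev R n i from Set.mem_iInter.1 hx.1 0, hx.2⟩
  have h2 : μ (⋃ P : ℕ, bigNull R (n + P) (e P)) = 0 :=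
    measure_iUnion_null fun P => bigNull_null R (n + P) (e P)
  exact measure_mono_null hpoint (measure_union_null h1 h2)

lemma Winf_compl_null [StandardBorelSpace X] [IsProbabilityMeasure μ] [NullSingletonClass μ] :
    μ (Winf R)ᶜ = 0 := by
  have key : ∀ ε : ℝ≥0∞, 0 < ε → μ (Winf R)ᶜ ≤ ε := by
    intro ε hε
    obtain ⟨t, J, hJ, happrox⟩ := R.levels_dense Set.univ MeasurableSet.univ ε hε
    have hsymm : μ (⋃ i ∈ J, lev R t i)ᶜ < ε := by
      convert happrox using 2
      rw [Set.symmDiff_def]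
      simp only [Set.diff_eq, Set.compl_univ, Set.inter_empty, Set.univ_inter,
        Set.union_empty, Set.inter_univ]
      rfl
    calc μ (Winf R)ᶜ
        ≤ μ ((⋃ i ∈ J, lev R t i)ᶜ ∪ ⋃ i ∈ J, (lev R t i \ Winf R)) := by
          apply measure_mono
          intro x hx
          by_cases hxU : x ∈ ⋃ i ∈ J, lev R t i
          · right
            obtain ⟨i, hiJ, hxi⟩ := Set.mem_iUnion₂.1 hxU
            exact Set.mem_iUnion₂.2 ⟨i, hiJ, hxi, hx⟩
          · exact Or.inl hxU
      _ ≤ μ (⋃ i ∈ J, lev R t i)ᶜ + μ (⋃ i ∈ J, (lev R t i \ Winf R)) :=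
          measure_union_le _ _
      _ ≤ ε + 0 := by
          refine add_le_add hsymm.le (le_of_eq ?_)
          refine le_antisymm ?_ (zero_le)
          calc μ (⋃ i ∈ J, (lev R t i \ Winf R))
              ≤ ∑ i ∈ J, μ (lev R t i \ Winf R) := measure_biUnion_finset_le _ _
            _ = 0 := Finset.sum_eq_zero fun i hi => lev_diff_Winf_null R t i (hJ i hi)
      _ = ε := add_zero _
  refine le_antisymm ?_ (zero_le)
  refine ENNReal.le_of_forall_pos_le_add fun ε hε _ => ?_
  simpa using key ε (by exact_mod_cast hε)

end Tower

end RKAux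

namespace RKAux

open MeasureTheory Set Function

variable {X : Type*} [MeasurableSpace X] {μ : MeasureTheory.Measure X}

section Measures
variable (R : RankOne X μ)

lemma r_ne_zero' (n : ℕ) : (R.r n : ℝ≥0∞) ≠ 0 := by
  have : R.r n ≠ 0 := by have := r_pos R n; omega
  exact_mod_cast this

lemma r_ne_top (n : ℕ) : (R.r n : ℝ≥0∞) ≠ ∞ := ENNReal.natCast_ne_top _

lemma lam_fine_subset (t i : ℕ) {j : ℕ} (h1 : 1 ≤ j) (h2 : j ≤ R.r t) :
    lam R (t + 1) (i + off R t j) ⊆ lam R t i := by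
  rintro y ⟨b, hb, rfl⟩
  have hb2 : R.T^[off R t j] b ∈ R.B t ∩ Gg R := by
    constructor
    · exact Bp_subset_B R t j h1 h2
        (by rw [← Bp_eq_image R t j h1 h2]; exact Set.mem_image_of_mem _ hb.1)
    · exact Gg_iter_T R hb.2 _
  refine ⟨R.T^[off R t j] b, hb2, ?_⟩
  rw [← Function.iterate_add_apply]

lemma lam_step_null [StandardBorelSpace X] [IsProbabilityMeasure μ] (t i : ℕ)
    (hi : i < R.h t) :
    μ (lam R t i \ ⋃ j ∈ Finset.Icc 1 (R.r t), lam R (t + 1) (i + off R t j)) = 0 := by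
  set U : Set X := ⋃ j ∈ Finset.Icc 1 (R.r t), lam R (t + 1) (i + off R t j) with hU
  have hsub : U ⊆ lam R t i := by
    refine Set.iUnion₂_subset fun j hj => ?_
    rw [Finset.mem_Icc] at hj
    exact lam_fine_subset R t i hj.1 hj.2
  have hUmeas : MeasurableSet U :=
    (Finset.Icc 1 (R.r t)).measurableSet_biUnion fun j _ => lam_measurable R _ _
  have hidx : ∀ j ∈ Finset.Icc 1 (R.r t), i + off R t j < R.h (t + 1) := by
    intro j hj
    rw [Finset.mem_Icc] at hj
    have := off_add_h_le R t hj.2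
    omega
  have hinj : ∀ j ∈ Finset.Icc 1 (R.r t), ∀ j' ∈ Finset.Icc 1 (R.r t), j ≠ j' →
      i + off R t j ≠ i + off R t j' := by
    intro j hj j' hj' hne heq
    rw [Finset.mem_Icc] at hj hj'
    rcases Nat.lt_or_ge j j' with h | h
    · have h1 := off_mono R t (show j + 1 ≤ j' from h)
      have h2 := off_succ R t j hj.1
      have h3 := h_pos R t
      omega
    · have h' : j' < j := by omega
      have h1 := off_mono R t (show j' + 1 ≤ j from h')
      have h2 := off_succ R t j' hj'.1
      have h3 := h_pos R t
      omega
  have hUmeasure : μ U = μ (R.B t) := by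
    rw [hU, measure_biUnion_finset ?_ fun j _ => lam_measurable R _ _]
    · have : ∀ j ∈ Finset.Icc 1 (R.r t), μ (lam R (t + 1) (i + off R t j)) =
          μ (R.B t) / (R.r t : ℝ≥0∞) := by
        intro j _
        rw [lam_measure, measure_B_succ]
      rw [Finset.sum_congr rfl this, Finset.sum_const, Nat.card_Icc]
      simp only [Nat.add_sub_cancel, nsmul_eq_mul]
      exact ENNReal.mul_div_cancel (r_ne_zero' R t) (r_ne_top R t)
    · intro j hj j' hj' hne
      simp only [Finset.mem_coe] at hj hj'
      exact (lev_disj R (t + 1) (hinj j hj j' hj' hne) (hidx j hj) (hidx j' hj')).mono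
        (lam_subset_lev R _ _) (lam_subset_lev R _ _)
  rw [measure_diff hsub hUmeas.nullMeasurableSet (measure_ne_top μ _), hUmeasure,
    lam_measure]
  exact tsub_self _

lemma W_step_null [StandardBorelSpace X] [IsProbabilityMeasure μ] (t : ℕ) :
    μ (W R t \ W R (t + 1)) = 0 := by
  have hsub : W R t \ W R (t + 1) ⊆
      ⋃ i ∈ Finset.range (R.h t),
        (lam R t i \ ⋃ j ∈ Finset.Icc 1 (R.r t), lam R (t + 1) (i + off R t j)) := by
    intro x hx
    obtain ⟨hx1, hx2⟩ := hx
    obtain ⟨i, hi, hxi⟩ := Set.mem_iUnion₂.1 hx1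
    refine Set.mem_iUnion₂.2 ⟨i, hi, hxi, fun hmem => hx2 ?_⟩
    obtain ⟨j, hj, hxj⟩ := Set.mem_iUnion₂.1 hmem
    rw [Finset.mem_Icc] at hj
    rw [Finset.mem_range] at hi
    refine lam_subset_W R ?_ hxj
    have := off_add_h_le R t hj.2
    omega
  refine measure_mono_null hsub ?_
  refine le_antisymm ?_ (zero_le)
  calc μ _ ≤ ∑ i ∈ Finset.range (R.h t), μ
        (lam R t i \ ⋃ j ∈ Finset.Icc 1 (R.r t), lam R (t + 1) (i + off R t j)) :=
        measure_biUnion_finset_le _ _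
    _ = 0 := Finset.sum_eq_zero fun i hi =>
        lam_step_null R t i (Finset.mem_range.1 hi)

lemma W_mono_null [StandardBorelSpace X] [IsProbabilityMeasure μ] {t n : ℕ} (h : t ≤ n) :
    μ (W R t \ W R n) = 0 := by
  induction n with
  | zero =>
    have : t = 0 := by omega
    subst this
    simp
  | succ n ih =>
    rcases Nat.lt_or_ge t (n + 1) with h' | h'
    · have h'' : t ≤ n := by omega
      have : W R t \ W R (n + 1) ⊆ (W R t \ W R n) ∪ (W R n \ W R (n + 1)) := by
        intro x hx
        by_cases hxn : x ∈ W R n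
        · exact Or.inr ⟨hxn, hx.2⟩
        · exact Or.inl ⟨hx.1, hxn⟩
      exact measure_mono_null this (measure_union_null (ih h'') (W_step_null R n))
    · have : t = n + 1 := by omega
      subst this
      simp

lemma exists_W_large [StandardBorelSpace X] [IsProbabilityMeasure μ] [NullSingletonClass μ]
    (N : ℕ) (ε : ℝ≥0∞) (hε : 0 < ε) :
    ∃ n, N ≤ n ∧ 1 - ε ≤ μ (W R n) := by
  set V : ℕ → Set X := fun n => ⋃ t ∈ Finset.range (n + 1), W R t with hV
  have hVmono : Monotone V := by
    intro a b hab
    exact Set.biUnion_subset_biUnion_left (Finset.range_subset_range.2 (by omega))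
  have hVU : ⋃ n, V n = Winf R := by
    apply Set.Subset.antisymm
    · refine Set.iUnion_subset fun n => Set.iUnion₂_subset fun t _ => ?_
      exact Set.subset_iUnion _ t
    · refine Set.iUnion_subset fun t => ?_
      exact Set.subset_iUnion_of_subset t
        (Set.subset_biUnion_of_mem (Finset.mem_range.2 (by omega)))
  have hWinf : μ (Winf R) = 1 :=
    (prob_compl_eq_zero_iff (Winf_measurable R)).1 (Winf_compl_null R)
  have hVW : ∀ m, μ (V m) = μ (W R m) := by
    intro m
    refine le_antisymm ?_ (measure_mono (Set.subset_biUnion_of_mem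
      (Finset.mem_range.2 (by omega))))
    have hsub : V m ⊆ W R m ∪ ⋃ t ∈ Finset.range (m + 1), (W R t \ W R m) := by
      intro x hx
      obtain ⟨t, ht, hxt⟩ := Set.mem_iUnion₂.1 hx
      by_cases hxm : x ∈ W R m
      · exact Or.inl hxm
      · exact Or.inr (Set.mem_iUnion₂.2 ⟨t, ht, hxt, hxm⟩)
    calc μ (V m) ≤ μ (W R m ∪ ⋃ t ∈ Finset.range (m + 1), (W R t \ W R m)) :=
          measure_mono hsub
      _ ≤ μ (W R m) + μ (⋃ t ∈ Finset.range (m + 1), (W R t \ W R m)) :=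
          measure_union_le _ _
      _ = μ (W R m) := by
          have : μ (⋃ t ∈ Finset.range (m + 1), (W R t \ W R m)) = 0 := by
            refine le_antisymm ?_ (zero_le)
            calc μ (⋃ t ∈ Finset.range (m + 1), (W R t \ W R m))
                ≤ ∑ t ∈ Finset.range (m + 1), μ (W R t \ W R m) :=
                  measure_biUnion_finset_le _ _
              _ = 0 := Finset.sum_eq_zero fun t ht =>
                  W_mono_null R (by have := Finset.mem_range.1 ht; omega : t ≤ m)
          rw [this, add_zero]
  have hsup : (⨆ n, μ (V n)) = 1 := by
    rw [← (hVmono.directed_le).measure_iUnion, hVU, hWinf]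
  have hlt : 1 - ε < ⨆ n, μ (V n) := by
    rw [hsup]
    exact ENNReal.sub_lt_self one_ne_top one_ne_zero hε.ne'
  obtain ⟨n, hn⟩ := lt_iSup_iff.1 hlt
  refine ⟨max n N, le_max_right _ _, ?_⟩
  rw [← hVW]
  exact le_trans hn.le (measure_mono (hVmono (le_max_left _ _)))

end Measures

end RKAux

namespace RKAux

open MeasureTheory Set Function

variable {X : Type*} [MeasurableSpace X] {μ : MeasureTheory.Measure X}

section Residues
variable (R : RankOne X μ) (k N : ℕ)

lemma k_dvd_h (hk : 0 < k) (hh : k ∣ R.h N)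
    (hs : ∀ n, N ≤ n → ∀ i ∈ Finset.Icc 1 (R.r n), k ∣ R.s n i) :
    ∀ n, N ≤ n → k ∣ R.h n := by
  intro n
  induction n with
  | zero => intro h0; have : N = 0 := by omega
            rw [← this]; exact hh
  | succ n ih =>
    intro hNn
    rcases Nat.lt_or_ge N (n + 1) with h | h
    · have hNn' : N ≤ n := by omega
      rw [R.h_succ n]
      exact dvd_add ((ih hNn').mul_left _) (Finset.dvd_sum fun i hi => hs n hNn' i hi)
    · have : N = n + 1 := by omega
      rw [← this]; exact hh
  
lemma k_dvd_off (hk : 0 < k) (hh : k ∣ R.h N)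
    (hs : ∀ n, N ≤ n → ∀ i ∈ Finset.Icc 1 (R.r n), k ∣ R.s n i)
    {n : ℕ} (hn : N ≤ n) {j : ℕ} (hj : j ≤ R.r n + 1) : k ∣ off R n j := by
  refine Finset.dvd_sum fun m hm => ?_
  rw [Finset.mem_range] at hm
  refine dvd_add (k_dvd_h R k N hk hh hs n hn) (hs n hn (m + 1) ?_)
  rw [Finset.mem_Icc]
  omega

lemma lev_refine_mod (hk : 0 < k) (hh : k ∣ R.h N)
    (hs : ∀ n, N ≤ n → ∀ i ∈ Finset.Icc 1 (R.r n), k ∣ R.s n i)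
    {n : ℕ} (hn : N ≤ n) (d : ℕ) {i : ℕ} (hi : i < R.h n) :
    lev R n i ⊆ ⋃ i' ∈ (Finset.range (R.h (n + d))).filter (fun i' => i' % k = i % k),
      lev R (n + d) i' := by
  induction d with
  | zero =>
    exact Set.subset_biUnion_of_mem
      (Finset.mem_filter.2 ⟨Finset.mem_range.2 hi, rfl⟩)
  | succ d ih =>
    refine ih.trans ?_
    refine Set.iUnion₂_subset fun i' hi' => ?_
    rw [Finset.mem_filter, Finset.mem_range] at hi'
    rw [lev_refine R (n + d) i']
    refine Set.iUnion₂_subset fun j hj => ?_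
    rw [Finset.mem_Icc] at hj
    have hoffdvd : k ∣ off R (n + d) j :=
      k_dvd_off R k N hk hh hs (by omega) (by omega)
    have hoffmod : off R (n + d) j % k = 0 := by
      obtain ⟨c, hc⟩ := hoffdvd
      rw [hc]
      exact Nat.mul_mod_right k c
    have hmem1 : i' + off R (n + d) j < R.h (n + (d + 1)) := by
      have := off_add_h_le R (n + d) hj.2
      have harith : n + (d + 1) = (n + d) + 1 := by omega
      rw [harith]
      omega
    have hmem2 : (i' + off R (n + d) j) % k = i % k := by
      rw [Nat.add_mod, hoffmod, add_zero, Nat.mod_mod_of_dvd _ dvd_rfl, hi'.2]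
    exact Set.subset_biUnion_of_mem
      (Finset.mem_filter.2 ⟨Finset.mem_range.2 hmem1, hmem2⟩)

end Residues

end RKAux

namespace RKAux

open MeasureTheory Set Function

variable {X : Type*} [MeasurableSpace X] {μ : MeasureTheory.Measure X}

section ASets
variable (R : RankOne X μ) (k N : ℕ)

lemma lam_cross_disj_le (hk : 0 < k) (hh : k ∣ R.h N)
    (hs : ∀ n, N ≤ n → ∀ i ∈ Finset.Icc 1 (R.r n), k ∣ R.s n i)
    {n m i i' : ℕ} (hn : N ≤ n) (hnm : n ≤ m) (hi : i < R.h n) (hi' : i' < R.h m)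
    (hmod : i % k ≠ i' % k) : Disjoint (lam R n i) (lam R m i') := by
  rw [Set.disjoint_left]
  intro x hx hx'
  have hx1 : x ∈ lev R n i := lam_subset_lev R n i hx
  have hx2 := lev_refine_mod R k N hk hh hs hn (m - n) hi hx1
  rw [show n + (m - n) = m from by omega] at hx2
  obtain ⟨i'', hi'', hxi''⟩ := Set.mem_iUnion₂.1 hx2
  rw [Finset.mem_filter, Finset.mem_range] at hi''
  have hne : i'' ≠ i' := fun h => hmod (by rw [← hi''.2, h])
  exact Set.disjoint_left.1 (lev_disj R m hne hi''.1 hi') hxi''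
    (lam_subset_lev R m i' hx')

lemma lam_cross_disj (hk : 0 < k) (hh : k ∣ R.h N)
    (hs : ∀ n, N ≤ n → ∀ i ∈ Finset.Icc 1 (R.r n), k ∣ R.s n i)
    {n m i i' : ℕ} (hn : N ≤ n) (hm : N ≤ m) (hi : i < R.h n) (hi' : i' < R.h m)
    (hmod : i % k ≠ i' % k) : Disjoint (lam R n i) (lam R m i') := by
  rcases le_total n m with h | h
  · exact lam_cross_disj_le R k N hk hh hs hn h hi hi' hmod
  · exact (lam_cross_disj_le R k N hk hh hs hm h hi' hi (Ne.symm hmod)).symm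

/-- levels of tower `n` in residue class `c` (good parts) -/
def Dset (n c : ℕ) : Set X :=
  ⋃ i ∈ (Finset.range (R.h n)).filter (fun i => i % k = c), lam R n i

/-- the residue-class-`c` part of the space -/
def Aset (c : ℕ) : Set X := ⋃ t : ℕ, Dset R k (N + t) c

lemma Dset_measurable [StandardBorelSpace X] (n c : ℕ) : MeasurableSet (Dset R k n c) :=
  ((Finset.range (R.h n)).filter (fun i => i % k = c)).measurableSet_biUnion
    fun i _ => lam_measurable R n i

lemma Aset_measurable [StandardBorelSpace X] (c : ℕ) : MeasurableSet (Aset R k N c) :=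
  MeasurableSet.iUnion fun t => Dset_measurable R k (N + t) c

lemma mem_Aset_iff {c : ℕ} {x : X} :
    x ∈ Aset R k N c ↔ ∃ n, N ≤ n ∧ ∃ i, i < R.h n ∧ i % k = c ∧ x ∈ lam R n i := by
  constructor
  · intro hx
    obtain ⟨t, hxt⟩ := Set.mem_iUnion.1 hx
    obtain ⟨i, hi, hxi⟩ := Set.mem_iUnion₂.1 hxt
    rw [Finset.mem_filter, Finset.mem_range] at hi
    exact ⟨N + t, by omega, i, hi.1, hi.2, hxi⟩
  · rintro ⟨n, hn, i, hi, hmod, hx⟩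
    refine Set.mem_iUnion.2 ⟨n - N, ?_⟩
    rw [show N + (n - N) = n from by omega]
    exact Set.mem_biUnion (Finset.mem_filter.2 ⟨Finset.mem_range.2 hi, hmod⟩) hx

lemma card_filter_mod {M c : ℕ} (hk : 0 < k) (hc : c < k) (hdvd : k ∣ M) :
    ((Finset.range M).filter (fun i => i % k = c)).card = M / k := by
  rw [show M / k = (Finset.range (M / k)).card from (Finset.card_range _).symm]
  refine Finset.card_bij' (fun a _ => a / k) (fun b _ => b * k + c) ?_ ?_ ?_ ?_
  · intro a ha
    rw [Finset.mem_filter, Finset.mem_range] at ha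
    rw [Finset.mem_range]
    exact Nat.div_lt_div_of_lt_of_dvd hdvd ha.1
  · intro b hb
    rw [Finset.mem_range] at hb
    have hlt : b * k + c < M := by
      have h2 : (b + 1) * k ≤ (M / k) * k := Nat.mul_le_mul_right k hb
      rw [Nat.div_mul_cancel hdvd] at h2
      have : b * k + c < (b + 1) * k := by
        rw [add_mul, one_mul]
        omega
      omega
    have hmod : (b * k + c) % k = c := by
      rw [add_comm, Nat.add_mul_mod_self_right]
      exact Nat.mod_eq_of_lt hc
    exact Finset.mem_filter.2 ⟨Finset.mem_range.2 hlt, hmod⟩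
  · intro a ha
    rw [Finset.mem_filter] at ha
    show a / k * k + c = a
    rw [← ha.2]
    exact Nat.div_add_mod' a k
  · intro b _
    show (b * k + c) / k = b
    rw [mul_comm b k, Nat.mul_add_div hk, Nat.div_eq_of_lt hc, add_zero]

lemma measure_Dset_mul [StandardBorelSpace X] [IsProbabilityMeasure μ]
    {n c : ℕ} (hk : 0 < k) (hc : c < k) (hdvd : k ∣ R.h n) :
    (k : ℝ≥0∞) * μ (Dset R k n c) = μ (W R n) := by
  have hdisj : (↑((Finset.range (R.h n)).filter (fun i => i % k = c)) : Set ℕ).PairwiseDisjoint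
      (lam R n) := by
    intro i hi j hj hij
    simp only [Finset.coe_filter, Set.mem_setOf_eq, Finset.mem_range] at hi hj
    exact (lev_disj R n hij hi.1 hj.1).mono (lam_subset_lev R n i) (lam_subset_lev R n j)
  rw [Dset, measure_biUnion_finset hdisj fun i _ => lam_measurable R n i]
  simp only [lam_measure]
  rw [Finset.sum_const, card_filter_mod k hk hc hdvd, nsmul_eq_mul, measure_W]
  rw [← mul_assoc, ← Nat.cast_mul, mul_comm k (R.h n / k), Nat.div_mul_cancel hdvd]

lemma Dset_subset_Aset {n c : ℕ} (hn : N ≤ n) : Dset R k n c ⊆ Aset R k N c := by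
  intro x hx
  refine Set.mem_iUnion.2 ⟨n - N, ?_⟩
  rwa [show N + (n - N) = n from by omega]

lemma Aset_disj (hk : 0 < k) (hh : k ∣ R.h N)
    (hs : ∀ n, N ≤ n → ∀ i ∈ Finset.Icc 1 (R.r n), k ∣ R.s n i)
    {c c' : ℕ} (hc : c < k) (hc' : c' < k) (hne : c ≠ c') :
    Disjoint (Aset R k N c) (Aset R k N c') := by
  rw [Set.disjoint_left]
  intro x hx hx'
  obtain ⟨n, hn, i, hi, hmod, hxm⟩ := (mem_Aset_iff R k N).1 hx
  obtain ⟨n', hn', i', hi', hmod', hxm'⟩ := (mem_Aset_iff R k N).1 hx'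
  have : i % k ≠ i' % k := by rw [hmod, hmod']; exact hne
  exact Set.disjoint_left.1 (lam_cross_disj R k N hk hh hs hn hn' hi hi' this) hxm hxm'

end ASets

end RKAux

namespace RKAux

open MeasureTheory Set Function

variable {X : Type*} [MeasurableSpace X] {μ : MeasureTheory.Measure X}

section Phi
variable (R : RankOne X μ) (k N : ℕ)

lemma measure_Aset_ge [StandardBorelSpace X] [IsProbabilityMeasure μ] [NullSingletonClass μ]
    (hk : 0 < k) (hh : k ∣ R.h N)
    (hs : ∀ n, N ≤ n → ∀ i ∈ Finset.Icc 1 (R.r n), k ∣ R.s n i)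
    {c : ℕ} (hc : c < k) : 1 ≤ (k : ℝ≥0∞) * μ (Aset R k N c) := by
  refine ENNReal.le_of_forall_pos_le_add fun ε hε _ => ?_
  obtain ⟨n, hn, hW⟩ := exists_W_large R N (ε : ℝ≥0∞) (by exact_mod_cast hε)
  have hdvd : k ∣ R.h n := k_dvd_h R k N hk hh hs n hn
  have h1 : μ (W R n) ≤ (k : ℝ≥0∞) * μ (Aset R k N c) := by
    rw [← measure_Dset_mul R k hk hc hdvd]
    exact mul_le_mul_right (measure_mono (Dset_subset_Aset R k N hn)) _
  have h2 : 1 - (ε : ℝ≥0∞) ≤ (k : ℝ≥0∞) * μ (Aset R k N c) := le_trans hW h1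
  exact tsub_le_iff_right.1 h2

lemma measure_Aset_eq [StandardBorelSpace X] [IsProbabilityMeasure μ] [NullSingletonClass μ]
    (hk : 0 < k) (hh : k ∣ R.h N)
    (hs : ∀ n, N ≤ n → ∀ i ∈ Finset.Icc 1 (R.r n), k ∣ R.s n i)
    {c : ℕ} (hc : c < k) : μ (Aset R k N c) = 1 / (k : ℝ≥0∞) := by
  have hk0 : (k : ℝ≥0∞) ≠ 0 := by exact_mod_cast hk.ne'
  have hkt : (k : ℝ≥0∞) ≠ ∞ := ENNReal.natCast_ne_top k
  have hge : ∀ c' < k, 1 / (k : ℝ≥0∞) ≤ μ (Aset R k N c') := by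
    intro c' hc'
    rw [ENNReal.div_le_iff_le_mul (Or.inl hk0) (Or.inl hkt), mul_comm]
    exact measure_Aset_ge R k N hk hh hs hc'
  have hsum : ∑ c' ∈ Finset.range k, μ (Aset R k N c') ≤ 1 := by
    rw [← measure_biUnion_finset ?_ fun c' _ => Aset_measurable R k N c']
    · exact prob_le_one
    · intro c₁ h₁ c₂ h₂ hne
      simp only [Finset.coe_range, Set.mem_Iio] at h₁ h₂
      exact Aset_disj R k N hk hh hs h₁ h₂ hne
  by_contra hne
  have hlt : 1 / (k : ℝ≥0∞) < μ (Aset R k N c) :=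
    lt_of_le_of_ne (hge c hc) (Ne.symm hne)
  set S : ℝ≥0∞ := ∑ c' ∈ (Finset.range k).erase c, (1 / (k : ℝ≥0∞)) with hS
  have hSne : S ≠ ∞ := by
    rw [hS, Finset.sum_const, nsmul_eq_mul]
    exact ENNReal.mul_ne_top (ENNReal.natCast_ne_top _)
      (ENNReal.div_lt_top one_ne_top hk0).ne
  have h1eq : (1 : ℝ≥0∞) = 1 / (k : ℝ≥0∞) + S := by
    rw [hS, Finset.add_sum_erase _ (fun _ => 1 / (k : ℝ≥0∞)) (Finset.mem_range.2 hc),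
      Finset.sum_const, Finset.card_range, nsmul_eq_mul, mul_one_div,
      ENNReal.div_self hk0 hkt]
  have hchain : (1 : ℝ≥0∞) < 1 := by
    calc (1 : ℝ≥0∞) = 1 / (k : ℝ≥0∞) + S := h1eq
      _ < μ (Aset R k N c) + S := ENNReal.add_lt_add_right hSne hlt
      _ ≤ μ (Aset R k N c) + ∑ c' ∈ (Finset.range k).erase c, μ (Aset R k N c') := by
          gcongr
          refine Finset.sum_le_sum fun i hi => ?_
          exact hge i (Finset.mem_range.1 (Finset.mem_of_mem_erase hi))
      _ = ∑ c' ∈ Finset.range k, μ (Aset R k N c') :=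
          Finset.add_sum_erase _ (fun c' => μ (Aset R k N c')) (Finset.mem_range.2 hc)
      _ ≤ 1 := hsum
  exact absurd hchain (lt_irrefl _)

lemma union_Aset_full [StandardBorelSpace X] [IsProbabilityMeasure μ] [NullSingletonClass μ]
    (hk : 0 < k) (hh : k ∣ R.h N)
    (hs : ∀ n, N ≤ n → ∀ i ∈ Finset.Icc 1 (R.r n), k ∣ R.s n i) :
    μ ((⋃ c ∈ Finset.range k, Aset R k N c)ᶜ) = 0 := by
  have hk0 : (k : ℝ≥0∞) ≠ 0 := by exact_mod_cast hk.ne'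
  have hkt : (k : ℝ≥0∞) ≠ ∞ := ENNReal.natCast_ne_top k
  have hmeas : MeasurableSet (⋃ c ∈ Finset.range k, Aset R k N c) :=
    (Finset.range k).measurableSet_biUnion fun c _ => Aset_measurable R k N c
  rw [prob_compl_eq_zero_iff hmeas]
  rw [measure_biUnion_finset ?_ fun c _ => Aset_measurable R k N c]
  · rw [Finset.sum_congr rfl fun c hcm =>
      measure_Aset_eq R k N hk hh hs (Finset.mem_range.1 hcm)]
    rw [Finset.sum_const, Finset.card_range, nsmul_eq_mul, mul_one_div,
      ENNReal.div_self hk0 hkt]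
  · intro c₁ h₁ c₂ h₂ hne
    simp only [Finset.coe_range, Set.mem_Iio] at h₁ h₂
    exact Aset_disj R k N hk hh hs h₁ h₂ hne

/-- the factor map -/
noncomputable def phi : X → ℕ := fun x => ∑ c ∈ Finset.range k, (Aset R k N c).indicator (fun _ => c) x

lemma phi_measurable [StandardBorelSpace X] : Measurable (phi R k N) :=
  Finset.measurable_sum _ fun c _ =>
    measurable_const.indicator (Aset_measurable R k N c)

lemma phi_eq_of_mem (hk : 0 < k) (hh : k ∣ R.h N)
    (hs : ∀ n, N ≤ n → ∀ i ∈ Finset.Icc 1 (R.r n), k ∣ R.s n i)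
    {c : ℕ} (hc : c < k) {x : X} (hx : x ∈ Aset R k N c) : phi R k N x = c := by
  rw [phi]
  rw [Finset.sum_eq_single_of_mem c (Finset.mem_range.2 hc)]
  · exact Set.indicator_of_mem hx _
  · intro c' hc' hne
    refine Set.indicator_of_notMem ?_ _
    exact Set.disjoint_left.1
      (Aset_disj R k N hk hh hs hc (Finset.mem_range.1 hc') (Ne.symm hne)) hx

lemma phi_eq_zero_of_not_mem {x : X} (hx : ∀ c, c < k → x ∉ Aset R k N c) :
    phi R k N x = 0 := by
  rw [phi]
  refine Finset.sum_eq_zero fun c hcm => ?_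
  exact Set.indicator_of_notMem (hx c (Finset.mem_range.1 hcm)) _

lemma phi_lt (hk1 : 1 < k) (hh : k ∣ R.h N)
    (hs : ∀ n, N ≤ n → ∀ i ∈ Finset.Icc 1 (R.r n), k ∣ R.s n i) (x : X) :
    phi R k N x < k := by
  classical
  by_cases hx : ∃ c, c < k ∧ x ∈ Aset R k N c
  · obtain ⟨c, hc, hxc⟩ := hx
    rw [phi_eq_of_mem R k N (by omega) hh hs hc hxc]
    exact hc
  · push_neg at hx
    rw [phi_eq_zero_of_not_mem R k N hx]
    omega

lemma phi_preimage [StandardBorelSpace X] [IsProbabilityMeasure μ] [NullSingletonClass μ]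
    (hk1 : 1 < k) (hh : k ∣ R.h N)
    (hs : ∀ n, N ≤ n → ∀ i ∈ Finset.Icc 1 (R.r n), k ∣ R.s n i)
    {c : ℕ} (hc : c < k) : μ (phi R k N ⁻¹' {c}) = 1 / (k : ℝ≥0∞) := by
  classical
  have hk : 0 < k := by omega
  rcases Nat.eq_zero_or_pos c with hc0 | hc0
  · subst hc0
    refine le_antisymm ?_ ?_
    · have hsub : phi R k N ⁻¹' {0} ⊆
          Aset R k N 0 ∪ (⋃ c' ∈ Finset.range k, Aset R k N c')ᶜ := by
        intro x hx
        by_cases hxu : x ∈ ⋃ c' ∈ Finset.range k, Aset R k N c'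
        · obtain ⟨c', hc', hxc'⟩ := Set.mem_iUnion₂.1 hxu
          rw [Finset.mem_range] at hc'
          have hthis := phi_eq_of_mem R k N hk hh hs hc' hxc'
          rw [Set.mem_preimage, Set.mem_singleton_iff] at hx
          rw [hx] at hthis
          exact Or.inl (by rwa [← hthis] at hxc')
        · exact Or.inr hxu
      calc μ (phi R k N ⁻¹' {0})
          ≤ μ (Aset R k N 0) + μ ((⋃ c' ∈ Finset.range k, Aset R k N c')ᶜ) :=
            le_trans (measure_mono hsub) (measure_union_le _ _)
        _ = 1 / (k : ℝ≥0∞) := by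
            rw [union_Aset_full R k N hk hh hs, add_zero,
              measure_Aset_eq R k N hk hh hs (by omega)]
    · rw [← measure_Aset_eq R k N hk hh hs (show 0 < k from by omega)]
      refine measure_mono fun x hx => ?_
      rw [Set.mem_preimage, Set.mem_singleton_iff]
      exact phi_eq_of_mem R k N hk hh hs (by omega) hx
  · have heq : phi R k N ⁻¹' {c} = Aset R k N c := by
      ext x
      rw [Set.mem_preimage, Set.mem_singleton_iff]
      constructor
      · intro hx
        by_cases hxu : ∃ c', c' < k ∧ x ∈ Aset R k N c'
        · obtain ⟨c', hc', hxc'⟩ := hxu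
          have hthis := phi_eq_of_mem R k N hk hh hs hc' hxc'
          rw [hx] at hthis
          rwa [hthis]
        · push_neg at hxu
          rw [phi_eq_zero_of_not_mem R k N hxu] at hx
          omega
      · intro hx
        exact phi_eq_of_mem R k N hk hh hs hc hx
    rw [heq]
    exact measure_Aset_eq R k N hk hh hs hc

lemma iInter_top_null [StandardBorelSpace X] [IsProbabilityMeasure μ] (n₀ : ℕ) :
    μ (⋂ m : ℕ, lam R (n₀ + m) (R.h (n₀ + m) - 1)) = 0 := by
  refine le_antisymm ?_ (zero_le)
  refine ENNReal.le_of_forall_pos_le_add fun ε hε _ => ?_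
  rw [zero_add]
  have hε0 : (ε : ℝ≥0∞) ≠ 0 := by exact_mod_cast hε.ne'
  obtain ⟨q, hq⟩ := ENNReal.exists_inv_nat_lt hε0
  have hB : μ (R.B (n₀ + q)) ≤ ((R.h (n₀ + q) : ℝ≥0∞))⁻¹ := by
    rw [ENNReal.le_inv_iff_mul_le]
    calc μ (R.B (n₀ + q)) * (R.h (n₀ + q) : ℝ≥0∞) = μ (W R (n₀ + q)) := by
          rw [measure_W, mul_comm]
      _ ≤ 1 := prob_le_one
  have hq' : (q : ℝ≥0∞) ≤ (R.h (n₀ + q) : ℝ≥0∞) := by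
    exact_mod_cast le_trans (Nat.le_add_left q n₀) ((h_strictMono R).le_apply)
  calc μ (⋂ m : ℕ, lam R (n₀ + m) (R.h (n₀ + m) - 1))
      ≤ μ (lam R (n₀ + q) (R.h (n₀ + q) - 1)) := measure_mono (Set.iInter_subset _ q)
    _ = μ (R.B (n₀ + q)) := lam_measure R _ _
    _ ≤ ((R.h (n₀ + q) : ℝ≥0∞))⁻¹ := hB
    _ ≤ ((q : ℝ≥0∞))⁻¹ := ENNReal.inv_le_inv' hq'
    _ ≤ ε := hq.le

end Phi

end RKAux

namespace RKAux

open MeasureTheory Set Function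

variable {X : Type*} [MeasurableSpace X] {μ : MeasureTheory.Measure X}

section Intertwine
variable (R : RankOne X μ) (k N : ℕ)

lemma phi_intertwine [StandardBorelSpace X] [IsProbabilityMeasure μ] [NullSingletonClass μ]
    (hk1 : 1 < k) (hh : k ∣ R.h N)
    (hs : ∀ n, N ≤ n → ∀ i ∈ Finset.Icc 1 (R.r n), k ∣ R.s n i) :
    ∀ᵐ x ∂μ, phi R k N (R.T x) = (phi R k N x + 1) % k := by
  classical
  have hk : 0 < k := by omega
  set NullS : Set X :=
    (⋃ c ∈ Finset.range k, Aset R k N c)ᶜ ∪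
    ((⋃ n : ℕ, ⋃ i : ℕ, ⋃ (_ : i < R.h n),
      (lam R n i \ ⋃ j ∈ Finset.Icc 1 (R.r n), lam R (n + 1) (i + off R n j))) ∪
    ⋃ t : ℕ, ⋂ m : ℕ, lam R (N + t + m) (R.h (N + t + m) - 1)) with hNullS
  have hNullS_null : μ NullS = 0 := by
    refine measure_union_null (union_Aset_full R k N hk hh hs) (measure_union_null ?_ ?_)
    · refine measure_iUnion_null fun n => measure_iUnion_null fun i =>
        measure_iUnion_null fun hi => lam_step_null R n i hi
    · exact measure_iUnion_null fun t => iInter_top_null R (N + t)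
  rw [MeasureTheory.ae_iff]
  refine measure_mono_null ?_ hNullS_null
  intro x hx
  rw [Set.mem_setOf_eq] at hx
  by_contra hxn
  apply hx
  -- x is in some Aset
  have hxu : x ∈ ⋃ c ∈ Finset.range k, Aset R k N c := by
    by_contra hxu
    exact hxn (Or.inl hxu)
  obtain ⟨c, hcm, hxc⟩ := Set.mem_iUnion₂.1 hxu
  rw [Finset.mem_range] at hcm
  obtain ⟨n₀, hn₀, i₀, hi₀, hmod₀, hxm₀⟩ := (mem_Aset_iff R k N).1 hxc
  -- x stays in the towers
  have hclaim : ∀ m, ∃ i, i < R.h (n₀ + m) ∧ i % k = c ∧ x ∈ lam R (n₀ + m) i := by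
    intro m
    induction m with
    | zero => exact ⟨i₀, by simpa using hi₀, hmod₀, by simpa using hxm₀⟩
    | succ m ih =>
      obtain ⟨i, hi, hmod, hxm⟩ := ih
      have hxnotnull : x ∉ lam R (n₀ + m) i \
          ⋃ j ∈ Finset.Icc 1 (R.r (n₀ + m)), lam R (n₀ + m + 1) (i + off R (n₀ + m) j) := by
        intro hmem
        exact hxn (Or.inr (Or.inl (Set.mem_iUnion.2 ⟨n₀ + m, Set.mem_iUnion.2
          ⟨i, Set.mem_iUnion.2 ⟨hi, hmem⟩⟩⟩)))
      have hxin : x ∈ ⋃ j ∈ Finset.Icc 1 (R.r (n₀ + m)),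
          lam R (n₀ + m + 1) (i + off R (n₀ + m) j) := by
        by_contra hcon
        exact hxnotnull ⟨hxm, hcon⟩
      obtain ⟨j, hj, hxj⟩ := Set.mem_iUnion₂.1 hxin
      rw [Finset.mem_Icc] at hj
      refine ⟨i + off R (n₀ + m) j, ?_, ?_, ?_⟩
      · have := off_add_h_le R (n₀ + m) hj.2
        rw [show n₀ + (m + 1) = (n₀ + m) + 1 from by omega]
        omega
      · have hoffdvd : k ∣ off R (n₀ + m) j :=
          k_dvd_off R k N hk hh hs (by omega) (by omega)
        obtain ⟨q, hq⟩ := hoffdvd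
        rw [hq, Nat.add_mod, Nat.mul_mod_right, add_zero, Nat.mod_mod_of_dvd _ dvd_rfl,
          hmod]
      · rw [show n₀ + (m + 1) = (n₀ + m) + 1 from by omega]
        exact hxj
  -- not always at the top
  have hnottop : ∃ m, x ∉ lam R (n₀ + m) (R.h (n₀ + m) - 1) := by
    by_contra hall
    push_neg at hall
    refine hxn (Or.inr (Or.inr (Set.mem_iUnion.2 ⟨n₀ - N, Set.mem_iInter.2 fun m => ?_⟩)))
    rw [show N + (n₀ - N) + m = n₀ + m from by omega]
    exact hall m
  obtain ⟨m, hmtop⟩ := hnottop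
  obtain ⟨i, hi, hmod, hxm⟩ := hclaim m
  have hig : i + 1 < R.h (n₀ + m) := by
    rcases Nat.lt_or_ge (i + 1) (R.h (n₀ + m)) with h | h
    · exact h
    · exfalso
      have : i = R.h (n₀ + m) - 1 := by omega
      rw [this] at hxm
      exact hmtop hxm
  -- T x is in the next level
  have hTx : R.T x ∈ lam R (n₀ + m) (i + 1) := by
    obtain ⟨b, hb, rfl⟩ := hxm
    exact ⟨b, hb, Function.iterate_succ_apply' R.T i b⟩
  -- compute phi values
  have hphix : phi R k N x = c := phi_eq_of_mem R k N hk hh hs hcm hxc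
  have hTxA : R.T x ∈ Aset R k N ((i + 1) % k) :=
    (mem_Aset_iff R k N).2 ⟨n₀ + m, by omega, i + 1, hig, rfl, hTx⟩
  have hphiTx : phi R k N (R.T x) = (i + 1) % k :=
    phi_eq_of_mem R k N hk hh hs (Nat.mod_lt _ hk) hTxA
  rw [hphix, hphiTx, ← hmod, Nat.add_mod i 1 k, Nat.mod_eq_of_lt hk1]

end Intertwine

end RKAux

theorem statement5 {X : Type*} [MeasurableSpace X] [StandardBorelSpace X]
    (μ : MeasureTheory.Measure X) [MeasureTheory.IsProbabilityMeasure μ]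
    [MeasureTheory.NullSingletonClass μ]
    (R : RankOne X μ) (k : ℕ) (hk : 1 < k) (N : ℕ)
    (hh : k ∣ R.h N)
    (hs : ∀ n, N ≤ n → ∀ i ∈ Finset.Icc 1 (R.r n), k ∣ R.s n i) :
    FactorsOntoCyclic μ R.T k := by
  refine ⟨RKAux.phi R k N, RKAux.phi_measurable R k N, ?_, ?_, ?_⟩
  · exact MeasureTheory.ae_of_all μ (RKAux.phi_lt R k N hk hh hs)
  · intro j hj
    exact RKAux.phi_preimage R k N hk hh hs hj
  · exact RKAux.phi_intertwine R k N hk hh hs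
end

section
/- Let T be an invertible ergodic measure-preserving transformation of a standard nonatomic Lebesgue probability space (X, μ), and let (k_n) be a sequence of integers with k_n > 1 and k_n dividing k_{n+1} for all n. If T factors onto ℤ/k_nℤ for every n, then T factors onto the odometer associated to (k_n). -/
open MeasureTheory ENNReal

lemma nat_eq_of_zmod_eq {k a b : ℕ} (ha : a < k) (hb : b < k)
    (h : (a : ZMod k) = b) : a = b := by
  rw [← ZMod.val_cast_of_lt ha, ← ZMod.val_cast_of_lt hb, h]

lemma cast_mod_dvd {k b : ℕ} (a : ℕ) (h : k ∣ b) : ((a % b : ℕ) : ZMod k) = a := by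
  conv_rhs => rw [← Nat.div_add_mod a b]
  push_cast
  rw [(ZMod.natCast_eq_zero_iff b k).2 h]
  ring

def CycFac {X : Type*} [MeasurableSpace X] (μ : Measure X) (T : X → X)
    (k : ℕ) (φ : X → ℕ) : Prop :=
  Measurable φ ∧ (∀ᵐ x ∂μ, φ x < k) ∧
    (∀ j < k, μ (φ ⁻¹' {j}) = 1 / (k : ℝ≥0∞)) ∧
    (∀ᵐ x ∂μ, φ (T x) = (φ x + 1) % k)

lemma shift_cycfac {X : Type*} [MeasurableSpace X] {μ : Measure X} {T : X → X}
    {k : ℕ} (hk : 0 < k) {φ : X → ℕ} (hφ : CycFac μ T k φ) (d : ℕ) :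
    CycFac μ T k (fun x => (φ x + d) % k) := by
  obtain ⟨hm, hbd, hfib, hint⟩ := hφ
  refine ⟨by measurability, ?_, ?_, ?_⟩
  · exact Filter.Eventually.of_forall fun x => Nat.mod_lt _ hk
  · intro j hj
    set j' : ℕ := (j + (k - d % k)) % k with hj'
    have hj'lt : j' < k := Nat.mod_lt _ hk
    have hae : (fun x => (φ x + d) % k) ⁻¹' {j} =ᵐ[μ] φ ⁻¹' {j'} := by
      refine Filter.eventuallyEq_set.mpr (hbd.mono fun x hx => ?_)
      simp only [Set.mem_preimage, Set.mem_singleton_iff]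
      constructor
      · intro h
        refine nat_eq_of_zmod_eq hx hj'lt ?_
        rw [hj', ← h]
        push_cast [ZMod.natCast_mod, Nat.cast_sub (le_of_lt (Nat.mod_lt d hk)),
          ZMod.natCast_self]
        ring
      · intro h
        refine nat_eq_of_zmod_eq (Nat.mod_lt _ hk) hj ?_
        rw [h, hj']
        push_cast [ZMod.natCast_mod, Nat.cast_sub (le_of_lt (Nat.mod_lt d hk)),
          ZMod.natCast_self]
        ring
    rw [measure_congr hae]
    exact hfib j' hj'lt
  · refine (hint.and hbd).mono fun x ⟨h1, h2⟩ => ?_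
    simp only [h1]
    refine nat_eq_of_zmod_eq (Nat.mod_lt _ hk) (Nat.mod_lt _ hk) ?_
    push_cast [ZMod.natCast_mod]
    ring

/-- a.e. invariant finite-valued function is a.e. constant -/
lemma erg_ae_const {X : Type*} [MeasurableSpace X] {μ : Measure X}
    [IsProbabilityMeasure μ] {T : X → X} (hErg : Ergodic T μ)
    {g : X → ℕ} (hg : Measurable g) {K : ℕ} (hbd : ∀ᵐ x ∂μ, g x < K)
    (hinv : ∀ᵐ x ∂μ, g (T x) = g x) : ∃ c < K, ∀ᵐ x ∂μ, g x = c := by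
  have hdich : ∀ c : ℕ, g ⁻¹' {c} =ᵐ[μ] (∅ : Set X) ∨ g ⁻¹' {c} =ᵐ[μ] Set.univ := by
    intro c
    refine hErg.quasiErgodic.ae_empty_or_univ₀ (hg (measurableSet_singleton c)).nullMeasurableSet ?_
    refine Filter.eventuallyEq_set.mpr (hinv.mono fun x hx => ?_)
    simp [Set.mem_preimage, hx]
  by_contra hcon
  push_neg at hcon
  have hnull : ∀ c < K, μ (g ⁻¹' {c}) = 0 := by
    intro c hc
    rcases hdich c with h | h
    · simpa using measure_congr h
    · exact absurd ((ae_eq_univ.mp h)) (by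
        intro hz
        exact hcon c hc (by
          have : ∀ᵐ x ∂μ, x ∈ g ⁻¹' {c} := ae_iff.mpr hz
          simpa using this))
  have hsub : {x | g x < K} ⊆ ⋃ c ∈ Finset.range K, g ⁻¹' {c} := by
    intro x hx
    simp only [Set.mem_iUnion, Finset.mem_range]
    exact ⟨g x, hx, rfl⟩
  have h0 : μ {x | g x < K} = 0 := by
    refine measure_mono_null hsub (le_antisymm ?_ zero_le)
    calc μ (⋃ c ∈ Finset.range K, g ⁻¹' {c}) ≤ ∑ c ∈ Finset.range K, μ (g ⁻¹' {c}) :=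
        measure_biUnion_finset_le _ _
      _ = 0 := Finset.sum_eq_zero fun c hc => hnull c (Finset.mem_range.mp hc)
  have h1 : μ {x | ¬ g x < K} = 0 := hbd
  have : (1 : ℝ≥0∞) ≤ 0 := by
    calc (1 : ℝ≥0∞) = μ Set.univ := (measure_univ).symm
      _ ≤ μ {x | g x < K} + μ {x | ¬ g x < K} := by
          refine le_trans (measure_mono ?_) (measure_union_le _ _)
          intro x _
          by_cases h : g x < K <;> [left; right] <;> exact h
      _ = 0 := by rw [h0, h1, add_zero]
  simp at this

lemma step_exists {X : Type*} [MeasurableSpace X] {μ : Measure X}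
    [IsProbabilityMeasure μ] {T : X → X} (hErg : Ergodic T μ)
    {kn kn1 : ℕ} (h1 : 1 < kn) (hd : kn ∣ kn1) (h1' : 1 < kn1)
    {ψ : X → ℕ} (hψ : CycFac μ T kn ψ)
    (hfac : ∃ φ : X → ℕ, CycFac μ T kn1 φ) :
    ∃ ψ' : X → ℕ, CycFac μ T kn1 ψ' ∧ ∀ᵐ x ∂μ, ψ' x % kn = ψ x := by
  have hk : 0 < kn := by omega
  have hk1 : 0 < kn1 := by omega
  obtain ⟨φ, hφ⟩ := hfac
  obtain ⟨hφm, hφbd, hφfib, hφint⟩ := hφ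
  obtain ⟨hψm, hψbd, hψfib, hψint⟩ := hψ
  set g : X → ℕ := fun x => (φ x + (kn - 1) * ψ x) % kn with hg
  have hgm : Measurable g := by measurability
  have hgbd : ∀ᵐ x ∂μ, g x < kn := Filter.Eventually.of_forall fun x => Nat.mod_lt _ hk
  have hginv : ∀ᵐ x ∂μ, g (T x) = g x := by
    refine (hφint.and hψint).mono fun x ⟨ha, hb⟩ => ?_
    refine nat_eq_of_zmod_eq (Nat.mod_lt _ hk) (Nat.mod_lt _ hk) ?_
    simp only [hg, ha, hb]
    push_cast [ZMod.natCast_mod, cast_mod_dvd _ hd, Nat.cast_sub h1.le,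
      ZMod.natCast_self]
    ring
  obtain ⟨c, hc, hgc⟩ := erg_ae_const hErg hgm hgbd hginv
  refine ⟨fun x => (φ x + (kn - c)) % kn1, shift_cycfac hk1 ⟨hφm, hφbd, hφfib, hφint⟩ _, ?_⟩
  refine (hgc.and hψbd).mono fun x ⟨hx, hxb⟩ => ?_
  refine nat_eq_of_zmod_eq (Nat.mod_lt _ hk) hxb ?_
  have hcast : (φ x : ZMod kn) - ψ x = c := by
    have hx' : (φ x + (kn - 1) * ψ x) % kn = c := hx
    have := congrArg (fun t : ℕ => (t : ZMod kn)) hx'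
    push_cast [ZMod.natCast_mod, Nat.cast_sub h1.le, ZMod.natCast_self] at this
    linear_combination this
  push_cast [ZMod.natCast_mod, cast_mod_dvd _ hd, Nat.cast_sub hc.le,
    ZMod.natCast_self]
  linear_combination hcast

theorem statement10 {X : Type*} [MeasurableSpace X] [StandardBorelSpace X]
    (μ : MeasureTheory.Measure X) [MeasureTheory.IsProbabilityMeasure μ]
    [MeasureTheory.NullSingletonClass μ]
    (T Tinv : X → X)
    (hT : MeasureTheory.MeasurePreserving T μ μ)
    (hTinv : MeasureTheory.MeasurePreserving Tinv μ μ)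
    (hinv_left : ∀ᵐ x ∂μ, Tinv (T x) = x) (hinv_right : ∀ᵐ x ∂μ, T (Tinv x) = x)
    (hErg : Ergodic T μ)
    (k : ℕ → ℕ) (hk1 : ∀ n, 1 < k n) (hkd : ∀ n, k n ∣ k (n + 1))
    (hfac : ∀ n, FactorsOntoCyclic μ T (k n)) :
    FactorsOntoOdometer μ T k := by
  have hfac' : ∀ n, ∃ φ : X → ℕ, CycFac μ T (k n) φ := hfac
  have hstep : ∀ n (ψ : X → ℕ), CycFac μ T (k n) ψ →
      ∃ ψ' : X → ℕ, CycFac μ T (k (n+1)) ψ' ∧ ∀ᵐ x ∂μ, ψ' x % k n = ψ x :=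
    fun n ψ hψ => step_exists hErg (hk1 n) (hkd n) (hk1 (n+1)) hψ (hfac' (n+1))
  choose stepf hstep1 hstep2 using hstep
  obtain ⟨φ0, hφ0⟩ := hfac' 0
  let F : ∀ n, {f : X → ℕ // CycFac μ T (k n) f} := fun n =>
    Nat.rec ⟨φ0, hφ0⟩ (fun m p => ⟨stepf m p.1 p.2, hstep1 m p.1 p.2⟩) n
  have hFcompat : ∀ n, ∀ᵐ x ∂μ, (F (n+1)).1 x % k n = (F n).1 x :=
    fun n => hstep2 n (F n).1 (F n).2
  have hchain : ∀ m n, m ≤ n → k m ∣ k n := by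
    intro m n h
    induction n, h using Nat.le_induction with
    | base => exact dvd_rfl
    | succ n hmn ih => exact ih.trans (hkd n)
  have hall : ∀ m n, m ≤ n → ∀ᵐ x ∂μ, (F n).1 x % k m = (F m).1 x := by
    intro m n h
    induction n, h using Nat.le_induction with
    | base => exact (F m).2.2.1.mono fun x hx => Nat.mod_eq_of_lt hx
    | succ n hmn ih =>
        filter_upwards [ih, hFcompat n] with x h1 h2
        calc (F (n+1)).1 x % k m = ((F (n+1)).1 x % k n) % k m :=
              (Nat.mod_mod_of_dvd _ (hchain m n hmn)).symm
          _ = (F n).1 x % k m := by rw [h2]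
          _ = (F m).1 x := h1
  refine ⟨fun x n => (F n).1 x, ?_, ?_, ?_, ?_⟩
  · exact measurable_pi_lambda _ fun n => (F n).2.1
  · have hbd : ∀ᵐ x ∂μ, ∀ n, (F n).1 x < k n := ae_all_iff.mpr fun n => (F n).2.2.1
    have hcomp : ∀ᵐ x ∂μ, ∀ m n, m ≤ n → (F n).1 x % k m = (F m).1 x := by
      rw [ae_all_iff]; intro m; rw [ae_all_iff]; intro n
      by_cases h : m ≤ n
      · exact (hall m n h).mono fun x hx _ => hx
      · exact Filter.Eventually.of_forall fun x hmn => absurd hmn h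
    exact hbd.and hcomp
  · intro n j hj
    have : {x | (F n).1 x = j} = (F n).1 ⁻¹' {j} := rfl
    rw [this]
    exact (F n).2.2.2.1 j hj
  · exact ae_all_iff.mpr fun n => (F n).2.2.2.2
end

section
/- Let (k_n) and (k'_n) be sequences of integers greater than 1 with k_n dividing k_{n+1} and k'_n dividing k'_{n+1} for all n. Then the odometers associated to (k_n) and to (k'_n) are isomorphic if and only if {m ∈ ℕ : m divides k_n for some n} = {m ∈ ℕ : m divides k'_n for some n}. -/
open MeasureTheory ENNReal

/-- The `+1` map of the odometer determined by `(k n)`, acting on sequences of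
residues. -/
def odomAdd (k : ℕ → ℕ) : (ℕ → ℕ) → ℕ → ℕ := fun α n => (α n + 1) % k n

/-- `ν` is the Haar (odometer) measure of the odometer determined by `(k n)`:
a probability measure concentrated on the compatible sequences of residues, giving
every level-`n` cylinder the measure `1 / k n`.  (These properties determine `ν`
uniquely.) -/
def IsOdometerMeasure (k : ℕ → ℕ) (ν : MeasureTheory.Measure (ℕ → ℕ)) : Prop :=
  MeasureTheory.IsProbabilityMeasure ν ∧
    (∀ᵐ α ∂ν, (∀ n, α n < k n) ∧ ∀ m n, m ≤ n → α n % k m = α m) ∧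
    (∀ n, ∀ j < k n, ν {α | α n = j} = 1 / (k n : ℝ≥0∞))


noncomputable section
namespace OdoAux
open MeasureTheory ENNReal Filter Set

/-- compatible bounded sequences -/
def compatSet (k : ℕ → ℕ) : Set (ℕ → ℕ) :=
  {α | (∀ n, α n < k n) ∧ ∀ m n, m ≤ n → α n % k m = α m}

lemma measurableSet_eq_nat {X : Type*} [MeasurableSpace X] {f g : X → ℕ}
    (hf : Measurable f) (hg : Measurable g) : MeasurableSet {x | f x = g x} := by
  have h : {x | f x = g x} = ⋃ j, f ⁻¹' {j} ∩ g ⁻¹' {j} := by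
    ext x
    constructor
    · rintro h; exact Set.mem_iUnion.2 ⟨f x, rfl, h.symm⟩
    · rintro h
      obtain ⟨j, h1, h2⟩ := Set.mem_iUnion.1 h
      simp only [Set.mem_preimage, Set.mem_singleton_iff] at h1 h2
      simp [Set.mem_setOf_eq, h1, h2]
  rw [h]
  exact MeasurableSet.iUnion fun j =>
    (hf (measurableSet_singleton j)).inter (hg (measurableSet_singleton j))

lemma measurableSet_eq_seq {X : Type*} [MeasurableSpace X] {f g : X → ℕ → ℕ}
    (hf : Measurable f) (hg : Measurable g) : MeasurableSet {x | f x = g x} := by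
  have h : {x | f x = g x} = ⋂ n, {x | f x n = g x n} := by
    ext x; simp [funext_iff]
  rw [h]
  exact MeasurableSet.iInter fun n =>
    measurableSet_eq_nat (hf.eval (a := n)) (hg.eval (a := n))

lemma measurableSet_compat (k : ℕ → ℕ) : MeasurableSet (compatSet k) := by
  have h : compatSet k = (⋂ n, {α : ℕ → ℕ | α n < k n}) ∩
      ⋂ m, ⋂ n, ⋂ (_ : m ≤ n), {α : ℕ → ℕ | α n % k m = α m} := by
    ext α; simp [compatSet]
  rw [h]
  refine MeasurableSet.inter (MeasurableSet.iInter fun n => ?_)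
    (MeasurableSet.iInter fun m => MeasurableSet.iInter fun n =>
      MeasurableSet.iInter fun _ => ?_)
  · exact measurable_pi_apply n measurableSet_Iio
  · exact measurableSet_eq_nat
      ((measurable_from_top (f := fun j => j % k m)).comp (measurable_pi_apply n))
      (measurable_pi_apply m)

lemma ae_compat {k : ℕ → ℕ} {ν : Measure (ℕ → ℕ)} (hν : IsOdometerMeasure k ν) :
    ∀ᵐ α ∂ν, α ∈ compatSet k := hν.2.1

lemma kdvd {k : ℕ → ℕ} (hkd : ∀ n, k n ∣ k (n + 1)) :
    ∀ {m n}, m ≤ n → k m ∣ k n := by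
  intro m n h
  induction n with
  | zero => simp_all
  | succ n ih =>
    rcases Nat.lt_or_ge m (n+1) with h' | h'
    · exact (ih (Nat.lt_succ_iff.1 h')).trans (hkd n)
    · have : m = n + 1 := le_antisymm h h'
      subst this; rfl

end OdoAux

noncomputable section
namespace OdoAux
open MeasureTheory ENNReal Filter Set
open scoped Classical

variable {k : ℕ → ℕ} {ν : Measure (ℕ → ℕ)}

lemma measurable_eval (N : ℕ) : Measurable (fun α : ℕ → ℕ => α N) :=
  measurable_pi_apply N

lemma measurableSet_coord (N : ℕ) (J : Set ℕ) :
    MeasurableSet {α : ℕ → ℕ | α N ∈ J} :=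
  measurable_eval N (show MeasurableSet J from trivial)

/-- measure of a single-coordinate set -/
lemma meas_coord (hν : IsOdometerMeasure k ν) (N : ℕ) (J : ℕ → Prop) [DecidablePred J] :
    ν {α | J (α N)} =
      ((Finset.range (k N)).filter J).card / (k N : ℝ≥0∞) := by
  have hae : {α : ℕ → ℕ | J (α N)} =ᵐ[ν]
      ⋃ j ∈ (Finset.range (k N)).filter J, {α : ℕ → ℕ | α N = j} := by
    rw [Filter.eventuallyEq_set]
    filter_upwards [hν.2.1] with α hα
    simp only [Set.mem_setOf_eq, Set.mem_iUnion, Finset.mem_filter, Finset.mem_range]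
    constructor
    · intro h; exact ⟨α N, ⟨hα.1 N, h⟩, rfl⟩
    · rintro ⟨j, ⟨_, hj⟩, rfl⟩; exact hj
  rw [measure_congr hae, measure_biUnion_finset]
  · rw [Finset.sum_congr rfl (fun j hj => hν.2.2 N j (Finset.mem_range.1 (Finset.mem_filter.1 hj).1))]
    simp [Finset.sum_const, ENNReal.div_eq_inv_mul, mul_comm]
  · intro i _ j _ hij
    simp only [Function.onFun, Set.disjoint_left]
    intro α h1 h2
    exact hij (h1.symm.trans h2)
  · intro j _
    exact measurable_eval N (measurableSet_singleton j)

/-- boxes: the generating π-system -/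
def box (F : Finset ℕ) (y : ℕ → ℕ) : Set (ℕ → ℕ) := {α | ∀ i ∈ F, α i = y i}

def boxes : Set (Set (ℕ → ℕ)) := {s | ∃ F y, s = box F y}

lemma measurableSet_box (F : Finset ℕ) (y : ℕ → ℕ) : MeasurableSet (box F y) := by
  have h : box F y = ⋂ i ∈ F, {α : ℕ → ℕ | α i = y i} := by ext α; simp [box]
  rw [h]
  exact MeasurableSet.biInter F.countable_toSet
    (fun i _ => measurable_eval i (measurableSet_singleton (y i)))

lemma isPiSystem_boxes : IsPiSystem boxes := by
  rintro s ⟨F, y, rfl⟩ t ⟨G, z, rfl⟩ hne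
  refine ⟨F ∪ G, fun i => if i ∈ F then y i else z i, ?_⟩
  obtain ⟨α, hαF, hαG⟩ := hne
  ext β
  simp only [box, Set.mem_inter_iff, Set.mem_setOf_eq, Finset.mem_union]
  constructor
  · rintro ⟨h1, h2⟩ i hi
    by_cases hiF : i ∈ F
    · simp [hiF, h1 i hiF]
    · simp [hiF, h2 i (hi.resolve_left hiF)]
  · intro h
    constructor
    · intro i hi; have := h i (Or.inl hi); simpa [hi] using this
    · intro i hi
      have := h i (Or.inr hi)
      by_cases hiF : i ∈ F
      · simp only [if_pos hiF] at this
        rw [this, ← hαF i hiF, hαG i hi]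
      · simpa [hiF] using this

lemma generateFrom_boxes :
    (MeasurableSpace.pi : MeasurableSpace (ℕ → ℕ)) = MeasurableSpace.generateFrom boxes := by
  refine le_antisymm ?_ ?_
  · have h1 : ∀ n, @Measurable (ℕ → ℕ) ℕ (MeasurableSpace.generateFrom boxes) _
        (fun α => α n) := by
      intro n
      refine @measurable_to_countable' ℕ (ℕ → ℕ) _ _ (MeasurableSpace.generateFrom boxes) _ ?_
      intro j
      apply MeasurableSpace.measurableSet_generateFrom
      exact ⟨{n}, fun _ => j, by ext α; simp [box]⟩
    have h2 : @Measurable (ℕ → ℕ) (ℕ → ℕ) (MeasurableSpace.generateFrom boxes)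
        MeasurableSpace.pi id :=
      (@measurable_pi_iff (ℕ → ℕ) ℕ (fun _ => ℕ) (MeasurableSpace.generateFrom boxes) _ id).2 h1
    exact fun s hs => h2 hs
  · refine MeasurableSpace.generateFrom_le ?_
    rintro s ⟨F, y, rfl⟩
    exact measurableSet_box F y

/-- uniqueness of the odometer measure -/
lemma odometer_unique {ν₁ ν₂ : Measure (ℕ → ℕ)}
    (h1 : IsOdometerMeasure k ν₁) (h2 : IsOdometerMeasure k ν₂) : ν₁ = ν₂ := by
  have hP1 : IsProbabilityMeasure ν₁ := h1.1
  have hP2 : IsProbabilityMeasure ν₂ := h2.1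
  refine ext_of_generate_finite boxes generateFrom_boxes isPiSystem_boxes ?_ (by simp)
  rintro s ⟨F, y, rfl⟩
  rcases F.eq_empty_or_nonempty with rfl | hF
  · have h : box ∅ y = Set.univ := by ext α; simp [box]
    simp [h]
  · set N := F.max' hF with hN
    have key : ∀ (ν : Measure (ℕ → ℕ)), IsOdometerMeasure k ν →
        ν (box F y) = ν {α | ∀ i ∈ F, (α N) % k i = y i} := by
      intro ν hν
      apply measure_congr
      rw [Filter.eventuallyEq_set]
      filter_upwards [hν.2.1] with α hα
      simp only [box, Set.mem_setOf_eq]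
      constructor
      · intro h i hi
        rw [hα.2 i N (F.le_max' i hi), h i hi]
      · intro h i hi
        rw [← h i hi, hα.2 i N (F.le_max' i hi)]
    rw [key ν₁ h1, key ν₂ h2,
      meas_coord h1 N (fun j => ∀ i ∈ F, j % k i = y i),
      meas_coord h2 N (fun j => ∀ i ∈ F, j % k i = y i)]

end OdoAux

noncomputable section
namespace OdoAux
open MeasureTheory ENNReal Filter Set
open scoped Classical

variable {k : ℕ → ℕ} {ν : Measure (ℕ → ℕ)}

lemma measurable_odomAdd (k : ℕ → ℕ) : Measurable (odomAdd k) := by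
  rw [measurable_pi_iff]
  intro n
  exact (measurable_from_top (f := fun j : ℕ => (j + 1) % k n)).comp (measurable_eval n)

lemma odomAdd_mem_compat (hk1 : ∀ n, 1 < k n) (hkd : ∀ n, k n ∣ k (n + 1))
    {α : ℕ → ℕ} (hα : α ∈ compatSet k) : odomAdd k α ∈ compatSet k := by
  obtain ⟨hb, hc⟩ := hα
  constructor
  · intro n
    exact Nat.mod_lt _ (Nat.lt_of_lt_of_le Nat.zero_lt_one (hk1 n).le)
  · intro m n hmn
    show (α n + 1) % k n % k m = (α m + 1) % k m
    rw [Nat.mod_mod_of_dvd _ (kdvd hkd hmn), Nat.add_mod, hc m n hmn,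
      Nat.mod_eq_of_lt (hk1 m)]

lemma succ_mod_eq_iff {K a j : ℕ} (hK : 0 < K) (ha : a < K) (hj : j < K) :
    (a + 1) % K = j ↔ a = (j + K - 1) % K := by
  have hb : (j + K - 1) % K = if j = 0 then K - 1 else j - 1 := by
    rcases Nat.eq_zero_or_pos j with rfl | hj0
    · rw [if_pos rfl, Nat.zero_add, Nat.mod_eq_of_lt (by omega)]
    · rw [if_neg (by omega), Nat.mod_eq_sub_mod (by omega),
        show j + K - 1 - K = j - 1 by omega, Nat.mod_eq_of_lt (by omega)]
  have hmod : (a + 1) % K = if a + 1 = K then 0 else a + 1 := by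
    split_ifs with h
    · rw [h, Nat.mod_self]
    · exact Nat.mod_eq_of_lt (by omega)
  rw [hmod, hb]
  split_ifs <;> omega

lemma odometer_map (hk1 : ∀ n, 1 < k n) (hkd : ∀ n, k n ∣ k (n + 1))
    (hν : IsOdometerMeasure k ν) : IsOdometerMeasure k (ν.map (odomAdd k)) := by
  have hm := measurable_odomAdd k
  have hP : IsProbabilityMeasure ν := hν.1
  refine ⟨Measure.isProbabilityMeasure_map hm.aemeasurable, ?_, ?_⟩
  · have h : ∀ᵐ α ∂ν, odomAdd k α ∈ compatSet k := by
      filter_upwards [hν.2.1] with α hα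
      exact odomAdd_mem_compat hk1 hkd hα
    exact (ae_map_iff hm.aemeasurable (measurableSet_compat k)).2 h
  · intro n j hj
    have hKpos : 0 < k n := lt_trans Nat.zero_lt_one (hk1 n)
    have hset : {α : ℕ → ℕ | α n = j} = {α : ℕ → ℕ | α n ∈ ({j} : Set ℕ)} := rfl
    rw [Measure.map_apply hm (by rw [hset]; exact measurableSet_coord n _)]
    have hpre : odomAdd k ⁻¹' {α | α n = j} = {α : ℕ → ℕ | (α n + 1) % k n = j} := rfl
    rw [hpre]
    set j' := (j + k n - 1) % k n with hj'
    have hj'lt : j' < k n := Nat.mod_lt _ hKpos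
    have hcongr : {α : ℕ → ℕ | (α n + 1) % k n = j} =ᵐ[ν] {α : ℕ → ℕ | α n = j'} := by
      rw [Filter.eventuallyEq_set]
      filter_upwards [hν.2.1] with α hα
      exact succ_mod_eq_iff hKpos (hα.1 n) hj
    rw [measure_congr hcongr]
    exact hν.2.2 n j' hj'lt

lemma odomAdd_mp (hk1 : ∀ n, 1 < k n) (hkd : ∀ n, k n ∣ k (n + 1))
    (hν : IsOdometerMeasure k ν) : MeasurePreserving (odomAdd k) ν ν :=
  ⟨measurable_odomAdd k, odometer_unique (odometer_map hk1 hkd hν) hν⟩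

/-- iterate formula -/
lemma odomAdd_iterate (k : ℕ → ℕ) (K : ℕ) (α : ℕ → ℕ) (n : ℕ) :
    (odomAdd k)^[K + 1] α n = (α n + (K + 1)) % k n := by
  induction K with
  | zero => rfl
  | succ K ih =>
    rw [Function.iterate_succ_apply']
    show ((odomAdd k)^[K + 1] α n + 1) % k n = _
    rw [ih, Nat.mod_add_mod, show α n + (K + 1) + 1 = α n + (K + 1 + 1) by ring]

end OdoAux

noncomputable section
namespace OdoAux
open MeasureTheory ENNReal Filter Set
open scoped Classical

variable {k k' : ℕ → ℕ} {ν ν' : Measure (ℕ → ℕ)}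

lemma card_filter_mod {K m j : ℕ} (hm : 0 < m) (hd : m ∣ K) (hj : j < m) :
    ((Finset.range K).filter (fun i => i % m = j)).card = K / m := by
  rw [← Finset.card_range (K / m)]
  apply Finset.card_bij' (fun i _ => i / m) (fun t _ => m * t + j)
  · intro a ha
    simp only [Finset.mem_filter, Finset.mem_range] at ha
    exact Finset.mem_range.2 (Nat.div_lt_div_of_lt_of_dvd hd ha.1)
  · intro t ht
    simp only [Finset.mem_range] at ht
    refine Finset.mem_filter.2 ⟨Finset.mem_range.2 ?_, ?_⟩
    · calc m * t + j < m * (t + 1) := by rw [Nat.mul_succ]; omega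
        _ ≤ m * (K / m) := Nat.mul_le_mul_left m ht
        _ = K := Nat.mul_div_cancel' hd
    · rw [Nat.mul_add_mod, Nat.mod_eq_of_lt hj]
  · intro a ha
    simp only [Finset.mem_filter, Finset.mem_range] at ha
    rw [← ha.2]
    exact Nat.div_add_mod a m
  · intro t _
    rw [Nat.mul_add_div hm, Nat.div_eq_of_lt hj, Nat.add_zero]

lemma count_div {K m : ℕ} (hm : 0 < m) (hd : m ∣ K) (hK : 0 < K) :
    ((K / m : ℕ) : ℝ≥0∞) / (K : ℝ≥0∞) = 1 / (m : ℝ≥0∞) := by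
  have hx : (0 : ℕ) < K / m := Nat.div_pos (Nat.le_of_dvd hK hd) hm
  have h : (K : ℝ≥0∞) = (m : ℝ≥0∞) * ((K / m : ℕ) : ℝ≥0∞) := by
    exact_mod_cast (Nat.mul_div_cancel' hd).symm
  rw [h, ← one_mul (((K / m : ℕ) : ℝ≥0∞)), ← mul_assoc]
  rw [ENNReal.mul_div_mul_right _ _ (by exact_mod_cast hx.ne') (by simp)]
  simp

lemma compat_eval_dvd (hkd : ∀ n, k n ∣ k (n + 1)) {α : ℕ → ℕ}
    (hα : α ∈ compatSet k) {n M : ℕ} (h : k n ∣ k M) : α M % k n = α n := by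
  rcases le_or_gt n M with hnM | hMn
  · exact hα.2 n M hnM
  · have he : k n = k M := Nat.dvd_antisymm h (kdvd hkd hMn.le)
    have h1 : α M % k n = α M := by rw [he]; exact Nat.mod_eq_of_lt (hα.1 M)
    have h2 : α n % k M = α M := hα.2 M n hMn.le
    rw [← he, Nat.mod_eq_of_lt (hα.1 n)] at h2
    rw [h1, h2]

section Transfer

variable (g : ℕ → ℕ)

lemma transfer_measurable (k' : ℕ → ℕ) :
    Measurable (fun (α : ℕ → ℕ) (n : ℕ) => α (g n) % k' n) := by
  rw [measurable_pi_iff]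
  intro n
  exact (measurable_from_top (f := fun j : ℕ => j % k' n)).comp (measurable_eval (g n))

lemma transfer_compat (hk1' : ∀ n, 1 < k' n) (hkd' : ∀ n, k' n ∣ k' (n + 1))
    (hg : ∀ n, k' n ∣ k (g n)) {α : ℕ → ℕ} (hα : α ∈ compatSet k) :
    (fun n => α (g n) % k' n) ∈ compatSet k' := by
  constructor
  · intro n
    exact Nat.mod_lt _ (lt_trans Nat.zero_lt_one (hk1' n))
  · intro m n hmn
    set M := max (g n) (g m) with hM
    have key : ∀ p, k' m ∣ k (g p) → g p ≤ M → α (g p) % k' m = α M % k' m := by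
      intro p hp hle
      rw [← hα.2 (g p) M hle, Nat.mod_mod_of_dvd _ hp]
    have h1 : α (g n) % k' m = α M % k' m :=
      key n ((kdvd hkd' hmn).trans (hg n)) (le_max_left _ _)
    have h2 : α (g m) % k' m = α M % k' m := key m (hg m) (le_max_right _ _)
    show α (g n) % k' n % k' m = α (g m) % k' m
    rw [Nat.mod_mod_of_dvd _ (kdvd hkd' hmn), h1, h2]

lemma transfer_equivariant (hg : ∀ n, k' n ∣ k (g n)) (α : ℕ → ℕ) :
    (fun n => (odomAdd k α) (g n) % k' n) = odomAdd k' (fun n => α (g n) % k' n) := by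
  funext n
  show (α (g n) + 1) % k (g n) % k' n = (α (g n) % k' n + 1) % k' n
  rw [Nat.mod_mod_of_dvd _ (hg n), Nat.mod_add_mod]

lemma transfer_mp (hk1 : ∀ n, 1 < k n) (hkd : ∀ n, k n ∣ k (n + 1))
    (hk1' : ∀ n, 1 < k' n) (hkd' : ∀ n, k' n ∣ k' (n + 1))
    (hν : IsOdometerMeasure k ν) (hν' : IsOdometerMeasure k' ν')
    (hg : ∀ n, k' n ∣ k (g n)) :
    MeasurePreserving (fun (α : ℕ → ℕ) (n : ℕ) => α (g n) % k' n) ν ν' := by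
  set φ := fun (α : ℕ → ℕ) (n : ℕ) => α (g n) % k' n with hφ
  have hm : Measurable φ := transfer_measurable g k'
  refine ⟨hm, ?_⟩
  have hP : IsProbabilityMeasure ν := hν.1
  refine odometer_unique (k := k') ⟨Measure.isProbabilityMeasure_map hm.aemeasurable, ?_, ?_⟩ hν'
  · have h : ∀ᵐ α ∂ν, φ α ∈ compatSet k' := by
      filter_upwards [hν.2.1] with α hα
      exact transfer_compat g hk1' hkd' hg hα
    exact (ae_map_iff hm.aemeasurable (measurableSet_compat k')).2 h
  · intro n j hj
    have hset : {β : ℕ → ℕ | β n = j} = {β : ℕ → ℕ | β n ∈ ({j} : Set ℕ)} := rfl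
    rw [Measure.map_apply hm (by rw [hset]; exact measurableSet_coord n _)]
    have hpre : φ ⁻¹' {β | β n = j} = {α : ℕ → ℕ | (fun i => i % k' n = j) (α (g n))} := rfl
    rw [hpre, meas_coord hν (g n) (fun i => i % k' n = j)]
    rw [card_filter_mod (lt_trans Nat.zero_lt_one (hk1' n)) (hg n) hj]
    exact count_div (lt_trans Nat.zero_lt_one (hk1' n)) (hg n)
      (lt_trans Nat.zero_lt_one (hk1 (g n)))

end Transfer

/-- backward direction -/
lemma backward (hk1 : ∀ n, 1 < k n) (hkd : ∀ n, k n ∣ k (n + 1))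
    (hk1' : ∀ n, 1 < k' n) (hkd' : ∀ n, k' n ∣ k' (n + 1))
    (hν : IsOdometerMeasure k ν) (hν' : IsOdometerMeasure k' ν')
    (heq : {m : ℕ | ∃ n, m ∣ k n} = {m : ℕ | ∃ n, m ∣ k' n}) :
    ∃ φ : (ℕ → ℕ) → ℕ → ℕ, MeasurePreserving φ ν ν' ∧
      (∀ᵐ α ∂ν, φ (odomAdd k α) = odomAdd k' (φ α)) ∧
      ∃ ψ : (ℕ → ℕ) → ℕ → ℕ, Measurable ψ ∧ ∀ᵐ α ∂ν, ψ (φ α) = α := by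
  have hsub : ∀ n, ∃ m, k' n ∣ k m := by
    intro n
    have : k' n ∈ {m : ℕ | ∃ n, m ∣ k' n} := ⟨n, dvd_rfl⟩
    rw [← heq] at this
    exact this
  have hsub' : ∀ n, ∃ m, k n ∣ k' m := by
    intro n
    have : k n ∈ {m : ℕ | ∃ n, m ∣ k n} := ⟨n, dvd_rfl⟩
    rw [heq] at this
    exact this
  choose g hg using hsub
  choose g' hg' using hsub'
  refine ⟨fun α n => α (g n) % k' n,
    transfer_mp g hk1 hkd hk1' hkd' hν hν' hg,
    Filter.Eventually.of_forall (fun α => transfer_equivariant g hg α),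
    fun β n => β (g' n) % k n, transfer_measurable g' k, ?_⟩
  filter_upwards [hν.2.1] with α hα
  funext n
  show (α (g (g' n)) % k' (g' n)) % k n = α n
  rw [Nat.mod_mod_of_dvd _ (hg' n)]
  exact compat_eval_dvd hkd hα ((hg' n).trans (hg (g' n)))

end OdoAux

noncomputable section
namespace OdoAux
open MeasureTheory ENNReal Filter Set
open scoped Classical symmDiff

variable {k : ℕ → ℕ} {ν : Measure (ℕ → ℕ)}

/-- `E` depends only on coordinates `≤ N` -/
def DepOn (N : ℕ) (E : Set (ℕ → ℕ)) : Prop :=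
  ∀ α β : ℕ → ℕ, (∀ i ≤ N, α i = β i) → (α ∈ E ↔ β ∈ E)

lemma DepOn.mono {N N' : ℕ} {E : Set (ℕ → ℕ)} (h : N ≤ N') (hE : DepOn N E) :
    DepOn N' E :=
  fun α β hab => hE α β (fun i hi => hab i (hi.trans h))

lemma DepOn.compl {N : ℕ} {E : Set (ℕ → ℕ)} (hE : DepOn N E) : DepOn N Eᶜ :=
  fun α β hab => not_congr (hE α β hab)

lemma ae_symmDiff_congr {X : Type*} [MeasurableSpace X] {μ : Measure X} {s t t' : Set X}
    (h : t =ᵐ[μ] t') : (s ∆ t : Set X) =ᵐ[μ] (s ∆ t' : Set X) := by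
  rw [Filter.eventuallyEq_set] at h ⊢
  filter_upwards [h] with x hx
  rw [Set.mem_symmDiff, Set.mem_symmDiff]
  tauto

lemma meas_symmDiff_triangle (μ : Measure (ℕ → ℕ)) (a b c : Set (ℕ → ℕ)) :
    μ (a ∆ c) ≤ μ (a ∆ b) + μ (b ∆ c) :=
  le_trans (measure_mono (symmDiff_triangle a b c)) (measure_union_le _ _)

/-- approximation of measurable sets by finite-coordinate sets -/
lemma approx (μ : Measure (ℕ → ℕ)) [IsFiniteMeasure μ] {A : Set (ℕ → ℕ)}
    (hA : MeasurableSet A) :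
    ∀ ε : ℝ≥0∞, 0 < ε → ∃ N E, MeasurableSet E ∧ DepOn N E ∧ μ (A ∆ E) < ε := by
  refine MeasurableSpace.induction_on_inter
    (C := fun (A : Set (ℕ → ℕ)) _ => ∀ ε : ℝ≥0∞, 0 < ε → ∃ N E,
      MeasurableSet E ∧ DepOn N E ∧ μ (A ∆ E) < ε)
    generateFrom_boxes isPiSystem_boxes ?_ ?_ ?_ ?_ _ hA
  · intro ε hε
    exact ⟨0, ∅, MeasurableSet.empty, fun α β _ => Iff.rfl, by
      rw [symmDiff_self]; simpa using hε⟩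
  · rintro s ⟨F, y, rfl⟩ ε hε
    refine ⟨F.sup id, box F y, measurableSet_box F y, ?_, by
      rw [symmDiff_self]; simpa using hε⟩
    intro α β hab
    constructor
    · intro h i hi; rw [← hab i (Finset.le_sup (f := id) hi)]; exact h i hi
    · intro h i hi; rw [hab i (Finset.le_sup (f := id) hi)]; exact h i hi
  · intro t htm iht ε hε
    obtain ⟨N, E, hEm, hEd, hlt⟩ := iht ε hε
    exact ⟨N, Eᶜ, hEm.compl, hEd.compl, by rwa [compl_symmDiff_compl]⟩
  · intro f hdisj hfm ihf ε hε
    rcases eq_top_or_lt_top ε with rfl | hεtop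
    · exact ⟨0, ∅, MeasurableSet.empty, fun α β _ => Iff.rfl,
        lt_of_le_of_lt (measure_mono (Set.subset_univ _)) (measure_lt_top μ _)⟩
    have hε2 : (0 : ℝ≥0∞) < ε / 2 := ENNReal.half_pos hε.ne'
    have hsum : ∑' i, μ (f i) ≠ ⊤ := by
      rw [← measure_iUnion hdisj hfm]
      exact (measure_lt_top μ _).ne
    obtain ⟨n, hn⟩ := ((ENNReal.tendsto_sum_nat_add (fun i => μ (f i)) hsum).eventually_lt_const
      hε2).exists
    have hn1 : ((n : ℝ≥0∞) + 1) ≠ 0 := (zero_lt_one.trans_le le_add_self).ne'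
    have hn2 : ((n : ℝ≥0∞) + 1) ≠ ⊤ := by simp
    set εi := ε / 2 / ((n : ℝ≥0∞) + 1) with hεi
    have hεipos : 0 < εi := by
      apply ENNReal.div_pos hε2.ne' hn2
    choose Nf Ef hEfm hEfd hEflt using fun i => ihf i εi hεipos
    refine ⟨(Finset.range n).sup Nf, ⋃ i ∈ Finset.range n, Ef i,
      (Finset.range n).measurableSet_biUnion (fun i _ => hEfm i), ?_, ?_⟩
    · intro α β hab
      simp only [Set.mem_iUnion]
      constructor
      · rintro ⟨i, hi, hx⟩
        exact ⟨i, hi, ((hEfd i).mono (Finset.le_sup hi) α β hab).1 hx⟩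
      · rintro ⟨i, hi, hx⟩
        exact ⟨i, hi, ((hEfd i).mono (Finset.le_sup hi) α β hab).2 hx⟩
    · have hsubset : (⋃ i, f i) ∆ (⋃ i ∈ Finset.range n, Ef i) ⊆
          (⋃ a, f (a + n)) ∪ ⋃ i ∈ Finset.range n, (f i ∆ Ef i) := by
        intro x hx
        rcases Set.mem_symmDiff.1 hx with ⟨hx1, hx2⟩ | ⟨hx1, hx2⟩
        · obtain ⟨i, hi⟩ := Set.mem_iUnion.1 hx1
          rcases Nat.lt_or_ge i n with hin | hin
          · refine Or.inr (Set.mem_biUnion (Finset.mem_range.2 hin) ?_)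
            refine Set.mem_symmDiff.2 (Or.inl ⟨hi, fun hc => hx2 ?_⟩)
            exact Set.mem_biUnion (Finset.mem_range.2 hin) hc
          · exact Or.inl (Set.mem_iUnion.2 ⟨i - n, by rwa [Nat.sub_add_cancel hin]⟩)
        · obtain ⟨i, hi, hxi⟩ := Set.mem_iUnion₂.1 hx1
          refine Or.inr (Set.mem_biUnion hi ?_)
          refine Set.mem_symmDiff.2 (Or.inr ⟨hxi, fun hc => hx2 (Set.mem_iUnion.2 ⟨i, hc⟩)⟩)
      calc μ ((⋃ i, f i) ∆ (⋃ i ∈ Finset.range n, Ef i))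
          ≤ μ ((⋃ a, f (a + n)) ∪ ⋃ i ∈ Finset.range n, (f i ∆ Ef i)) :=
            measure_mono hsubset
        _ ≤ μ (⋃ a, f (a + n)) + μ (⋃ i ∈ Finset.range n, (f i ∆ Ef i)) :=
            measure_union_le _ _
        _ ≤ μ (⋃ a, f (a + n)) + ∑ i ∈ Finset.range n, μ (f i ∆ Ef i) := by
            gcongr
            exact measure_biUnion_finset_le _ _
        _ < ε / 2 + ε / 2 := by
            have hεhalftop : ε / 2 ≠ ⊤ := (lt_of_le_of_lt (ENNReal.half_le_self) hεtop).ne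
            have hsum_le : ∑ i ∈ Finset.range n, μ (f i ∆ Ef i) ≤ ε / 2 := by
              calc ∑ i ∈ Finset.range n, μ (f i ∆ Ef i)
                  ≤ ∑ _i ∈ Finset.range n, εi := Finset.sum_le_sum (fun i _ => (hEflt i).le)
                _ = n * εi := by rw [Finset.sum_const, Finset.card_range, nsmul_eq_mul]
                _ ≤ ((n : ℝ≥0∞) + 1) * εi := by gcongr; exact le_self_add
                _ = ε / 2 := ENNReal.mul_div_cancel' (fun h => absurd h hn1) (fun h => absurd h hn2)
            exact ENNReal.add_lt_add_of_lt_of_le (ne_top_of_le_ne_top hεhalftop hsum_le)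
              (lt_of_le_of_lt (measure_iUnion_le _) hn) hsum_le
        _ = ε := ENNReal.add_halves ε

end OdoAux

noncomputable section
namespace OdoAux
open MeasureTheory ENNReal Filter Set
open scoped Classical symmDiff

variable {k k' : ℕ → ℕ} {ν ν' : Measure (ℕ → ℕ)}

/-- a set depending on coordinates `≤ N` is a.e. a coordinate-`N` set -/
lemma depOn_coord (hν : IsOdometerMeasure k ν) {N : ℕ} {E : Set (ℕ → ℕ)}
    (hd : DepOn N E) :
    E =ᵐ[ν] {α | α N ∈ {j : ℕ | (fun i => j % k i) ∈ E}} := by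
  rw [Filter.eventuallyEq_set]
  filter_upwards [hν.2.1] with α hα
  have h : α ∈ E ↔ (fun i => α N % k i) ∈ E := by
    apply hd
    intro i hi
    exact (hα.2 i N hi).symm
  exact h

/-- coordinate-`N` sets are invariant under `T^[k N]` a.e. -/
lemma coord_shift (hk1 : ∀ n, 1 < k n) (hν : IsOdometerMeasure k ν) (N : ℕ) (J : Set ℕ) :
    ((odomAdd k)^[k N]) ⁻¹' {α | α N ∈ J} =ᵐ[ν] {α | α N ∈ J} := by
  rw [Filter.eventuallyEq_set]
  filter_upwards [hν.2.1] with α hα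
  have hKpos : 0 < k N := lt_trans Nat.zero_lt_one (hk1 N)
  have h : (odomAdd k)^[k N] α N = α N := by
    obtain ⟨K, hK⟩ : ∃ K, k N = K + 1 := ⟨k N - 1, by omega⟩
    rw [hK, odomAdd_iterate, ← hK, Nat.add_mod_right, Nat.mod_eq_of_lt (hα.1 N)]
  simp only [Set.mem_preimage, Set.mem_setOf_eq, h]

lemma mod_shift {m a K : ℕ} (hm : 0 < m) (ha : a < m) (hK : ¬ m ∣ K) :
    ((a + K) % m = 0 ↔ a = m - K % m) := by
  have hr : K % m < m := Nat.mod_lt _ hm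
  have hr0 : K % m ≠ 0 := fun h => hK (Nat.dvd_iff_mod_eq_zero.2 h)
  rw [Nat.add_mod, Nat.mod_eq_of_lt ha]
  set r := K % m with hrdef
  rcases Nat.lt_or_ge (a + r) m with h | h
  · rw [Nat.mod_eq_of_lt h]; omega
  · rw [Nat.mod_eq_sub_mod h, Nat.mod_eq_of_lt (by omega)]; omega

/-- forward direction: a factor-type map transports divisors -/
lemma forward (hk1 : ∀ n, 1 < k n) (hkd : ∀ n, k n ∣ k (n + 1))
    (hk1' : ∀ n, 1 < k' n) (hkd' : ∀ n, k' n ∣ k' (n + 1))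
    (hν : IsOdometerMeasure k ν) (hν' : IsOdometerMeasure k' ν')
    {ψ : (ℕ → ℕ) → ℕ → ℕ} (hmp : MeasurePreserving ψ ν' ν)
    (hequiv : ∀ᵐ β ∂ν', ψ (odomAdd k' β) = odomAdd k (ψ β))
    {m n : ℕ} (hmn : m ∣ k n) : ∃ n', m ∣ k' n' := by
  by_contra hcon
  push_neg at hcon
  have hm0 : 0 < m := by
    rcases Nat.eq_zero_or_pos m with rfl | h
    · exfalso
      have := Nat.eq_zero_of_zero_dvd hmn
      have := hk1 n
      omega
    · exact h
  set T' := odomAdd k' with hT'def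
  have hT' : MeasurePreserving T' ν' ν' := odomAdd_mp hk1' hkd' hν'
  have hψm : Measurable ψ := hmp.measurable
  set g := fun β : ℕ → ℕ => ψ β n % m with hgdef
  have hglt : ∀ β, g β < m := fun β => Nat.mod_lt _ hm0
  have hgmeas : Measurable g :=
    (measurable_from_top (f := fun j : ℕ => j % m)).comp ((measurable_eval n).comp hψm)
  have hgT : ∀ᵐ β ∂ν', g (T' β) = (g β + 1) % m := by
    filter_upwards [hequiv] with β hβ
    show ψ (T' β) n % m = _
    rw [hβ]
    show (ψ β n + 1) % k n % m = _
    rw [Nat.mod_mod_of_dvd _ hmn, ← Nat.mod_add_mod]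
  have hgK : ∀ K, ∀ᵐ β ∂ν', g (T'^[K] β) = (g β + K) % m := by
    intro K
    induction K with
    | zero =>
      refine Filter.Eventually.of_forall (fun β => ?_)
      simp [Nat.mod_eq_of_lt (hglt β)]
    | succ K ih =>
      have hpull : ∀ᵐ β ∂ν', g (T' (T'^[K] β)) = (g (T'^[K] β) + 1) % m :=
        (hT'.iterate K).quasiMeasurePreserving.ae hgT
      filter_upwards [ih, hpull] with β h1 h2
      rw [Function.iterate_succ_apply', h2, h1, Nat.mod_add_mod, ← add_assoc]
  set A := {β : ℕ → ℕ | g β = 0} with hAdef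
  have hAmeas : MeasurableSet A := hgmeas (measurableSet_singleton 0)
  have hP' : IsProbabilityMeasure ν' := hν'.1
  have hδpos : 0 < ν' A := by
    have hsub : ψ ⁻¹' {α | α n = 0} ⊆ A := by
      intro β hβ
      show g β = 0
      show ψ β n % m = 0
      rw [show ψ β n = 0 from hβ]
      simp
    have h1 : ν' (ψ ⁻¹' {α | α n = 0}) = 1 / (k n : ℝ≥0∞) := by
      rw [hmp.measure_preimage]
      · exact hν.2.2 n 0 (lt_trans Nat.zero_lt_one (hk1 n))
      · exact (measurable_eval n (measurableSet_singleton 0)).nullMeasurableSet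
    calc (0 : ℝ≥0∞) < 1 / (k n : ℝ≥0∞) := by
          apply ENNReal.div_pos one_ne_zero (by simp)
      _ = ν' (ψ ⁻¹' {α | α n = 0}) := h1.symm
      _ ≤ ν' A := measure_mono hsub
  set δ := ν' A with hδdef
  have hδtop : δ ≠ ⊤ := (measure_lt_top ν' A).ne
  have hδ2pos : 0 < δ / 2 := ENNReal.half_pos hδpos.ne'
  obtain ⟨N, E, hEmeas, hEdep, hEapprox⟩ := approx ν' hAmeas (δ / 2) hδ2pos
  set J := {j : ℕ | (fun i => j % k' i) ∈ E} with hJdef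
  set B := {α : ℕ → ℕ | α N ∈ J} with hBdef
  have hBmeas : MeasurableSet B := measurableSet_coord N J
  have hEB : E =ᵐ[ν'] B := depOn_coord hν' hEdep
  have hAB : ν' (A ∆ B) < δ / 2 := by
    rwa [← measure_congr (ae_symmDiff_congr hEB)]
  set K := k' N with hKdef
  have hKpos : 0 < K := lt_trans Nat.zero_lt_one (hk1' N)
  have hshift : (T'^[K]) ⁻¹' B =ᵐ[ν'] B := coord_shift hk1' hν' N J
  -- the bad fiber
  set jb := m - K % m with hjbdef
  have hjb0 : jb ≠ 0 := by
    have : K % m < m := Nat.mod_lt _ hm0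
    have : K % m ≠ 0 := fun h => (hcon N) (Nat.dvd_iff_mod_eq_zero.2 h)
    omega
  set Aj := {β : ℕ → ℕ | g β = jb} with hAjdef
  have hpreA : (T'^[K]) ⁻¹' A =ᵐ[ν'] Aj := by
    rw [Filter.eventuallyEq_set]
    filter_upwards [hgK K] with β hβ
    show g (T'^[K] β) = 0 ↔ g β = jb
    rw [hβ]
    exact mod_shift hm0 (hglt β) (hcon N)
  -- lower bound
  have hlow : δ ≤ ν' (A ∆ ((T'^[K]) ⁻¹' A)) := by
    rw [measure_congr (ae_symmDiff_congr hpreA)]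
    have hAsub : A ⊆ A ∆ Aj := by
      intro β hβ
      refine Set.mem_symmDiff.2 (Or.inl ⟨hβ, ?_⟩)
      intro hc
      have h1 : g β = 0 := hβ
      have h2 : g β = jb := hc
      exact hjb0 (h2.symm.trans h1)
    exact measure_mono hAsub
  -- upper bound
  have hup : ν' (A ∆ ((T'^[K]) ⁻¹' A)) < δ := by
    have h3 : ν' (((T'^[K]) ⁻¹' B) ∆ ((T'^[K]) ⁻¹' A)) < δ / 2 := by
      rw [← Set.preimage_symmDiff, (hT'.iterate K).measure_preimage
        (hBmeas.symmDiff hAmeas).nullMeasurableSet, symmDiff_comm]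
      exact hAB
    have h2 : ν' (B ∆ ((T'^[K]) ⁻¹' B)) = 0 := by
      rw [measure_congr (ae_symmDiff_congr hshift), symmDiff_self, Set.bot_eq_empty]
      exact measure_empty
    calc ν' (A ∆ ((T'^[K]) ⁻¹' A))
        ≤ ν' (A ∆ B) + ν' (B ∆ ((T'^[K]) ⁻¹' A)) := meas_symmDiff_triangle ν' _ _ _
      _ ≤ ν' (A ∆ B) + (ν' (B ∆ ((T'^[K]) ⁻¹' B)) + ν' (((T'^[K]) ⁻¹' B) ∆ ((T'^[K]) ⁻¹' A))) := by
          gcongr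
          exact meas_symmDiff_triangle ν' _ _ _
      _ = ν' (A ∆ B) + ν' (((T'^[K]) ⁻¹' B) ∆ ((T'^[K]) ⁻¹' A)) := by rw [h2, zero_add]
      _ < δ / 2 + δ / 2 := ENNReal.add_lt_add hAB h3
      _ = δ := ENNReal.add_halves δ
  exact absurd (lt_of_le_of_lt hlow hup) (lt_irrefl δ)

end OdoAux

theorem statement12 (k k' : ℕ → ℕ)
    (hk1 : ∀ n, 1 < k n) (hkd : ∀ n, k n ∣ k (n + 1))
    (hk1' : ∀ n, 1 < k' n) (hkd' : ∀ n, k' n ∣ k' (n + 1))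
    (ν ν' : MeasureTheory.Measure (ℕ → ℕ))
    (hν : IsOdometerMeasure k ν) (hν' : IsOdometerMeasure k' ν') :
    (∃ φ : (ℕ → ℕ) → ℕ → ℕ, MeasureTheory.MeasurePreserving φ ν ν' ∧
        (∀ᵐ α ∂ν, φ (odomAdd k α) = odomAdd k' (φ α)) ∧
        ∃ ψ : (ℕ → ℕ) → ℕ → ℕ, Measurable ψ ∧ ∀ᵐ α ∂ν, ψ (φ α) = α) ↔
      {m : ℕ | ∃ n, m ∣ k n} = {m : ℕ | ∃ n, m ∣ k' n} := by
  constructor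
  · rintro ⟨φ, hmpφ, hφT, ψ, hψm, hinv⟩
    have hTmp : MeasureTheory.MeasurePreserving (odomAdd k) ν ν := OdoAux.odomAdd_mp hk1 hkd hν
    have hφm := hmpφ.measurable
    have hmap : ν'.map ψ = ν := by
      rw [← hmpφ.map_eq, MeasureTheory.Measure.map_map hψm hφm]
      have h : ν.map (ψ ∘ φ) = ν.map id :=
        MeasureTheory.Measure.map_congr (by filter_upwards [hinv] with α hα; exact hα)
      rw [h, MeasureTheory.Measure.map_id]
    have hmpψ : MeasureTheory.MeasurePreserving ψ ν' ν := ⟨hψm, hmap⟩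
    have hψT : ∀ᵐ β ∂ν', ψ (odomAdd k' β) = odomAdd k (ψ β) := by
      have hEmeas : MeasurableSet {β | ψ (odomAdd k' β) = odomAdd k (ψ β)} :=
        OdoAux.measurableSet_eq_seq (hψm.comp (OdoAux.measurable_odomAdd k'))
          ((OdoAux.measurable_odomAdd k).comp hψm)
      rw [← hmpφ.map_eq]
      refine (MeasureTheory.ae_map_iff hφm.aemeasurable hEmeas).2 ?_
      filter_upwards [hφT, hTmp.quasiMeasurePreserving.ae hinv, hinv] with α h1 h2 h3
      show ψ (odomAdd k' (φ α)) = odomAdd k (ψ (φ α))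
      rw [← h1, h2, h3]
    apply Set.Subset.antisymm
    · rintro m ⟨n, hmn⟩
      exact OdoAux.forward hk1 hkd hk1' hkd' hν hν' hmpψ hψT hmn
    · rintro m ⟨n, hmn⟩
      exact OdoAux.forward hk1' hkd' hk1 hkd hν' hν ⟨hφm, hmpφ.map_eq⟩ hφT hmn
  · intro heq
    exact OdoAux.backward hk1 hkd hk1' hkd' hν hν' heq
end
end
end
end
end
end
end

section
/- Let (X, μ, T) be a rank-one measure-preserving transformation with cutting parameter r_n = 4 and spacer parameter s_{n,1} = 0, s_{n,2} = 2^{n+1}, s_{n,3} = 0, s_{n,4} = 0 for all n. Then for every odd integer a ≥ 3, T does not factor onto ℤ/aℤ. -/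
open MeasureTheory ENNReal

section Auxiliary

open MeasureTheory Set Function Filter Topology

variable {X : Type*} [MeasurableSpace X]

/-- Preimages under a measure-preserving map do not increase outer measure. -/
lemma ro17_preimage_le {μ : Measure X} {f : X → X} (hf : MeasurePreserving f μ μ)
    (S : Set X) : μ (f ⁻¹' S) ≤ μ S := by
  calc μ (f ⁻¹' S) ≤ μ (f ⁻¹' toMeasurable μ S) :=
        measure_mono (Set.preimage_mono (subset_toMeasurable μ S))
    _ = μ (toMeasurable μ S) :=
        hf.measure_preimage (measurableSet_toMeasurable μ S).nullMeasurableSet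
    _ = μ S := measure_toMeasurable S

/-- Images under a measure-preserving map do not decrease outer measure. -/
lemma ro17_le_image {μ : Measure X} {f : X → X} (hf : MeasurePreserving f μ μ)
    (S : Set X) : μ S ≤ μ (f '' S) :=
  (measure_mono (Set.subset_preimage_image f S)).trans (ro17_preimage_le hf (f '' S))

lemma ro17_ae_comp {μ : Measure X} {f : X → X} (hf : MeasurePreserving f μ μ)
    {p : X → Prop} (h : ∀ᵐ x ∂μ, p x) : ∀ᵐ x ∂μ, p (f x) := by
  rw [ae_iff] at h ⊢
  have he : {x | ¬ p (f x)} = f ⁻¹' {x | ¬ p x} := rfl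
  rw [he]
  exact le_antisymm ((ro17_preimage_le hf _).trans h.le) (zero_le)

lemma ro17_image_iterate_add (f : X → X) (p q : ℕ) (S : Set X) :
    f^[p + q] '' S = f^[p] '' (f^[q] '' S) := by
  rw [Function.iterate_add, Set.image_comp]

/-- In a standard Borel space, an atomless finite measure splits every positive-measure
measurable set. -/
lemma ro17_exists_split [StandardBorelSpace X] (μ : Measure X) [IsFiniteMeasure μ]
    [NullSingletonClass μ] {s : Set X} (hs : MeasurableSet s) (hpos : 0 < μ s) :
    ∃ t, t ⊆ s ∧ MeasurableSet t ∧ 0 < μ t ∧ μ t < μ s := by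
  obtain ⟨f, hf⟩ := exists_measurableEmbedding_real X
  by_contra hcon
  push_neg at hcon
  set g : ℝ → ℝ≥0∞ := fun t => μ (s ∩ f ⁻¹' Set.Iic t) with hgdef
  have gmeas : ∀ t : ℝ, MeasurableSet (s ∩ f ⁻¹' Set.Iic t) := fun t =>
    hs.inter (hf.measurable measurableSet_Iic)
  have gmono : ∀ ⦃t t' : ℝ⦄, t ≤ t' → g t ≤ g t' := fun t t' h =>
    measure_mono (Set.inter_subset_inter_right _ (Set.preimage_mono (Set.Iic_subset_Iic.2 h)))
  have gdi : ∀ t, g t = 0 ∨ g t = μ s := by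
    intro t
    rcases eq_or_ne (g t) 0 with h0 | h0
    · exact Or.inl h0
    · exact Or.inr (le_antisymm (measure_mono Set.inter_subset_left)
        (hcon _ Set.inter_subset_left (gmeas t) (pos_iff_ne_zero.2 h0)))
  -- there is a large threshold with full measure
  have hk0 : ∃ k : ℕ, g (k : ℝ) = μ s := by
    have hUnion : (⋃ k : ℕ, s ∩ f ⁻¹' Set.Iic (k : ℝ)) = s := by
      ext x
      simp only [Set.mem_iUnion, Set.mem_inter_iff, Set.mem_preimage, Set.mem_Iic]
      constructor
      · rintro ⟨k, hk, -⟩; exact hk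
      · intro hx; obtain ⟨k, hk⟩ := exists_nat_ge (f x); exact ⟨k, hx, hk⟩
    have hmono2 : Monotone fun k : ℕ => s ∩ f ⁻¹' Set.Iic (k : ℝ) := fun k k' h =>
      Set.inter_subset_inter_right _ (Set.preimage_mono (Set.Iic_subset_Iic.2 (by exact_mod_cast h)))
    have hsup : (⨆ k : ℕ, g (k : ℝ)) = μ s := by
      rw [← hmono2.measure_iUnion, hUnion]
    by_contra hk
    push_neg at hk
    have hz : ∀ k : ℕ, g (k : ℝ) = 0 := fun k => (gdi _).resolve_right (hk k)
    rw [← hsup] at hpos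
    simp only [hz, iSup_const] at hpos
    exact lt_irrefl _ hpos
  obtain ⟨k₀, hk₀⟩ := hk0
  -- there is a small threshold with zero measure
  have hk1 : ∃ k : ℕ, g (-(k : ℝ)) = 0 := by
    have hInter : (⋂ k : ℕ, s ∩ f ⁻¹' Set.Iic (-(k : ℝ))) = ∅ := by
      ext x
      simp only [Set.mem_iInter, Set.mem_inter_iff, Set.mem_preimage, Set.mem_Iic,
        Set.mem_empty_iff_false, iff_false, not_forall]
      obtain ⟨k, hk⟩ := exists_nat_gt (-(f x))
      exact ⟨k, fun hcontra => absurd hcontra.2 (by linarith)⟩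
    have hanti : Antitone fun k : ℕ => s ∩ f ⁻¹' Set.Iic (-(k : ℝ)) := fun k k' h =>
      Set.inter_subset_inter_right _ (Set.preimage_mono (Set.Iic_subset_Iic.2
        (neg_le_neg (by exact_mod_cast h))))
    by_contra hk
    push_neg at hk
    have hall : ∀ k : ℕ, g (-(k : ℝ)) = μ s := fun k => (gdi _).resolve_left (hk k)
    have hmi := hanti.measure_iInter (fun k => (gmeas _).nullMeasurableSet)
      ⟨0, measure_ne_top μ _⟩
    rw [hInter, measure_empty] at hmi
    have : (⨅ k : ℕ, g (-(k : ℝ))) = μ s := by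
      calc (⨅ k : ℕ, g (-(k : ℝ))) = ⨅ _ : ℕ, μ s := iInf_congr hall
        _ = μ s := iInf_const
    rw [← hmi] at this
    exact hpos.ne this
  obtain ⟨k₁, hk₁⟩ := hk1
  set S0 : Set ℝ := {t | g t = 0} with hS0
  have hne : (-(k₁ : ℝ)) ∈ S0 := hk₁
  have hbdd : BddAbove S0 := by
    refine ⟨(k₀ : ℝ), fun t ht => ?_⟩
    by_contra hlt
    push_neg at hlt
    have h1 : μ s ≤ g t := hk₀ ▸ gmono hlt.le
    rw [Set.mem_setOf_eq] at ht
    rw [ht] at h1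
    exact hpos.not_ge h1
  set c := sSup S0 with hc
  have hlt0 : ∀ t, t < c → g t = 0 := by
    intro t ht
    obtain ⟨t', ht'S, htt'⟩ := exists_lt_of_lt_csSup ⟨_, hne⟩ ht
    exact le_antisymm (le_of_le_of_eq (gmono htt'.le) ht'S) (zero_le)
  have hgt0 : ∀ t, c < t → g t = μ s := by
    intro t ht
    refine (gdi t).resolve_left fun h0 => ?_
    exact absurd (le_csSup hbdd h0) (not_le.2 ht)
  -- measure of s ∩ f⁻¹(Iic c) is μ s
  have hIic : μ (s ∩ f ⁻¹' Set.Iic c) = μ s := by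
    have hInter2 : (⋂ k : ℕ, s ∩ f ⁻¹' Set.Iic (c + 1 / ((k : ℝ) + 1))) =
        s ∩ f ⁻¹' Set.Iic c := by
      ext x
      simp only [Set.mem_iInter, Set.mem_inter_iff, Set.mem_preimage, Set.mem_Iic]
      constructor
      · intro h
        refine ⟨(h 0).1, ?_⟩
        by_contra hgt
        push_neg at hgt
        obtain ⟨k, hk⟩ := exists_nat_one_div_lt (sub_pos.2 hgt)
        have := (h k).2
        linarith
      · intro h k
        have hkpos : (0:ℝ) < 1 / ((k : ℝ) + 1) := by positivity
        exact ⟨h.1, by linarith [h.2]⟩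
    have hanti2 : Antitone fun k : ℕ => s ∩ f ⁻¹' Set.Iic (c + 1 / ((k : ℝ) + 1)) := by
      intro k k' h
      apply Set.inter_subset_inter_right
      apply Set.preimage_mono
      apply Set.Iic_subset_Iic.2
      have h1 : (1:ℝ) / ((k' : ℝ) + 1) ≤ 1 / ((k : ℝ) + 1) :=
        one_div_le_one_div_of_le (by positivity) (by exact_mod_cast add_le_add_left (Nat.cast_le.2 h) 1)
      linarith
    have hmi := hanti2.measure_iInter (fun k => (gmeas _).nullMeasurableSet)
      ⟨0, measure_ne_top μ _⟩
    rw [hInter2] at hmi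
    rw [hmi]
    have hall : ∀ k : ℕ, μ (s ∩ f ⁻¹' Set.Iic (c + 1 / ((k : ℝ) + 1))) = μ s := fun k =>
      hgt0 _ (lt_add_of_pos_right c (by positivity))
    calc (⨅ k : ℕ, μ (s ∩ f ⁻¹' Set.Iic (c + 1 / ((k : ℝ) + 1))))
        = ⨅ _ : ℕ, μ s := iInf_congr hall
      _ = μ s := iInf_const
  -- measure of s ∩ f⁻¹(Iio c) is 0
  have hIio : μ (s ∩ f ⁻¹' Set.Iio c) = 0 := by
    have hUnion2 : (⋃ k : ℕ, s ∩ f ⁻¹' Set.Iic (c - 1 / ((k : ℝ) + 1))) =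
        s ∩ f ⁻¹' Set.Iio c := by
      ext x
      simp only [Set.mem_iUnion, Set.mem_inter_iff, Set.mem_preimage, Set.mem_Iic, Set.mem_Iio]
      constructor
      · rintro ⟨k, hk1, hk2⟩
        have : (0:ℝ) < 1 / ((k : ℝ) + 1) := by positivity
        exact ⟨hk1, by linarith⟩
      · rintro ⟨hx, hlt⟩
        obtain ⟨k, hk⟩ := exists_nat_one_div_lt (sub_pos.2 hlt)
        exact ⟨k, hx, by linarith⟩
    have hmono3 : Monotone fun k : ℕ => s ∩ f ⁻¹' Set.Iic (c - 1 / ((k : ℝ) + 1)) := by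
      intro k k' h
      apply Set.inter_subset_inter_right
      apply Set.preimage_mono
      apply Set.Iic_subset_Iic.2
      have h1 : (1:ℝ) / ((k' : ℝ) + 1) ≤ 1 / ((k : ℝ) + 1) :=
        one_div_le_one_div_of_le (by positivity) (by exact_mod_cast add_le_add_left (Nat.cast_le.2 h) 1)
      linarith
    have hmu := hmono3.measure_iUnion (μ := μ)
    rw [hUnion2] at hmu
    rw [hmu]
    have hall : ∀ k : ℕ, μ (s ∩ f ⁻¹' Set.Iic (c - 1 / ((k : ℝ) + 1))) = 0 := fun k =>
      hlt0 _ (sub_lt_self c (by positivity))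
    simp only [hall, iSup_const]
  have hsplit : s ∩ f ⁻¹' Set.Iic c ⊆ (s ∩ f ⁻¹' Set.Iio c) ∪ f ⁻¹' {c} := by
    rintro x ⟨hxs, hxc⟩
    rcases lt_or_eq_of_le (show f x ≤ c from hxc) with h | h
    · exact Or.inl ⟨hxs, h⟩
    · exact Or.inr h
  have hsing : μ (f ⁻¹' {c}) = 0 := by
    apply Set.Subsingleton.measure_zero
    intro x hx y hy
    apply hf.injective
    rw [Set.mem_preimage, Set.mem_singleton_iff] at hx hy
    rw [hx, hy]
  have hfin : μ s ≤ 0 := by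
    calc μ s = μ (s ∩ f ⁻¹' Set.Iic c) := hIic.symm
      _ ≤ μ (s ∩ f ⁻¹' Set.Iio c) + μ (f ⁻¹' {c}) :=
          (measure_mono hsplit).trans (measure_union_le _ _)
      _ = 0 := by rw [hIio, hsing, add_zero]
  exact hpos.not_ge hfin


lemma ro17_mem_biUnion {α ι : Type*} {J : Finset ι} {f : ι → Set α} {i : ι} (hi : i ∈ J) {x : α}
    (hx : x ∈ f i) : x ∈ ⋃ j ∈ J, f j := Set.mem_iUnion₂.2 ⟨i, hi, hx⟩

lemma ro17_subset_biUnion {α ι : Type*} {J : Finset ι} {f : ι → Set α} {i : ι} (hi : i ∈ J) :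
    f i ⊆ ⋃ j ∈ J, f j := fun _ hx => ro17_mem_biUnion hi hx

lemma ro17_measure_biUnion_le_of_ae {μ : Measure X} (J : Finset ℕ) (f : ℕ → Set X) (t : Set X)
    (h : ∀ i ∈ J, ∀ᵐ y ∂μ, y ∈ f i → y ∈ t) : μ (⋃ i ∈ J, f i) ≤ μ t := by
  have h0 : μ ((⋃ i ∈ J, f i) \ t) = 0 := by
    apply measure_mono_null (t := ⋃ i ∈ J, (f i \ t))
    · intro x hx
      obtain ⟨hx1, hx2⟩ := hx
      simp only [Set.mem_iUnion] at hx1 ⊢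
      obtain ⟨i, hi, hfi⟩ := hx1
      exact ⟨i, hi, hfi, hx2⟩
    · refine (measure_biUnion_null_iff J.countable_toSet).2 fun i hi => ?_
      apply measure_mono_null (t := {y | ¬ (y ∈ f i → y ∈ t)})
      · intro y hy
        simp only [Set.mem_setOf_eq, Classical.not_imp]
        exact ⟨hy.1, hy.2⟩
      · exact ae_iff.1 (h i hi)
  calc μ (⋃ i ∈ J, f i) ≤ μ ((⋃ i ∈ J, f i) ∩ t) + μ ((⋃ i ∈ J, f i) \ t) :=
        measure_le_inter_add_diff μ _ _
    _ ≤ μ t + 0 := add_le_add (measure_mono Set.inter_subset_right) h0.le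
    _ = μ t := add_zero _

end Auxiliary

section RankOneAux

open MeasureTheory Set Function Filter Topology

variable {X : Type*} [MeasurableSpace X] {μ : MeasureTheory.Measure X}

lemma ro17_h_mono (R : RankOne X μ) : Monotone R.h := by
  apply monotone_nat_of_le_succ
  intro m
  rw [R.h_succ m]
  calc R.h m = 1 * R.h m := (one_mul _).symm
    _ ≤ R.r m * R.h m := Nat.mul_le_mul_right _ (R.r_gt_one m).le
    _ ≤ _ := Nat.le_add_right _ _

lemma ro17_h_succ4 (R : RankOne X μ) (hr : ∀ n, R.r n = 4) (hs1 : ∀ n, R.s n 1 = 0)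
    (hs2 : ∀ n, R.s n 2 = 2 ^ (n + 1)) (hs3 : ∀ n, R.s n 3 = 0) (hs4 : ∀ n, R.s n 4 = 0)
    (m : ℕ) : R.h (m + 1) = 4 * R.h m + 2 ^ (m + 1) := by
  have hIcc : Finset.Icc 1 (R.r m) = ({1, 2, 3, 4} : Finset ℕ) := by rw [hr m]; decide
  rw [R.h_succ m, hIcc, hr m]
  have hsum : ∑ i ∈ ({1, 2, 3, 4} : Finset ℕ), R.s m i = 2 ^ (m + 1) := by
    rw [Finset.sum_insert (by decide), Finset.sum_insert (by decide),
      Finset.sum_insert (by decide), Finset.sum_singleton, hs1 m, hs2 m, hs3 m, hs4 m]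
    omega
  rw [hsum]

lemma ro17_mem_Icc (R : RankOne X μ) (hr : ∀ n, R.r n = 4) (m k : ℕ)
    (hk1 : 1 ≤ k) (hk4 : k ≤ 4) : k ∈ Finset.Icc 1 (R.r m) := by
  rw [hr m]; exact Finset.mem_Icc.2 ⟨hk1, hk4⟩

lemma ro17_colmap1 (R : RankOne X μ) (hr : ∀ n, R.r n = 4) (hs1 : ∀ n, R.s n 1 = 0)
    (m : ℕ) : R.T^[R.h m] '' R.Bp m 1 = R.Bp m 2 :=
  R.top_to_next m 1 le_rfl (by rw [hr m]; norm_num) (hs1 m)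

lemma ro17_colmap3 (R : RankOne X μ) (hr : ∀ n, R.r n = 4) (hs3 : ∀ n, R.s n 3 = 0)
    (m : ℕ) : R.T^[R.h m] '' R.Bp m 3 = R.Bp m 4 :=
  R.top_to_next m 3 (by norm_num) (by rw [hr m]; norm_num) (hs3 m)

lemma ro17_colmap2 (R : RankOne X μ) (hr : ∀ n, R.r n = 4)
    (hs2 : ∀ n, R.s n 2 = 2 ^ (n + 1)) (m : ℕ) :
    R.T^[R.h m + 2 ^ (m + 1)] '' R.Bp m 2 = R.Bp m 3 := by
  have hmem2 : (2 : ℕ) ∈ Finset.Icc 1 (R.r m) := ro17_mem_Icc R hr m 2 (by norm_num) (by norm_num)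
  have h2ne : R.s m 2 ≠ 0 := by rw [hs2 m]; exact (Nat.two_pow_pos _).ne'
  have e0 : R.T^[R.h m] '' R.Bp m 2 = R.C m 2 1 := R.top_to_spacer m 2 hmem2 h2ne
  have step : ∀ j : ℕ, j + 1 ≤ 2 ^ (m + 1) → R.T^[j] '' R.C m 2 1 = R.C m 2 (j + 1) := by
    intro j
    induction j with
    | zero => intro _; simp
    | succ j ih =>
      intro hj
      have e1 := ih (by omega)
      rw [Function.iterate_succ', Set.image_comp, e1]
      exact R.spacer_step m 2 hmem2 (j + 1) (by omega) (by rw [hs2 m]; omega)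
  have elast : R.T '' R.C m 2 (2 ^ (m + 1)) = R.Bp m 3 := by
    have h := R.spacer_to_next m 2 (by norm_num) (by rw [hr m]; norm_num) h2ne
    rwa [hs2 m] at h
  have hone : (1 : ℕ) ≤ 2 ^ (m + 1) := Nat.one_le_two_pow
  have hsplit : R.h m + 2 ^ (m + 1) = 1 + (2 ^ (m + 1) - 1) + R.h m := by omega
  rw [hsplit, ro17_image_iterate_add, ro17_image_iterate_add, e0,
    step (2 ^ (m + 1) - 1) (by omega), Nat.sub_add_cancel hone]
  simpa using elast

lemma ro17_off2 (R : RankOne X μ) (hr : ∀ n, R.r n = 4) (hs1 : ∀ n, R.s n 1 = 0) (m : ℕ) :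
    R.Bp m 2 = R.T^[R.h m] '' R.B (m + 1) := by
  rw [R.base_succ m]; exact (ro17_colmap1 R hr hs1 m).symm

lemma ro17_off3 (R : RankOne X μ) (hr : ∀ n, R.r n = 4) (hs1 : ∀ n, R.s n 1 = 0)
    (hs2 : ∀ n, R.s n 2 = 2 ^ (n + 1)) (m : ℕ) :
    R.Bp m 3 = R.T^[2 * R.h m + 2 ^ (m + 1)] '' R.B (m + 1) := by
  have harith : 2 * R.h m + 2 ^ (m + 1) = (R.h m + 2 ^ (m + 1)) + R.h m := by ring
  rw [harith, ro17_image_iterate_add, ← ro17_off2 R hr hs1 m, ro17_colmap2 R hr hs2 m]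

lemma ro17_off4 (R : RankOne X μ) (hr : ∀ n, R.r n = 4) (hs1 : ∀ n, R.s n 1 = 0)
    (hs2 : ∀ n, R.s n 2 = 2 ^ (n + 1)) (hs3 : ∀ n, R.s n 3 = 0) (m : ℕ) :
    R.Bp m 4 = R.T^[3 * R.h m + 2 ^ (m + 1)] '' R.B (m + 1) := by
  have harith : 3 * R.h m + 2 ^ (m + 1) = R.h m + (2 * R.h m + 2 ^ (m + 1)) := by ring
  rw [harith, ro17_image_iterate_add, ← ro17_off3 R hr hs1 hs2 m, ro17_colmap3 R hr hs3 m]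

lemma ro17_Bp_subset (R : RankOne X μ) (m k : ℕ) (hk : k ∈ Finset.Icc 1 (R.r m)) :
    R.Bp m k ⊆ R.B m := by
  rw [← R.Bp_union m]
  exact Set.subset_biUnion_of_mem hk

lemma ro17_Bdecomp (R : RankOne X μ) (hr : ∀ n, R.r n = 4) (m : ℕ) :
    R.B m = R.Bp m 1 ∪ (R.Bp m 2 ∪ (R.Bp m 3 ∪ R.Bp m 4)) := by
  rw [← R.Bp_union m, hr m]
  ext x
  simp only [Set.mem_iUnion, Finset.mem_Icc, Set.mem_union]
  constructor
  · rintro ⟨i, ⟨h1, h4⟩, hx⟩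
    interval_cases i <;> tauto
  · rintro (h | h | h | h)
    exacts [⟨1, ⟨le_rfl, by norm_num⟩, h⟩, ⟨2, ⟨by norm_num, by norm_num⟩, h⟩,
      ⟨3, ⟨by norm_num, by norm_num⟩, h⟩, ⟨4, ⟨by norm_num, le_rfl⟩, h⟩]

lemma ro17_Bp_meas_eq (R : RankOne X μ) (hr : ∀ n, R.r n = 4) (m k : ℕ)
    (hk1 : 1 ≤ k) (hk4 : k ≤ 4) : μ (R.Bp m k) = μ (R.B m) / 4 := by
  have h := R.Bp_measure m k (ro17_mem_Icc R hr m k hk1 hk4)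
  rw [hr m] at h
  simpa using h

lemma ro17_base_meas_succ (R : RankOne X μ) (hr : ∀ n, R.r n = 4) (m : ℕ) :
    μ (R.B (m + 1)) = μ (R.B m) / 4 := by
  rw [R.base_succ m]
  exact ro17_Bp_meas_eq R hr m 1 le_rfl (by norm_num)

lemma ro17_base_meas_succ' (R : RankOne X μ) (hr : ∀ n, R.r n = 4) (m : ℕ) :
    μ (R.B m) = 4 * μ (R.B (m + 1)) := by
  rw [ro17_base_meas_succ R hr m]
  exact (ENNReal.mul_div_cancel' (by norm_num) (by norm_num)).symm

lemma ro17_pinch (R : RankOne X μ) (S V : Set X) (N : ℕ) (hEq : R.T^[N] '' S = V)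
    {j : ℕ} (hj : j ≤ N) : μ (R.T^[j] '' S) ≤ μ V := by
  have hV : V = R.T^[N - j] '' (R.T^[j] '' S) := by
    rw [← ro17_image_iterate_add, Nat.sub_add_cancel hj, hEq]
  rw [hV]
  exact ro17_le_image (R.mpT.iterate _) _

lemma ro17_propagate (R : RankOne X μ) (hr : ∀ n, R.r n = 4) (hs1 : ∀ n, R.s n 1 = 0)
    (hs2 : ∀ n, R.s n 2 = 2 ^ (n + 1)) (hs3 : ∀ n, R.s n 3 = 0) (hs4 : ∀ n, R.s n 4 = 0)
    (m d : ℕ) (J : Finset ℕ) (hJ : ∀ j ∈ J, j < R.h m) :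
    ∃ J' : Finset ℕ, (∀ j ∈ J', j < R.h (m + d)) ∧
      (⋃ j ∈ J', R.T^[j] '' R.B (m + d)) = ⋃ j ∈ J, R.T^[j] '' R.B m := by
  induction d with
  | zero => exact ⟨J, hJ, rfl⟩
  | succ d ih =>
    obtain ⟨J', hb, he⟩ := ih
    refine ⟨J'.biUnion fun j =>
      {j, j + R.h (m + d), j + (2 * R.h (m + d) + 2 ^ (m + d + 1)),
        j + (3 * R.h (m + d) + 2 ^ (m + d + 1))}, ?_, ?_⟩
    · intro j hj
      rw [Finset.mem_biUnion] at hj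
      obtain ⟨i, hiJ, hmem⟩ := hj
      have hib := hb i hiJ
      have h4 := ro17_h_succ4 R hr hs1 hs2 hs3 hs4 (m + d)
      simp only [Finset.mem_insert, Finset.mem_singleton] at hmem
      have hre : R.h (m + (d + 1)) = R.h ((m + d) + 1) := rfl
      have hbpos : 0 < 2 ^ (m + d) := Nat.two_pow_pos _
      rcases hmem with h | h | h | h <;> (subst h; omega)
    · rw [← he]
      rw [Finset.set_biUnion_biUnion]
      refine Set.iUnion₂_congr fun j hj => ?_
      have hre : m + (d + 1) = (m + d) + 1 := rfl
      rw [hre]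
      have e1 : R.T^[j] '' R.Bp (m + d) 1 = R.T^[j] '' R.B (m + d + 1) := by
        rw [R.base_succ (m + d)]
      have e2 : R.T^[j] '' R.Bp (m + d) 2 = R.T^[j + R.h (m + d)] '' R.B (m + d + 1) := by
        rw [ro17_off2 R hr hs1 (m + d), ← ro17_image_iterate_add]
      have e3 : R.T^[j] '' R.Bp (m + d) 3 =
          R.T^[j + (2 * R.h (m + d) + 2 ^ (m + d + 1))] '' R.B (m + d + 1) := by
        rw [ro17_off3 R hr hs1 hs2 (m + d), ← ro17_image_iterate_add]
      have e4 : R.T^[j] '' R.Bp (m + d) 4 =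
          R.T^[j + (3 * R.h (m + d) + 2 ^ (m + d + 1))] '' R.B (m + d + 1) := by
        rw [ro17_off4 R hr hs1 hs2 hs3 (m + d), ← ro17_image_iterate_add]
      calc (⋃ x ∈ ({j, j + R.h (m + d), j + (2 * R.h (m + d) + 2 ^ (m + d + 1)),
              j + (3 * R.h (m + d) + 2 ^ (m + d + 1))} : Finset ℕ),
            R.T^[x] '' R.B (m + d + 1))
          = (R.T^[j] '' R.B (m + d + 1)) ∪ ((R.T^[j + R.h (m + d)] '' R.B (m + d + 1)) ∪
            ((R.T^[j + (2 * R.h (m + d) + 2 ^ (m + d + 1))] '' R.B (m + d + 1)) ∪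
             (R.T^[j + (3 * R.h (m + d) + 2 ^ (m + d + 1))] '' R.B (m + d + 1)))) := by
            simp [Finset.set_biUnion_insert, Set.union_assoc]
        _ = R.T^[j] '' R.B (m + d) := by
            rw [← e1, ← e2, ← e3, ← e4, ro17_Bdecomp R hr (m + d), Set.image_union,
              Set.image_union, Set.image_union]
end RankOneAux

section LevelBound

open MeasureTheory Set Function Filter Topology

variable {X : Type*} [MeasurableSpace X] [StandardBorelSpace X]
  {μ : MeasureTheory.Measure X} [IsProbabilityMeasure μ] [NullSingletonClass μ]

/-- The key regularity fact: each level of the stage-`n` tower has outer measure at most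
`μ (B n)`. -/
lemma ro17_level_le (R : RankOne X μ) (hr : ∀ n, R.r n = 4) (hs1 : ∀ n, R.s n 1 = 0)
    (hs2 : ∀ n, R.s n 2 = 2 ^ (n + 1)) (hs3 : ∀ n, R.s n 3 = 0) (hs4 : ∀ n, R.s n 4 = 0)
    (n : ℕ) {i : ℕ} (hi : i < R.h n) :
    μ (R.T^[i] '' R.B n) ≤ μ (R.B n) := by
  set Sr : ℕ → Set X := fun r => R.T^[(R.h (n + r) - R.h n) + i] '' R.B (n + r) with hSrdef
  have hc : ∀ r, (R.h (n + r) - R.h n) + R.h n = R.h (n + r) := fun r =>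
    Nat.sub_add_cancel (ro17_h_mono R (Nat.le_add_right n r))
  have hSr0 : Sr 0 = R.T^[i] '' R.B n := by simp [hSrdef, Nat.sub_self]
  have hidx : ∀ r, (R.h (n + r) - R.h n) + i < R.h (n + r) := fun r => by
    have := hc r; omega
  have hcol4eq : ∀ r, Sr (r + 1) = R.T^[(R.h (n + r) - R.h n) + i] '' R.Bp (n + r) 4 := by
    intro r
    have hgoal : R.h (n + (r + 1)) - R.h n + i =
        ((R.h (n + r) - R.h n) + i) + (3 * R.h (n + r) + 2 ^ (n + r + 1)) := by
      have h4 := ro17_h_succ4 R hr hs1 hs2 hs3 hs4 (n + r)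
      have h1 := hc r
      have h2 := hc (r + 1)
      have hre : R.h (n + (r + 1)) = R.h ((n + r) + 1) := rfl
      omega
    show R.T^[R.h (n + (r + 1)) - R.h n + i] '' R.B (n + (r + 1)) = _
    rw [ro17_off4 R hr hs1 hs2 hs3 (n + r), ← ro17_image_iterate_add, hgoal]
    rfl
  have hstep_sub : ∀ r, Sr (r + 1) ⊆ Sr r := by
    intro r
    rw [hcol4eq r]
    exact Set.image_mono (ro17_Bp_subset R (n + r) 4
      (ro17_mem_Icc R hr (n + r) 4 (by norm_num) le_rfl))
  have hanti : Antitone Sr := antitone_nat_of_succ_le hstep_sub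
  have hkey : ∀ r, μ (Sr r) ≤ 3 * (μ (R.B (n + r)) / 4) + μ (Sr (r + 1)) := by
    intro r
    have hcr := hcol4eq r
    set j := (R.h (n + r) - R.h n) + i with hjdef
    have hsub : Sr r ⊆ (R.T^[j] '' R.Bp (n + r) 1) ∪ ((R.T^[j] '' R.Bp (n + r) 2) ∪
        ((R.T^[j] '' R.Bp (n + r) 3) ∪ Sr (r + 1))) := by
      rw [hcr]
      have hshow : Sr r = R.T^[j] '' R.B (n + r) := rfl
      rw [hshow, ro17_Bdecomp R hr (n + r), Set.image_union, Set.image_union, Set.image_union]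
    have hjle : j ≤ R.h (n + r) := (hidx r).le
    have p1 : μ (R.T^[j] '' R.Bp (n + r) 1) ≤ μ (R.B (n + r)) / 4 := by
      refine (ro17_pinch R _ _ _ (ro17_colmap1 R hr hs1 (n + r)) hjle).trans_eq ?_
      exact ro17_Bp_meas_eq R hr (n + r) 2 (by norm_num) (by norm_num)
    have p2 : μ (R.T^[j] '' R.Bp (n + r) 2) ≤ μ (R.B (n + r)) / 4 := by
      refine (ro17_pinch R _ _ _ (ro17_colmap2 R hr hs2 (n + r))
        (hjle.trans (Nat.le_add_right _ _))).trans_eq ?_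
      exact ro17_Bp_meas_eq R hr (n + r) 3 (by norm_num) (by norm_num)
    have p3 : μ (R.T^[j] '' R.Bp (n + r) 3) ≤ μ (R.B (n + r)) / 4 := by
      refine (ro17_pinch R _ _ _ (ro17_colmap3 R hr hs3 (n + r)) hjle).trans_eq ?_
      exact ro17_Bp_meas_eq R hr (n + r) 4 (by norm_num) le_rfl
    calc μ (Sr r) ≤ μ (R.T^[j] '' R.Bp (n + r) 1) + (μ (R.T^[j] '' R.Bp (n + r) 2) +
          (μ (R.T^[j] '' R.Bp (n + r) 3) + μ (Sr (r + 1)))) := by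
          refine (measure_mono hsub).trans ?_
          refine (measure_union_le _ _).trans ?_
          refine add_le_add_right ?_ _
          refine (measure_union_le _ _).trans ?_
          exact add_le_add_right (measure_union_le _ _) _
      _ ≤ μ (R.B (n + r)) / 4 + (μ (R.B (n + r)) / 4 + (μ (R.B (n + r)) / 4 + μ (Sr (r + 1)))) := by
          exact add_le_add p1 (add_le_add p2 (add_le_add p3 le_rfl))
      _ = 3 * (μ (R.B (n + r)) / 4) + μ (Sr (r + 1)) := by ring
  have htel : ∀ r, μ (Sr 0) + μ (R.B (n + r)) ≤ μ (R.B n) + μ (Sr r) := by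
    intro r
    induction r with
    | zero => rw [Nat.add_zero, add_comm]
    | succ r ih =>
      have hk := hkey r
      have hb1 : μ (R.B (n + r)) / 4 = μ (R.B (n + r + 1)) :=
        (ro17_base_meas_succ R hr (n + r)).symm
      rw [hb1] at hk
      have hb4 : μ (R.B (n + r)) = 4 * μ (R.B (n + r + 1)) := ro17_base_meas_succ' R hr (n + r)
      have h3top : 3 * μ (R.B (n + r + 1)) ≠ ⊤ :=
        ENNReal.mul_ne_top (by norm_num) (measure_ne_top μ _)
      have hre : n + (r + 1) = n + r + 1 := rfl
      rw [hre]
      have step2 : μ (Sr 0) + μ (R.B (n + r + 1)) + 3 * μ (R.B (n + r + 1)) ≤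
          (μ (R.B n) + μ (Sr (r + 1))) + 3 * μ (R.B (n + r + 1)) := by
        calc μ (Sr 0) + μ (R.B (n + r + 1)) + 3 * μ (R.B (n + r + 1))
            = μ (Sr 0) + μ (R.B (n + r)) := by rw [hb4]; ring
          _ ≤ μ (R.B n) + μ (Sr r) := ih
          _ ≤ μ (R.B n) + (3 * μ (R.B (n + r + 1)) + μ (Sr (r + 1))) := add_le_add_right hk _
          _ = (μ (R.B n) + μ (Sr (r + 1))) + 3 * μ (R.B (n + r + 1)) := by ring
      exact (ENNReal.add_le_add_iff_right h3top).1 step2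
  -- the hulls of the tail sets
  set Hp : ℕ → Set X := fun r => ⋂ r' ∈ Finset.range (r + 1), toMeasurable μ (Sr r') with hHpdef
  have hHpm : ∀ r, MeasurableSet (Hp r) := fun r =>
    Finset.measurableSet_biInter _ fun r' _ => measurableSet_toMeasurable μ _
  have hSrHp : ∀ r, Sr r ⊆ Hp r := by
    intro r
    refine Set.subset_iInter₂ fun r' hr' => ?_
    rw [Finset.mem_range] at hr'
    exact (hanti (by omega : r' ≤ r)).trans (subset_toMeasurable μ _)
  have hHpsub : ∀ r, Hp r ⊆ toMeasurable μ (Sr r) := fun r x hx =>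
    (Set.mem_iInter₂.1 hx) r (Finset.self_mem_range_succ r)
  have hHpμ : ∀ r, μ (Hp r) = μ (Sr r) := fun r =>
    le_antisymm ((measure_mono (hHpsub r)).trans_eq (measure_toMeasurable _))
      (measure_mono (hSrHp r))
  have hHpanti : Antitone Hp := by
    intro r r' h x hx
    refine Set.mem_iInter₂.2 fun q hq => ?_
    refine (Set.mem_iInter₂.1 hx) q ?_
    rw [Finset.mem_range] at hq ⊢
    omega
  set Hc : Set X := ⋂ r, toMeasurable μ (Sr r) with hHcdef
  have hHcm : MeasurableSet Hc := MeasurableSet.iInter fun r => measurableSet_toMeasurable μ _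
  have hHceq : (⋂ r, Hp r) = Hc := by
    apply Set.Subset.antisymm
    · exact Set.subset_iInter fun q => (Set.iInter_subset _ q).trans (hHpsub q)
    · exact Set.subset_iInter fun q => Set.subset_iInter₂ fun r' _ =>
        Set.iInter_subset (fun r => toMeasurable μ (Sr r)) r'
  have htend : Tendsto (fun r => μ (Sr r)) atTop (𝓝 (μ Hc)) := by
    have h := tendsto_measure_iInter_atTop (μ := μ)
      (fun r => (hHpm r).nullMeasurableSet) hHpanti ⟨0, measure_ne_top μ _⟩
    rw [hHceq] at h
    have hfe : (μ ∘ Hp) = fun r => μ (Sr r) := funext fun r => hHpμ r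
    rwa [hfe] at h
  have htrace : ∀ (M : Set X), MeasurableSet M → ∀ r, μ (Hc ∩ M) ≤ μ (Sr r ∩ M) := by
    intro M hM r
    calc μ (Hc ∩ M) ≤ μ (toMeasurable μ (Sr r) ∩ M) :=
          measure_mono (Set.inter_subset_inter_left M
            (Set.iInter_subset (fun q => toMeasurable μ (Sr q)) r))
      _ = μ (Sr r ∩ M) := MeasureTheory.Measure.measure_toMeasurable_inter hM (measure_ne_top μ _)
  -- the limit hull is null
  have hHc0 : μ Hc = 0 := by
    by_contra h0
    have hcpos : 0 < μ Hc := pos_iff_ne_zero.2 h0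
    obtain ⟨t, hts, htm, ht0, htlt⟩ := ro17_exists_split μ hHcm hcpos
    set ε' := min (μ t) (μ Hc - μ t) with hε'def
    have hε'pos : 0 < ε' := lt_min ht0 (tsub_pos_of_lt htlt)
    obtain ⟨m', J', hJ'lt, happx'⟩ := R.levels_dense t htm ε' hε'pos
    obtain ⟨J'', hJ''lt0, hUeq0⟩ := ro17_propagate R hr hs1 hs2 hs3 hs4 m' n J' hJ'lt
    have hstage : m' + n = n + m' := Nat.add_comm m' n
    have hJ''lt : ∀ j ∈ J'', j < R.h (n + m') := by rw [← hstage]; exact hJ''lt0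
    have hUeq : (⋃ j ∈ J'', R.T^[j] '' R.B (n + m')) = ⋃ j ∈ J', R.T^[j] '' R.B m' := by
      rw [← hstage]; exact hUeq0
    set p := (R.h (n + m') - R.h n) + i with hpdef
    have hpM : p < R.h (n + m') := hidx m'
    have hSrp : Sr m' = R.T^[p] '' R.B (n + m') := rfl
    by_cases hpJ : p ∈ J''
    · -- the carrier level is inside the approximating union
      have hsub2 : Sr m' ⊆ ⋃ j ∈ J', R.T^[j] '' R.B m' := by
        rw [← hUeq, hSrp]
        exact ro17_subset_biUnion (f := fun j => R.T^[j] '' R.B (n + m')) hpJ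
      have hd1 : μ Hc - μ t ≤ μ ((⋃ j ∈ J', R.T^[j] '' R.B m') \ t) := by
        have h1 : μ (Hc ∩ tᶜ) = μ Hc - μ t := by
          rw [← Set.diff_eq]
          rw [measure_diff hts htm.nullMeasurableSet (measure_ne_top μ _)]
        calc μ Hc - μ t = μ (Hc ∩ tᶜ) := h1.symm
          _ ≤ μ (Sr m' ∩ tᶜ) := htrace _ htm.compl m'
          _ ≤ μ ((⋃ j ∈ J', R.T^[j] '' R.B m') \ t) := by
              refine measure_mono fun x hx => ?_
              exact ⟨hsub2 hx.1, hx.2⟩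
      have hd2 : μ ((⋃ j ∈ J', R.T^[j] '' R.B m') \ t) ≤
          μ (symmDiff t (⋃ j ∈ J', R.T^[j] '' R.B m')) := by
        refine measure_mono fun x hx => ?_
        exact Set.mem_symmDiff.2 (Or.inr ⟨hx.1, hx.2⟩)
      have : ε' < ε' :=
        lt_of_le_of_lt ((min_le_right _ _).trans (hd1.trans hd2)) happx'
      exact lt_irrefl _ this
    · -- the carrier level is disjoint from the approximating union
      have hint : ∀ x, x ∈ (⋃ j ∈ J'', R.T^[j] '' R.B (n + m')) → x ∉ Sr m' := by
        intro x hx hxS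
        simp only [Set.mem_iUnion] at hx
        obtain ⟨j, hjJ, hxj⟩ := hx
        have hjp : j ≠ p := fun h => hpJ (h ▸ hjJ)
        have hjlt := hJ''lt j hjJ
        rcases lt_or_gt_of_ne hjp with h | h
        · exact Set.disjoint_left.1 (R.levels_disjoint (n + m') j p h hpM) hxj hxS
        · exact Set.disjoint_left.1 (R.levels_disjoint (n + m') p j h hjlt) hxS hxj
      have hd1 : μ t ≤ μ (t \ ⋃ j ∈ J', R.T^[j] '' R.B m') := by
        have h2 : μ (Hc ∩ t) = μ t := by
          rw [Set.inter_eq_self_of_subset_right hts]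
        calc μ t = μ (Hc ∩ t) := h2.symm
          _ ≤ μ (Sr m' ∩ t) := htrace t htm m'
          _ ≤ μ (t \ ⋃ j ∈ J', R.T^[j] '' R.B m') := by
              refine measure_mono fun x hx => ?_
              refine ⟨hx.2, fun hxU => ?_⟩
              rw [← hUeq] at hxU
              exact hint x hxU hx.1
      have hd2 : μ (t \ ⋃ j ∈ J', R.T^[j] '' R.B m') ≤
          μ (symmDiff t (⋃ j ∈ J', R.T^[j] '' R.B m')) := by
        refine measure_mono fun x hx => ?_
        exact Set.mem_symmDiff.2 (Or.inl ⟨hx.1, hx.2⟩)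
      have : ε' < ε' :=
        lt_of_le_of_lt ((min_le_left _ _).trans (hd1.trans hd2)) happx'
      exact lt_irrefl _ this
  -- conclude
  have hle : ∀ r, μ (Sr 0) ≤ μ (R.B n) + μ (Sr r) := fun r =>
    le_trans le_self_add (htel r)
  have hlim : Tendsto (fun r => μ (R.B n) + μ (Sr r)) atTop (𝓝 (μ (R.B n) + 0)) := by
    rw [hHc0] at htend
    exact htend.const_add _
  have hfin := ge_of_tendsto' hlim hle
  rw [add_zero] at hfin
  rw [← hSr0]
  exact hfin

end LevelBound

open MeasureTheory Set Function Filter Topology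

theorem statement17 {X : Type*} [MeasurableSpace X] [StandardBorelSpace X]
    (μ : MeasureTheory.Measure X) [MeasureTheory.IsProbabilityMeasure μ]
    [MeasureTheory.NullSingletonClass μ]
    (R : RankOne X μ)
    (hr : ∀ n, R.r n = 4)
    (hs1 : ∀ n, R.s n 1 = 0) (hs2 : ∀ n, R.s n 2 = 2 ^ (n + 1))
    (hs3 : ∀ n, R.s n 3 = 0) (hs4 : ∀ n, R.s n 4 = 0) :
    ∀ a : ℕ, Odd a → 3 ≤ a → ¬ FactorsOntoCyclic μ R.T a := by
  intro a haOdd ha3 hcon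
  obtain ⟨φ, hφm, hφlt, hφfib, hφT⟩ := hcon
  have ha0 : 0 < a := by omega
  set A : Set X := φ ⁻¹' {0} with hAdef
  have hAm : MeasurableSet A := hφm (MeasurableSet.singleton 0)
  have hμA : μ A = 1 / (a : ℝ≥0∞) := hφfib 0 ha0
  set η : ℝ≥0∞ := 1 / (a : ℝ≥0∞) with hηdef
  have haE0 : (a : ℝ≥0∞) ≠ 0 := Nat.cast_ne_zero.2 (by omega)
  have haET : (a : ℝ≥0∞) ≠ ⊤ := ENNReal.natCast_ne_top a
  have hη0 : η ≠ 0 := by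
    rw [hηdef, one_div]
    exact ENNReal.inv_ne_zero.2 haET
  have hηT : η ≠ ⊤ := by
    rw [hηdef, one_div]
    exact ENNReal.inv_ne_top.2 haE0
  set ε : ℝ≥0∞ := η / 10 with hεdef
  have hε0 : 0 < ε := ENNReal.div_pos hη0 (by norm_num)
  have hη10 : 10 * ε = η := by
    rw [hεdef]
    exact ENNReal.mul_div_cancel' (by norm_num) (by norm_num)
  have hεT : ε ≠ ⊤ := by
    intro h
    apply hηT
    rw [← hη10, h]
    simp
  have h910 : ¬ ((10 : ℝ≥0∞) ≤ 9) := by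
    rw [show (10 : ℝ≥0∞) = ((10 : ℕ) : ℝ≥0∞) by norm_num,
      show (9 : ℝ≥0∞) = ((9 : ℕ) : ℝ≥0∞) by norm_num, Nat.cast_le]
    norm_num
  obtain ⟨n, J, hJlt, happx⟩ := R.levels_dense A hAm ε hε0
  set U : Set X := ⋃ i ∈ J, R.T^[i] '' R.B n with hUdef
  -- the iterated factor identity
  have hφiter : ∀ N : ℕ, ∀ᵐ x ∂μ, φ (R.T^[N] x) = (φ x + N) % a := by
    intro N
    induction N with
    | zero =>
      filter_upwards [hφlt] with x hx
      simpa using (Nat.mod_eq_of_lt hx).symm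
    | succ N ih =>
      filter_upwards [ro17_ae_comp R.mpT ih, hφT] with x h1 h2
      rw [Function.iterate_succ_apply, h1, h2, Nat.mod_add_mod]
      congr 1
      omega
  have hzero : ∀ N : ℕ, ¬ a ∣ N → μ (A ∩ R.T^[N] ⁻¹' A) = 0 := by
    intro N hN
    apply measure_mono_null (t := {x | ¬ (φ (R.T^[N] x) = (φ x + N) % a)})
    · rintro x ⟨hx1, hx2⟩
      rw [Set.mem_setOf_eq]
      intro heq
      apply hN
      have h0 : φ x = 0 := Set.mem_singleton_iff.1 (Set.mem_preimage.1 hx1)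
      have hT0 : φ (R.T^[N] x) = 0 := Set.mem_singleton_iff.1 (Set.mem_preimage.1 hx2)
      rw [hT0, h0, zero_add] at heq
      exact Nat.dvd_of_mod_eq_zero heq.symm
    · exact ae_iff.1 (hφiter N)
  -- almost-everywhere two-sided inverse for iterates
  have hTgood : ∀ N : ℕ, ∀ᵐ y ∂μ, R.T^[N] (R.Tinv^[N] y) = y := by
    intro N
    induction N with
    | zero => filter_upwards with y; simp
    | succ N ih =>
      filter_upwards [ro17_ae_comp R.mpTinv ih, R.inv_right] with y h1 h2
      have e1 : R.Tinv^[N + 1] y = R.Tinv^[N] (R.Tinv y) := Function.iterate_succ_apply _ _ _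
      have e2 : ∀ z, R.T^[N + 1] z = R.T (R.T^[N] z) := fun z => Function.iterate_succ_apply' _ _ _
      rw [e1, e2, h1]
      exact h2
  -- the measurable cores of the level pieces
  set q : ℝ≥0∞ := μ (R.B n) / 4 with hqdef
  have hq4 : μ (R.B n) = 4 * q := by
    rw [hqdef]
    exact (ENNReal.mul_div_cancel' (by norm_num) (by norm_num)).symm
  have hqk : ∀ k, 1 ≤ k → k ≤ 4 → μ (R.Bp n k) = q := fun k h1 h4 =>
    ro17_Bp_meas_eq R hr n k h1 h4
  set Q : ℕ → ℕ → Set X := fun i k => R.Tinv^[i] ⁻¹' R.Bp n k with hQdef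
  have hQm : ∀ i k, MeasurableSet (Q i k) := fun i k =>
    (R.mpTinv.measurable.iterate i) (R.Bp_meas n k)
  have hQμ : ∀ i k, μ (Q i k) = μ (R.Bp n k) := fun i k =>
    (R.mpTinv.iterate i).measure_preimage (R.Bp_meas n k).nullMeasurableSet
  set σ : ℕ → ℕ := fun k =>
    if k = 1 then 0 else if k = 2 then R.h n else if k = 3 then 2 * R.h n + 2 ^ (n + 1)
    else 3 * R.h n + 2 ^ (n + 1) with hσdef
  have hoff : ∀ k, 1 ≤ k → k ≤ 4 → R.Bp n k = R.T^[σ k] '' R.B (n + 1) := by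
    intro k h1 h4
    interval_cases k
    · simp only [hσdef, if_pos rfl]
      rw [Function.iterate_zero, Set.image_id]
      exact (R.base_succ n).symm
    · simpa [hσdef] using ro17_off2 R hr hs1 n
    · simpa [hσdef] using ro17_off3 R hr hs1 hs2 n
    · simpa [hσdef] using ro17_off4 R hr hs1 hs2 hs3 n
  have h4n := ro17_h_succ4 R hr hs1 hs2 hs3 hs4 n
  have h2pow : (1 : ℕ) ≤ 2 ^ (n + 1) := Nat.one_le_two_pow
  have hσlt : ∀ k, 1 ≤ k → k ≤ 4 → ∀ i, i < R.h n → i + σ k < R.h (n + 1) := by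
    intro k h1 h4 i hi
    interval_cases k <;> simp only [hσdef] <;> norm_num <;> omega
  -- each core sits (a.e.) inside the corresponding level of the next stage
  have hQlev : ∀ i k, 1 ≤ k → k ≤ 4 →
      ∀ᵐ y ∂μ, y ∈ Q i k → y ∈ R.T^[i + σ k] '' R.B (n + 1) := by
    intro i k h1 h4
    filter_upwards [hTgood i] with y hy hyQ
    have hyQ' : R.Tinv^[i] y ∈ R.T^[σ k] '' R.B (n + 1) := by
      rw [← hoff k h1 h4]; exact hyQ
    obtain ⟨z, hz, hz2⟩ := hyQ'
    refine ⟨z, hz, ?_⟩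
    rw [Function.iterate_add_apply, hz2, hy]
  have hQdisj : ∀ i k i' k', i < R.h n → i' < R.h n → 1 ≤ k → k ≤ 4 → 1 ≤ k' → k' ≤ 4 →
      i + σ k ≠ i' + σ k' → MeasureTheory.AEDisjoint μ (Q i k) (Q i' k') := by
    intro i k i' k' hi hi' hk1 hk4 hk1' hk4' hne
    show μ (Q i k ∩ Q i' k') = 0
    rw [measure_eq_zero_iff_ae_notMem]
    filter_upwards [hQlev i k hk1 hk4, hQlev i' k' hk1' hk4'] with y h1 h2
    rintro ⟨hy1, hy2⟩
    have hd : Disjoint (R.T^[i + σ k] '' R.B (n + 1)) (R.T^[i' + σ k'] '' R.B (n + 1)) := by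
      rcases lt_or_gt_of_ne hne with h | h
      · exact R.levels_disjoint (n + 1) _ _ h (hσlt k' hk1' hk4' i' hi')
      · exact (R.levels_disjoint (n + 1) _ _ h (hσlt k hk1 hk4 i hi)).symm
    exact Set.disjoint_left.1 hd (h1 hy1) (h2 hy2)
  -- cores land in U and return into U at the prescribed times
  have hQU : ∀ i, i ∈ J → ∀ k, 1 ≤ k → k ≤ 4 → ∀ᵐ y ∂μ, y ∈ Q i k → y ∈ U := by
    intro i hiJ k h1 h4
    filter_upwards [hTgood i] with y hy hyQ
    refine ro17_mem_biUnion hiJ ⟨R.Tinv^[i] y, ?_, hy⟩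
    exact ro17_Bp_subset R n k (ro17_mem_Icc R hr n k h1 h4) hyQ
  have hQmap : ∀ i, i ∈ J → ∀ k N : ℕ, k + 1 ≤ 4 → R.T^[N] '' R.Bp n k = R.Bp n (k + 1) →
      ∀ᵐ y ∂μ, y ∈ Q i k → R.T^[N] y ∈ U := by
    intro i hiJ k N hk4 hmap
    filter_upwards [hTgood i] with y hy hyQ
    have hcomm : R.T^[N] y = R.T^[i] (R.T^[N] (R.Tinv^[i] y)) := by
      conv_lhs => rw [← hy]
      rw [← Function.iterate_add_apply, ← Function.iterate_add_apply, Nat.add_comm N i]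
    rw [hcomm]
    refine ro17_mem_biUnion hiJ ⟨R.T^[N] (R.Tinv^[i] y), ?_, rfl⟩
    have hmem : R.T^[N] (R.Tinv^[i] y) ∈ R.Bp n (k + 1) := by
      rw [← hmap]
      exact Set.mem_image_of_mem _ hyQ
    exact ro17_Bp_subset R n (k + 1) (ro17_mem_Icc R hr n (k + 1) (by omega) hk4) hmem
  have hcol1 := ro17_colmap1 R hr hs1 n
  have hcol2 := ro17_colmap2 R hr hs2 n
  have hcol3 := ro17_colmap3 R hr hs3 n
  -- upper bound for the measure of U
  have hUcard : μ U ≤ (J.card : ℝ≥0∞) * (4 * q) := by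
    calc μ U ≤ ∑ i ∈ J, μ (R.T^[i] '' R.B n) := measure_biUnion_finset_le _ _
      _ ≤ ∑ _i ∈ J, μ (R.B n) := Finset.sum_le_sum fun i hi =>
          ro17_level_le R hr hs1 hs2 hs3 hs4 n (hJlt i hi)
      _ = J.card • μ (R.B n) := Finset.sum_const _
      _ = (J.card : ℝ≥0∞) * (4 * q) := by rw [nsmul_eq_mul, hq4]
  have hAdiff : μ (A \ U) ≤ ε := by
    refine (measure_mono fun x hx => ?_).trans happx.le
    exact Set.mem_symmDiff.2 (Or.inl ⟨hx.1, hx.2⟩)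
  have hUdiff : μ (U \ A) ≤ ε := by
    refine (measure_mono fun x hx => ?_).trans happx.le
    exact Set.mem_symmDiff.2 (Or.inr ⟨hx.1, hx.2⟩)
  have hηU : η ≤ μ U + ε := by
    calc η = μ A := hμA.symm
      _ ≤ μ (A ∩ U) + μ (A \ U) := measure_le_inter_add_diff μ _ _
      _ ≤ μ U + ε := add_le_add (measure_mono Set.inter_subset_right) hAdiff
  -- upper bound for intersections along non-multiples of a
  have hupper : ∀ N : ℕ, ¬ a ∣ N → μ (U ∩ R.T^[N] ⁻¹' U) ≤ 2 * ε := by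
    intro N hN
    have hsub : U ∩ R.T^[N] ⁻¹' U ⊆
        (A ∩ R.T^[N] ⁻¹' A) ∪ ((U \ A) ∪ R.T^[N] ⁻¹' (U \ A)) := by
      rintro x ⟨hxU, hxTU⟩
      by_cases hxA : x ∈ A
      · by_cases hTA : R.T^[N] x ∈ A
        · exact Or.inl ⟨hxA, hTA⟩
        · exact Or.inr (Or.inr ⟨hxTU, hTA⟩)
      · exact Or.inr (Or.inl ⟨hxU, hxA⟩)
    calc μ (U ∩ R.T^[N] ⁻¹' U)
        ≤ μ (A ∩ R.T^[N] ⁻¹' A) + (μ (U \ A) + μ (R.T^[N] ⁻¹' (U \ A))) :=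
          (measure_mono hsub).trans ((measure_union_le _ _).trans
            (add_le_add_right (measure_union_le _ _) _))
      _ ≤ 0 + (ε + ε) := by
          refine add_le_add (hzero N hN).le (add_le_add hUdiff ?_)
          exact (ro17_preimage_le (R.mpT.iterate N) _).trans hUdiff
      _ = 2 * ε := by rw [zero_add, two_mul]
  -- first return time: h n
  have hdvd1 : a ∣ R.h n := by
    by_contra hnd
    have hW13 : μ (⋃ i ∈ J, (Q i 1 ∪ Q i 3)) = (J.card : ℝ≥0∞) * (q + q) := by
      rw [measure_biUnion_finset₀]
      · rw [Finset.sum_congr rfl fun i hi => ?_, Finset.sum_const, nsmul_eq_mul]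
        rw [measure_union₀ (hQm i 3).nullMeasurableSet
          (hQdisj i 1 i 3 (hJlt i hi) (hJlt i hi) le_rfl (by norm_num) (by norm_num)
            (by norm_num) (by simp only [hσdef]; norm_num <;> omega)),
          hQμ i 1, hQμ i 3, hqk 1 le_rfl (by norm_num), hqk 3 (by norm_num) (by norm_num)]
      · intro i hi i' hi' hii'
        have hi1 := hJlt i hi
        have hi2 := hJlt i' hi'
        refine MeasureTheory.AEDisjoint.union_left ?_ ?_ <;>
          refine MeasureTheory.AEDisjoint.union_right ?_ ?_
        · exact hQdisj i 1 i' 1 hi1 hi2 le_rfl (by norm_num) le_rfl (by norm_num)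
            (by simp only [hσdef]; norm_num <;> omega)
        · exact hQdisj i 1 i' 3 hi1 hi2 le_rfl (by norm_num) (by norm_num) (by norm_num)
            (by simp only [hσdef]; norm_num <;> omega)
        · exact hQdisj i 3 i' 1 hi1 hi2 (by norm_num) (by norm_num) le_rfl (by norm_num)
            (by simp only [hσdef]; norm_num <;> omega)
        · exact hQdisj i 3 i' 3 hi1 hi2 (by norm_num) (by norm_num) (by norm_num)
            (by norm_num) (by simp only [hσdef]; norm_num <;> omega)
      · intro i hi
        exact ((hQm i 1).union (hQm i 3)).nullMeasurableSet
    have hbound1 : (J.card : ℝ≥0∞) * (q + q) ≤ μ (U ∩ R.T^[R.h n] ⁻¹' U) := by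
      rw [← hW13]
      apply ro17_measure_biUnion_le_of_ae
      intro i hi
      filter_upwards [hQU i hi 1 le_rfl (by norm_num), hQU i hi 3 (by norm_num) (by norm_num),
        hQmap i hi 1 (R.h n) (by norm_num) hcol1,
        hQmap i hi 3 (R.h n) (by norm_num) hcol3] with y hU1 hU3 hM1 hM3 hy
      rcases hy with hy | hy
      · exact ⟨hU1 hy, hM1 hy⟩
      · exact ⟨hU3 hy, hM3 hy⟩
    have h1 : (J.card : ℝ≥0∞) * (q + q) ≤ 2 * ε := hbound1.trans (hupper _ hnd)
    have h2 : (J.card : ℝ≥0∞) * (4 * q) ≤ 4 * ε := by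
      have he : (J.card : ℝ≥0∞) * (4 * q) = 2 * ((J.card : ℝ≥0∞) * (q + q)) := by ring
      rw [he]
      calc 2 * ((J.card : ℝ≥0∞) * (q + q)) ≤ 2 * (2 * ε) := mul_le_mul_right h1 2
        _ = 4 * ε := by ring
    have h3 : η ≤ 5 * ε := by
      calc η ≤ μ U + ε := hηU
        _ ≤ (J.card : ℝ≥0∞) * (4 * q) + ε := add_le_add_left hUcard ε
        _ ≤ 4 * ε + ε := add_le_add_left h2 ε
        _ = 5 * ε := by ring
    rw [← hη10] at h3
    have h5 : (5 : ℝ≥0∞) * ε ≤ 9 * ε := by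
      apply mul_le_mul_left
      rw [show (5 : ℝ≥0∞) = ((5 : ℕ) : ℝ≥0∞) by norm_num,
        show (9 : ℝ≥0∞) = ((9 : ℕ) : ℝ≥0∞) by norm_num, Nat.cast_le]
      norm_num
    have h6 : 10 * ε ≤ 9 * ε := h3.trans h5
    rw [mul_comm (10 : ℝ≥0∞) ε, mul_comm (9 : ℝ≥0∞) ε] at h6
    exact h910 ((ENNReal.mul_le_mul_iff_right (pos_iff_ne_zero.1 hε0) hεT).1 h6)
  -- second return time: h n + 2^(n+1)
  have hdvd2 : a ∣ (R.h n + 2 ^ (n + 1)) := by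
    by_contra hnd
    have hW2 : μ (⋃ i ∈ J, Q i 2) = (J.card : ℝ≥0∞) * q := by
      rw [measure_biUnion_finset₀]
      · rw [Finset.sum_congr rfl fun i hi =>
          (hQμ i 2).trans (hqk 2 (by norm_num) (by norm_num)), Finset.sum_const, nsmul_eq_mul]
      · intro i hi i' hi' hii'
        exact hQdisj i 2 i' 2 (hJlt i hi) (hJlt i' hi') (by norm_num) (by norm_num)
          (by norm_num) (by norm_num) (by simp only [hσdef]; norm_num <;> omega)
      · intro i hi
        exact (hQm i 2).nullMeasurableSet
    have hbound2 : (J.card : ℝ≥0∞) * q ≤ μ (U ∩ R.T^[R.h n + 2 ^ (n + 1)] ⁻¹' U) := by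
      rw [← hW2]
      apply ro17_measure_biUnion_le_of_ae
      intro i hi
      filter_upwards [hQU i hi 2 (by norm_num) (by norm_num),
        hQmap i hi 2 (R.h n + 2 ^ (n + 1)) (by norm_num) hcol2] with y hU2 hM2 hy
      exact ⟨hU2 hy, hM2 hy⟩
    have h1 : (J.card : ℝ≥0∞) * q ≤ 2 * ε := hbound2.trans (hupper _ hnd)
    have h2 : (J.card : ℝ≥0∞) * (4 * q) ≤ 8 * ε := by
      have he : (J.card : ℝ≥0∞) * (4 * q) = 4 * ((J.card : ℝ≥0∞) * q) := by ring
      rw [he]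
      calc 4 * ((J.card : ℝ≥0∞) * q) ≤ 4 * (2 * ε) := mul_le_mul_right h1 4
        _ = 8 * ε := by ring
    have h3 : η ≤ 9 * ε := by
      calc η ≤ μ U + ε := hηU
        _ ≤ (J.card : ℝ≥0∞) * (4 * q) + ε := add_le_add_left hUcard ε
        _ ≤ 8 * ε + ε := add_le_add_left h2 ε
        _ = 9 * ε := by ring
    rw [← hη10] at h3
    rw [mul_comm (10 : ℝ≥0∞) ε, mul_comm (9 : ℝ≥0∞) ε] at h3
    exact h910 ((ENNReal.mul_le_mul_iff_right (pos_iff_ne_zero.1 hε0) hεT).1 h3)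
  -- arithmetic conclusion
  have hdvd3 : a ∣ 2 ^ (n + 1) := by
    have h := Nat.dvd_sub hdvd2 hdvd1
    rwa [Nat.add_sub_cancel_left] at h
  have ha2 : Nat.Coprime a 2 := Nat.coprime_two_right.2 haOdd
  have ha1 : a = 1 := (ha2.pow_right (n + 1)).eq_one_of_dvd hdvd3
  omega
end
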